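/- arXiv:1511.04837 — 4 statements merged into one kernel-verified Lean document; each statement's English description precedes it below -/
import Mathlib

section
/- Let p be a prime, γ ≥ 1 an integer, C ⊆ {0, 1, …, p^γ − 1} a nonempty set of integers, and Ω = ⋃_{c∈C} (c + p^γ ℤ_p). Then Ω tiles ℚ_p by translation if and only if for every integer n with 1 ≤ n ≤ γ the image of C in ℤ/p^nℤ has cardinality equal to a power of p, i.e. #(C mod p^n) = p^{k_n} for some k_n ∈ ℕ (this cardinality condition is the paper's p-homogeneity of Ω). -/
open MeasureTheory

noncomputable section

namespace PHomAux

open Polynomial Finset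

variable {p : ℕ} [hp : Fact p.Prime]

instance ppow_neZero (m : ℕ) : NeZero (p ^ m) :=
  ⟨pow_ne_zero m hp.out.ne_zero⟩

/-- convolution of ℕ-valued functions on `ZMod N` -/
def conv {N : ℕ} [NeZero N] (f g : ZMod N → ℕ) (z : ZMod N) : ℕ :=
  ∑ y : ZMod N, f y * g (z - y)

/-- pushforward along the reduction map -/
def push {M N : ℕ} [NeZero M] [NeZero N] (h : N ∣ M) (f : ZMod M → ℕ) (r : ZMod N) : ℕ :=
  ∑ x : ZMod M, if ZMod.castHom h (ZMod N) x = r then f x else 0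

lemma castHom_castHom {M N K : ℕ} (h1 : N ∣ M) (h2 : K ∣ N) (x : ZMod M) [NeZero M] :
    ZMod.castHom h2 (ZMod K) (ZMod.castHom h1 (ZMod N) x) =
      ZMod.castHom (h2.trans h1) (ZMod K) x := by
  conv_lhs => rw [show x = ((x.val : ℕ) : ZMod M) from (ZMod.natCast_rightInverse x).symm]
  conv_rhs => rw [show x = ((x.val : ℕ) : ZMod M) from (ZMod.natCast_rightInverse x).symm]
  simp only [map_natCast]

lemma push_self {N : ℕ} [NeZero N] (h : N ∣ N) (f : ZMod N → ℕ) (r : ZMod N) :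
    push h f r = f r := by
  unfold push
  have h1 : ∀ x : ZMod N, ZMod.castHom h (ZMod N) x = x := by
    intro x; rw [ZMod.castHom_apply, ZMod.cast_id]
  simp only [h1]
  simp

lemma push_push {M N K : ℕ} [NeZero M] [NeZero N] [NeZero K]
    (h1 : N ∣ M) (h2 : K ∣ N) (f : ZMod M → ℕ) (r : ZMod K) :
    push h2 (push h1 f) r = push (h2.trans h1) f r := by
  unfold push
  have e1 : ∀ u : ZMod N,
      (if ZMod.castHom h2 (ZMod K) u = r then
        (∑ x : ZMod M, if ZMod.castHom h1 (ZMod N) x = u then f x else 0) else 0)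
      = ∑ x : ZMod M,
          if ZMod.castHom h1 (ZMod N) x = u ∧ ZMod.castHom h2 (ZMod K) u = r then f x
          else 0 := by
    intro u
    split
    · apply Finset.sum_congr rfl; intro x _; simp_all; exact if_congr Iff.rfl rfl rfl
    · symm; apply Finset.sum_eq_zero; intro x _; simp_all
  simp only [e1]
  rw [Finset.sum_comm]
  apply Finset.sum_congr rfl
  intro x _
  rw [Finset.sum_eq_single (ZMod.castHom h1 (ZMod N) x)]
  · rw [castHom_castHom h1 h2 x]; simp; exact if_congr Iff.rfl rfl rfl
  · intro u _ hu
    exact if_neg (by rintro ⟨hx, _⟩; exact hu hx.symm)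
  · simp

lemma push_mul {M N : ℕ} [NeZero M] [NeZero N] (h : N ∣ M) (c : ℕ) (f : ZMod M → ℕ)
    (r : ZMod N) : push h (fun x => c * f x) r = c * push h f r := by
  unfold push
  rw [Finset.mul_sum]
  apply Finset.sum_congr rfl
  intro x _
  split <;> simp

/-- sizes of fibers of the reduction map -/
lemma card_fiber {M N : ℕ} [NeZero M] [NeZero N] (h : N ∣ M) (r : ZMod N) :
    (Finset.univ.filter (fun x : ZMod M => ZMod.castHom h (ZMod N) x = r)).card = M / N := by
  have key : ∀ s : ZMod N,
      (Finset.univ.filter (fun x : ZMod M => ZMod.castHom h (ZMod N) x = s)).card =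
      (Finset.univ.filter (fun x : ZMod M => ZMod.castHom h (ZMod N) x = 0)).card := by
    intro s
    apply Finset.card_bij (fun x _ => x - ((s.val : ℕ) : ZMod M))
    · intro x hx
      simp only [Finset.mem_filter, Finset.mem_univ, true_and] at hx ⊢
      rw [map_sub, hx, map_natCast, ZMod.natCast_rightInverse s, sub_self]
    · intro x hx y hy hxy
      exact by simpa using sub_left_injective hxy
    · intro y hy
      refine ⟨y + ((s.val : ℕ) : ZMod M), ?_, by ring⟩
      simp only [Finset.mem_filter, Finset.mem_univ, true_and] at hy ⊢
      rw [map_add, hy, map_natCast, ZMod.natCast_rightInverse s, zero_add]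
  have total : (Finset.univ : Finset (ZMod M)).card =
      ∑ s : ZMod N, (Finset.univ.filter (fun x : ZMod M => ZMod.castHom h (ZMod N) x = s)).card :=
    Finset.card_eq_sum_card_fiberwise (fun x _ => Finset.mem_univ _)
  simp only [key] at total
  rw [Finset.sum_const, Finset.card_univ, ZMod.card] at total
  rw [Finset.card_univ, ZMod.card] at total
  rw [key]
  have hN : 0 < N := Nat.pos_of_ne_zero (NeZero.ne N)
  simp only [smul_eq_mul] at total
  exact (Nat.div_eq_of_eq_mul_right hN total).symm
  

section ConvBasics

variable {N : ℕ} [NeZero N]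

lemma exists_pos_of_conv_one {f g : ZMod N → ℕ} (h : ∀ z, conv f g z = 1) :
    ∃ y, 1 ≤ g y := by
  by_contra hcon
  push_neg at hcon
  have : conv f g 0 = 0 := by
    apply Finset.sum_eq_zero
    intro y _
    have := hcon (0 - y)
    exact Nat.mul_eq_zero.mpr (Or.inr (by omega))
  rw [h 0] at this
  omega

lemma le_one_of_conv_one {f g : ZMod N → ℕ} (h : ∀ z, conv f g z = 1) (x : ZMod N) :
    f x ≤ 1 := by
  obtain ⟨y, hy⟩ := exists_pos_of_conv_one h
  have hle : f x * g y ≤ conv f g (x + y) := by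
    have : f x * g y = f x * g ((x + y) - x) := by rw [add_sub_cancel_left]
    rw [this]
    exact Finset.single_le_sum (f := fun u => f u * g ((x + y) - u))
      (fun i _ => Nat.zero_le _) (Finset.mem_univ x)
  rw [h (x + y)] at hle
  nlinarith

lemma sum_conv (f g : ZMod N → ℕ) :
    ∑ z : ZMod N, conv f g z = (∑ x : ZMod N, f x) * (∑ y : ZMod N, g y) := by
  unfold conv
  rw [Finset.sum_comm, Finset.sum_mul]
  apply Finset.sum_congr rfl
  intro y _
  rw [← Finset.mul_sum]
  congr 1
  exact Fintype.sum_equiv (Equiv.subRight y) _ g (fun z => rfl)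

end ConvBasics

section Push2

variable {M N : ℕ} [NeZero M] [NeZero N]

lemma push_le_of_le_one (h : N ∣ M) {f : ZMod M → ℕ} (hf : ∀ x, f x ≤ 1) (r : ZMod N) :
    push h f r ≤ M / N := by
  calc push h f r ≤ ∑ x : ZMod M, (if ZMod.castHom h (ZMod N) x = r then 1 else 0) := by
        apply Finset.sum_le_sum
        intro x _
        split
        · exact hf x
        · exact le_refl 0
    _ = (Finset.univ.filter (fun x : ZMod M => ZMod.castHom h (ZMod N) x = r)).card := by
        rw [Finset.card_filter]
    _ = M / N := card_fiber h r

lemma conv_push (h : N ∣ M) (f g : ZMod M → ℕ) (w : ZMod N) :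
    conv (push h f) (push h g) w = push h (conv f g) w := by
  have key : ∀ (S : ZMod N → ℕ), S = S := fun _ => rfl
  unfold conv push
  calc ∑ u : ZMod N, (∑ x : ZMod M, if ZMod.castHom h (ZMod N) x = u then f x else 0) *
          (∑ y : ZMod M, if ZMod.castHom h (ZMod N) y = w - u then g y else 0)
      = ∑ u : ZMod N, ∑ x : ZMod M, ∑ y : ZMod M,
          if ZMod.castHom h (ZMod N) x = u then
            (if ZMod.castHom h (ZMod N) y = w - u then f x * g y else 0) else 0 := by
        apply Finset.sum_congr rfl; intro u _
        rw [Finset.sum_mul_sum]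
        apply Finset.sum_congr rfl; intro x _
        apply Finset.sum_congr rfl; intro y _
        split
        · split <;> simp
        · simp
    _ = ∑ x : ZMod M, ∑ y : ZMod M,
          if ZMod.castHom h (ZMod N) x + ZMod.castHom h (ZMod N) y = w then f x * g y
          else 0 := by
        rw [Finset.sum_comm]
        apply Finset.sum_congr rfl; intro x _
        rw [Finset.sum_comm]
        apply Finset.sum_congr rfl; intro y _
        rw [Finset.sum_eq_single (ZMod.castHom h (ZMod N) x)]
        · rw [if_pos rfl]
          apply if_congr _ rfl rfl
          rw [eq_sub_iff_add_eq, add_comm]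
        · intro u _ hu; exact if_neg (fun hx => hu hx.symm)
        · simp
    _ = ∑ x : ZMod M, ∑ v : ZMod M,
          if ZMod.castHom h (ZMod N) v = w then f x * g (v - x) else 0 := by
        apply Finset.sum_congr rfl; intro x _
        refine Fintype.sum_equiv (Equiv.addLeft x) _ _ ?_
        intro y
        simp only [Equiv.coe_addLeft, map_add, add_sub_cancel_left]
    _ = ∑ v : ZMod M, if ZMod.castHom h (ZMod N) v = w then
          (∑ x : ZMod M, f x * g (v - x)) else 0 := by
        rw [Finset.sum_comm]
        apply Finset.sum_congr rfl; intro v _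
        split
        · rfl
        · exact Finset.sum_const_zero

end Push2

section Poly

variable (p)

/-- the mod-`p` generating polynomial of `f` -/
noncomputable def polyOf {N : ℕ} [NeZero N] (f : ZMod N → ℕ) : Polynomial (ZMod p) :=
  ∑ x : ZMod N, Polynomial.C ((f x : ZMod p)) * Polynomial.X ^ x.val

variable {p}

lemma coeff_polyOf {N : ℕ} [NeZero N] (f : ZMod N → ℕ) (x : ZMod N) :
    (polyOf p f).coeff x.val = (f x : ZMod p) := by
  unfold polyOf
  rw [Polynomial.finset_sum_coeff]
  rw [Finset.sum_eq_single x]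
  · simp
  · intro y _ hy
    rw [Polynomial.coeff_C_mul, Polynomial.coeff_X_pow, if_neg, mul_zero]
    intro hvv
    exact hy (ZMod.val_injective N hvv.symm)
  · simp

lemma polyOf_eq_zero_iff {N : ℕ} [NeZero N] (f : ZMod N → ℕ) :
    polyOf p f = 0 ↔ ∀ x, (f x : ZMod p) = 0 := by
  constructor
  · intro h x
    rw [← coeff_polyOf f x, h, Polynomial.coeff_zero]
  · intro h
    unfold polyOf
    apply Finset.sum_eq_zero
    intro x _
    rw [h x, map_zero, zero_mul]

lemma natDegree_polyOf_lt {N : ℕ} [NeZero N] (f : ZMod N → ℕ) :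
    (polyOf p f).natDegree < N := by
  have hN : 0 < N := Nat.pos_of_ne_zero (NeZero.ne N)
  have : (polyOf p f).natDegree ≤ N - 1 := by
    apply Polynomial.natDegree_sum_le_of_forall_le
    intro x _
    calc (Polynomial.C ((f x : ZMod p)) * Polynomial.X ^ x.val).natDegree
        ≤ (Polynomial.X ^ x.val : Polynomial (ZMod p)).natDegree :=
          Polynomial.natDegree_C_mul_le _ _
      _ = x.val := Polynomial.natDegree_X_pow _
      _ ≤ N - 1 := by have := ZMod.val_lt x; omega
  omega

lemma val_castHom {M N : ℕ} [NeZero M] [NeZero N] (h : N ∣ M) (x : ZMod M) :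
    (ZMod.castHom h (ZMod N) x).val = x.val % N := by
  conv_lhs => rw [show x = ((x.val : ℕ) : ZMod M) from (ZMod.natCast_rightInverse x).symm]
  rw [map_natCast, ZMod.val_natCast]

lemma X_pow_sub_dvd (N a : ℕ) :
    ((Polynomial.X : Polynomial (ZMod p))^N - 1) ∣ (Polynomial.X^a - Polynomial.X^(a % N)) := by
  have hd : ((Polynomial.X : Polynomial (ZMod p))^N - 1) ∣
      (((Polynomial.X : Polynomial (ZMod p))^N)^(a / N) - 1) := by
    have := sub_dvd_pow_sub_pow ((Polynomial.X : Polynomial (ZMod p))^N) 1 (a / N)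
    simpa using this
  obtain ⟨Q, hQ⟩ := hd
  refine ⟨Q * Polynomial.X ^ (a % N), ?_⟩
  have ha : (Polynomial.X : Polynomial (ZMod p))^a =
      ((Polynomial.X : Polynomial (ZMod p))^N)^(a/N) * Polynomial.X^(a % N) := by
    rw [← pow_mul, ← pow_add]
    congr 1
    exact (Nat.div_add_mod a N).symm
  rw [ha, show ((Polynomial.X : Polynomial (ZMod p))^N)^(a/N) * Polynomial.X^(a % N) -
    Polynomial.X^(a % N) = (((Polynomial.X : Polynomial (ZMod p))^N)^(a/N) - 1) *
    Polynomial.X^(a % N) by ring, hQ]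
  ring

lemma X_pow_p_pow_sub_one (m : ℕ) :
    (Polynomial.X : Polynomial (ZMod p))^(p^m) - 1 = (Polynomial.X - 1)^(p^m) := by
  rw [sub_pow_char_pow (Polynomial.X : Polynomial (ZMod p)) 1 m, one_pow]

lemma geom_eq (m : ℕ) :
    ∑ i ∈ Finset.range (p^m), (Polynomial.X : Polynomial (ZMod p))^i =
      (Polynomial.X - 1)^(p^m - 1) := by
  have hX : (Polynomial.X : Polynomial (ZMod p)) - 1 ≠ 0 := by
    rw [← Polynomial.C_1]
    exact Polynomial.X_sub_C_ne_zero 1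
  apply mul_right_cancel₀ hX
  rw [geom_sum_mul, X_pow_p_pow_sub_one, ← pow_succ]
  congr 1
  have : 0 < p ^ m := pow_pos hp.out.pos m
  omega

lemma sum_val_range {β : Type*} [AddCommMonoid β] {N : ℕ} [NeZero N] (F : ℕ → β) :
    ∑ x : ZMod N, F x.val = ∑ i ∈ Finset.range N, F i := by
  apply Finset.sum_bij (fun (x : ZMod N) _ => x.val)
  · intro x _
    exact Finset.mem_range.mpr (ZMod.val_lt x)
  · intro x _ y _ hxy
    exact ZMod.val_injective N hxy
  · intro i hi
    exact ⟨(i : ZMod N), Finset.mem_univ _,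
      by rw [ZMod.val_natCast, Nat.mod_eq_of_lt (Finset.mem_range.mp hi)]⟩
  · intro x _
    rfl

lemma polyOf_const_one {N : ℕ} [NeZero N] :
    polyOf p (fun _ : ZMod N => 1) = ∑ i ∈ Finset.range N, (Polynomial.X : Polynomial (ZMod p))^i := by
  unfold polyOf
  simp only [Nat.cast_one, map_one, one_mul]
  exact sum_val_range _

lemma polyOf_mul {N : ℕ} [NeZero N] (f g : ZMod N → ℕ) :
    ∃ H, polyOf p f * polyOf p g =
      polyOf p (conv f g) + ((Polynomial.X : Polynomial (ZMod p))^N - 1) * H := by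
  have expand : polyOf p f * polyOf p g = ∑ x : ZMod N, ∑ y : ZMod N,
      Polynomial.C ((f x * g y : ℕ) : ZMod p) * Polynomial.X ^ (x.val + y.val) := by
    unfold polyOf
    rw [Finset.sum_mul_sum]
    apply Finset.sum_congr rfl; intro x _
    apply Finset.sum_congr rfl; intro y _
    rw [Nat.cast_mul, map_mul, pow_add]
    ring
  have reduce : polyOf p (conv f g) = ∑ x : ZMod N, ∑ y : ZMod N,
      Polynomial.C ((f x * g y : ℕ) : ZMod p) * Polynomial.X ^ ((x + y).val) := by
    unfold polyOf conv
    calc ∑ z : ZMod N, Polynomial.C ((∑ y : ZMod N, f y * g (z - y) : ℕ) : ZMod p) *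
            Polynomial.X ^ z.val
        = ∑ z : ZMod N, ∑ y : ZMod N,
            Polynomial.C ((f y * g (z - y) : ℕ) : ZMod p) * Polynomial.X ^ z.val := by
          apply Finset.sum_congr rfl; intro z _
          rw [Nat.cast_sum, map_sum, Finset.sum_mul]
      _ = ∑ x : ZMod N, ∑ z : ZMod N,
            Polynomial.C ((f x * g (z - x) : ℕ) : ZMod p) * Polynomial.X ^ z.val :=
          Finset.sum_comm
      _ = ∑ x : ZMod N, ∑ y : ZMod N,
            Polynomial.C ((f x * g y : ℕ) : ZMod p) * Polynomial.X ^ ((x + y).val) := by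
          apply Finset.sum_congr rfl; intro x _
          refine (Fintype.sum_equiv (Equiv.addLeft x) _ _ ?_).symm
          intro y
          simp only [Equiv.coe_addLeft, add_sub_cancel_left]
  suffices hdvd : ((Polynomial.X : Polynomial (ZMod p))^N - 1) ∣
      (polyOf p f * polyOf p g - polyOf p (conv f g)) by
    obtain ⟨H, hH⟩ := hdvd
    exact ⟨H, by rw [← hH]; ring⟩
  rw [expand, reduce, ← Finset.sum_sub_distrib]
  apply Finset.dvd_sum; intro x _
  rw [← Finset.sum_sub_distrib]
  apply Finset.dvd_sum; intro y _
  rw [show Polynomial.C ((f x * g y : ℕ) : ZMod p) * Polynomial.X ^ (x.val + y.val) -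
    Polynomial.C ((f x * g y : ℕ) : ZMod p) * Polynomial.X ^ ((x+y).val) =
    Polynomial.C ((f x * g y : ℕ) : ZMod p) *
      (Polynomial.X ^ (x.val + y.val) - Polynomial.X ^ ((x+y).val)) by ring]
  apply Dvd.dvd.mul_left
  rw [ZMod.val_add]
  exact X_pow_sub_dvd N (x.val + y.val)
lemma polyOf_push {M N : ℕ} [NeZero M] [NeZero N] (h : N ∣ M) (f : ZMod M → ℕ) :
    ∃ Q, polyOf p f = polyOf p (push h f) +
      ((Polynomial.X : Polynomial (ZMod p))^N - 1) * Q := by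
  have hpush : polyOf p (push h f) = ∑ x : ZMod M,
      Polynomial.C ((f x : ZMod p)) * Polynomial.X ^ ((ZMod.castHom h (ZMod N) x).val) := by
    unfold polyOf push
    calc ∑ r : ZMod N,
          Polynomial.C ((∑ x : ZMod M, if ZMod.castHom h (ZMod N) x = r then f x else 0 : ℕ)
            : ZMod p) * Polynomial.X ^ r.val
        = ∑ r : ZMod N, ∑ x : ZMod M,
            (if ZMod.castHom h (ZMod N) x = r then
              Polynomial.C ((f x : ZMod p)) * Polynomial.X ^ r.val else 0) := by
          apply Finset.sum_congr rfl; intro r _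
          rw [Nat.cast_sum, map_sum, Finset.sum_mul]
          apply Finset.sum_congr rfl; intro x _
          split <;> simp
      _ = ∑ x : ZMod M, ∑ r : ZMod N,
            (if ZMod.castHom h (ZMod N) x = r then
              Polynomial.C ((f x : ZMod p)) * Polynomial.X ^ r.val else 0) :=
          Finset.sum_comm
      _ = ∑ x : ZMod M,
            Polynomial.C ((f x : ZMod p)) * Polynomial.X ^ ((ZMod.castHom h (ZMod N) x).val) := by
          apply Finset.sum_congr rfl; intro x _
          rw [Finset.sum_eq_single (ZMod.castHom h (ZMod N) x)]
          · rw [if_pos rfl]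
          · intro r _ hr; exact if_neg (fun hx => hr hx.symm)
          · simp
  suffices hdvd : ((Polynomial.X : Polynomial (ZMod p))^N - 1) ∣
      (polyOf p f - polyOf p (push h f)) by
    obtain ⟨Q, hQ⟩ := hdvd
    exact ⟨Q, by rw [← hQ]; ring⟩
  rw [hpush]
  unfold polyOf
  rw [← Finset.sum_sub_distrib]
  apply Finset.dvd_sum; intro x _
  rw [show Polynomial.C ((f x : ZMod p)) * Polynomial.X ^ x.val -
    Polynomial.C ((f x : ZMod p)) * Polynomial.X ^ ((ZMod.castHom h (ZMod N) x).val) =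
    Polynomial.C ((f x : ZMod p)) *
      (Polynomial.X ^ x.val - Polynomial.X ^ ((ZMod.castHom h (ZMod N) x).val)) by ring]
  apply Dvd.dvd.mul_left
  rw [val_castHom]
  exact X_pow_sub_dvd N x.val

end Poly

section Step

lemma conv_comm {N : ℕ} [NeZero N] (f g : ZMod N → ℕ) (z : ZMod N) :
    conv f g z = conv g f z := by
  unfold conv
  refine Fintype.sum_equiv (Equiv.subLeft z) _ _ ?_
  intro y
  simp only [Equiv.subLeft_apply, sub_sub_cancel]
  ring

lemma push_zero_or {n : ℕ} (f g : ZMod (p^(n+1)) → ℕ) (hconv : ∀ z, conv f g z = 1) :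
    (∀ r : ZMod (p^n), ((push (pow_dvd_pow p n.le_succ) f r : ℕ) : ZMod p) = 0) ∨
    (∀ r : ZMod (p^n), ((push (pow_dvd_pow p n.le_succ) g r : ℕ) : ZMod p) = 0) := by
  set h : p^n ∣ p^(n+1) := pow_dvd_pow p n.le_succ with hh
  by_contra hcon
  push_neg at hcon
  obtain ⟨h1, h2⟩ := hcon
  obtain ⟨r1, hr1⟩ := h1
  obtain ⟨r2, hr2⟩ := h2
  have hΦ : polyOf p (push h f) ≠ 0 := by
    rw [Ne, polyOf_eq_zero_iff]; push_neg; exact ⟨r1, hr1⟩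
  have hΨ : polyOf p (push h g) ≠ 0 := by
    rw [Ne, polyOf_eq_zero_iff]; push_neg; exact ⟨r2, hr2⟩
  obtain ⟨H, hH⟩ := polyOf_mul (p := p) f g
  have hgeom : polyOf p (conv f g) =
      ((Polynomial.X : Polynomial (ZMod p)) - 1)^(p^(n+1) - 1) := by
    have e : conv f g = fun _ => 1 := funext hconv
    rw [e, polyOf_const_one, geom_eq]
  rw [hgeom, X_pow_p_pow_sub_one] at hH
  have hfact : polyOf p f * polyOf p g =
      ((Polynomial.X : Polynomial (ZMod p)) - 1)^(p^(n+1) - 1) *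
        (1 + ((Polynomial.X : Polynomial (ZMod p)) - 1) * H) := by
    have hpos : 1 ≤ p^(n+1) := Nat.one_le_iff_ne_zero.mpr (NeZero.ne _)
    have hsplit : ((Polynomial.X : Polynomial (ZMod p)) - 1)^(p^(n+1)) =
        ((Polynomial.X : Polynomial (ZMod p)) - 1)^(p^(n+1) - 1) *
          ((Polynomial.X : Polynomial (ZMod p)) - 1) := by
      rw [← pow_succ]
      congr 1
      omega
    rw [hH, hsplit]
    ring
  have hXne : (Polynomial.X : Polynomial (ZMod p)) - 1 ≠ 0 := by
    rw [← Polynomial.C_1]; exact Polynomial.X_sub_C_ne_zero 1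
  have hune : 1 + ((Polynomial.X : Polynomial (ZMod p)) - 1) * H ≠ 0 := by
    intro h0
    have := congrArg (Polynomial.eval 1) h0
    simp at this
  have hFGne : polyOf p f * polyOf p g ≠ 0 := by
    rw [hfact]; exact mul_ne_zero (pow_ne_zero _ hXne) hune
  have hab : Polynomial.rootMultiplicity 1 (polyOf p f) +
      Polynomial.rootMultiplicity 1 (polyOf p g) = p^(n+1) - 1 := by
    rw [← Polynomial.rootMultiplicity_mul hFGne, hfact,
      Polynomial.rootMultiplicity_mul (by rw [← hfact]; exact hFGne)]
    rw [← Polynomial.C_1, Polynomial.rootMultiplicity_X_sub_C_pow,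
      Polynomial.rootMultiplicity_eq_zero, add_zero]
    intro hroot
    simp [Polynomial.IsRoot] at hroot
  have key : ∀ (u : ZMod (p^(n+1)) → ℕ),
      polyOf p (push h u) ≠ 0 → Polynomial.rootMultiplicity 1 (polyOf p u) < p ^ n := by
    intro u hu
    by_contra hge
    push_neg at hge
    have hdvd1 : ((Polynomial.X : Polynomial (ZMod p)) - Polynomial.C 1)^(p^n) ∣ polyOf p u :=
      dvd_trans (pow_dvd_pow _ hge) (Polynomial.pow_rootMultiplicity_dvd _ 1)
    obtain ⟨Q, hQ⟩ := polyOf_push (p := p) h u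
    have hdvd2 : ((Polynomial.X : Polynomial (ZMod p)) - Polynomial.C 1)^(p^n) ∣
        polyOf p (push h u) := by
      have e : polyOf p (push h u) = polyOf p u -
          ((Polynomial.X : Polynomial (ZMod p))^(p^n) - 1) * Q := by rw [hQ]; ring
      rw [e, X_pow_p_pow_sub_one, Polynomial.C_1]
      exact dvd_sub hdvd1 (dvd_mul_right _ Q)
    have hdeg := Polynomial.natDegree_le_of_dvd hdvd2 hu
    rw [Polynomial.natDegree_pow, Polynomial.natDegree_X_sub_C, mul_one] at hdeg
    have := natDegree_polyOf_lt (p := p) (push h u)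
    omega
  have ha := key f hΦ
  have hb := key g hΨ
  have hp2 : 2 ≤ p := hp.out.two_le
  have hpow : 2 * p^n ≤ p^(n+1) := by
    rw [pow_succ']
    exact Nat.mul_le_mul_right _ hp2
  have hpos : 0 < p^n := pow_pos hp.out.pos n
  omega

lemma div_case {N : ℕ} [NeZero N] (φ ψ : ZMod N → ℕ)
    (hconvp : ∀ w, conv φ ψ w = p) (hdvd : ∀ r, p ∣ ψ r) :
    ∀ z, conv φ (fun r => ψ r / p) z = 1 := by
  intro z
  have e : (fun r => p * (ψ r / p)) = ψ := funext fun r => Nat.mul_div_cancel' (hdvd r)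
  have e2 : conv φ (fun r => p * (ψ r / p)) z = p * conv φ (fun r => ψ r / p) z := by
    unfold conv
    rw [Finset.mul_sum]
    apply Finset.sum_congr rfl
    intro y _
    ring
  rw [e] at e2
  rw [hconvp z] at e2
  have hppos : 0 < p := hp.out.pos
  exact Nat.eq_of_mul_eq_mul_left hppos
    (show p * (conv φ (fun r => ψ r / p) z) = p * 1 by rw [mul_one]; exact e2.symm)

lemma dvd_of_cast_zero {a : ℕ} (hc : ((a : ℕ) : ZMod p) = 0) : p ∣ a :=
  (ZMod.natCast_eq_zero_iff a p).mp hc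

lemma step {n : ℕ} (f g : ZMod (p^(n+1)) → ℕ) (hconv : ∀ z, conv f g z = 1) :
    ∃ (f' g' : ZMod (p^n) → ℕ), (∀ z, conv f' g' z = 1) ∧
      ((push (pow_dvd_pow p n.le_succ) f = f') ∨
       (push (pow_dvd_pow p n.le_succ) f = fun r => p * f' r)) := by
  set h : p^n ∣ p^(n+1) := pow_dvd_pow p n.le_succ with hh
  have hfib : p^(n+1) / p^n = p := by
    rw [pow_succ]
    exact Nat.mul_div_cancel_left _ (pow_pos hp.out.pos n)
  have hconvp : ∀ w, conv (push h f) (push h g) w = p := by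
    intro w
    rw [conv_push]
    have e : conv f g = fun _ => 1 := funext hconv
    rw [e]
    unfold push
    rw [← Finset.card_filter, card_fiber h w, hfib]
  rcases push_zero_or f g hconv with hc | hc
  · -- all values of push f divisible by p
    have hdvd : ∀ r, p ∣ push h f r := fun r => dvd_of_cast_zero (hc r)
    refine ⟨fun r => push h f r / p, push h g, ?_, Or.inr ?_⟩
    · intro z
      have := div_case (push h g) (push h f)
        (fun w => by rw [conv_comm]; exact hconvp w) hdvd z
      rw [conv_comm]
      exact this
    · funext r
      exact (Nat.mul_div_cancel' (hdvd r)).symm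
  · have hdvd : ∀ r, p ∣ push h g r := fun r => dvd_of_cast_zero (hc r)
    exact ⟨push h f, fun r => push h g r / p, div_case _ _ hconvp hdvd, Or.inl rfl⟩

end Step

section Main

lemma supp_card_top (m : ℕ) (f g : ZMod (p^m) → ℕ) (hconv : ∀ z, conv f g z = 1)
    (h : p^m ∣ p^m) :
    ∃ k, (Finset.univ.filter (fun r : ZMod (p^m) => push h f r ≠ 0)).card = p^k := by
  have hf1 : ∀ x, f x ≤ 1 := le_one_of_conv_one hconv
  have htot : (∑ x : ZMod (p^m), f x) * (∑ y : ZMod (p^m), g y) = p^m := by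
    rw [← sum_conv f g]
    calc ∑ z : ZMod (p^m), conv f g z = ∑ _z : ZMod (p^m), 1 :=
          Finset.sum_congr rfl (fun z _ => hconv z)
      _ = p^m := by rw [Finset.sum_const, Finset.card_univ, ZMod.card, smul_eq_mul, mul_one]
  have hdvd : (∑ x : ZMod (p^m), f x) ∣ p^m := ⟨∑ y : ZMod (p^m), g y, htot.symm⟩
  obtain ⟨k, _, hk⟩ := (Nat.dvd_prime_pow hp.out).mp hdvd
  refine ⟨k, ?_⟩
  rw [← hk]
  rw [Finset.card_filter]
  apply Finset.sum_congr rfl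
  intro r _
  simp only [push_self]
  have := hf1 r
  split <;> omega

lemma supp_card_push_eq_ppow :
    ∀ (m : ℕ) (f g : ZMod (p^m) → ℕ), (∀ z, conv f g z = 1) →
      ∀ n (hn : n ≤ m), ∃ k,
        (Finset.univ.filter
          (fun r : ZMod (p^n) => push (pow_dvd_pow p hn) f r ≠ 0)).card = p^k := by
  intro m
  induction m with
  | zero =>
    intro f g hconv n hn
    have hn0 : n = 0 := Nat.le_zero.mp hn
    subst hn0
    exact supp_card_top 0 f g hconv _
  | succ m ih =>
    intro f g hconv n hn
    rcases eq_or_lt_of_le hn with heq | hlt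
    · subst heq
      exact supp_card_top _ f g hconv _
    · have hn' : n ≤ m := Nat.lt_succ_iff.mp hlt
      obtain ⟨f', g', hconv', hcase⟩ := step f g hconv
      obtain ⟨k, hk⟩ := ih f' g' hconv' n hn'
      refine ⟨k, ?_⟩
      rcases hcase with hf' | hf'
      · have e : ∀ r : ZMod (p^n),
            push (pow_dvd_pow p hn) f r = push (pow_dvd_pow p hn') f' r := by
          intro r
          rw [← hf']
          exact (push_push (pow_dvd_pow p m.le_succ) (pow_dvd_pow p hn') f r).symm
        have hset : Finset.univ.filter
            (fun r : ZMod (p^n) => push (pow_dvd_pow p hn) f r ≠ 0) =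
            Finset.univ.filter (fun r => push (pow_dvd_pow p hn') f' r ≠ 0) := by
          apply Finset.filter_congr
          intro r _
          rw [e r]
        rw [hset]
        exact hk
      · have e : ∀ r : ZMod (p^n),
            push (pow_dvd_pow p hn) f r = p * push (pow_dvd_pow p hn') f' r := by
          intro r
          rw [← push_mul (pow_dvd_pow p hn') p f' r, ← hf']
          exact (push_push (pow_dvd_pow p m.le_succ) (pow_dvd_pow p hn') f r).symm
        have hset : Finset.univ.filter
            (fun r : ZMod (p^n) => push (pow_dvd_pow p hn) f r ≠ 0) =
            Finset.univ.filter (fun r => push (pow_dvd_pow p hn') f' r ≠ 0) := by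
          apply Finset.filter_congr
          intro r _
          rw [e r]
          simp [hp.out.ne_zero]
        rw [hset]
        exact hk

end Main

section Build

lemma castHom_id_apply {N : ℕ} [NeZero N] (h : N ∣ N) (x : ZMod N) :
    ZMod.castHom h (ZMod N) x = x := by
  rw [ZMod.castHom_apply, ZMod.cast_id]

lemma build : ∀ (γ : ℕ) (A : Finset (ZMod (p^γ))), A.Nonempty →
    (∀ n (hn : n ≤ γ), ∃ k,
      (A.image (ZMod.castHom (pow_dvd_pow p hn) (ZMod (p^n)))).card = p^k) →
    ∃ B : Finset (ZMod (p^γ)), ∀ s : ZMod (p^γ),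
      ∃! cd : ZMod (p^γ) × ZMod (p^γ), cd.1 ∈ A ∧ cd.2 ∈ B ∧ cd.1 + cd.2 = s := by
  intro γ
  induction γ with
  | zero =>
    intro A hAne _
    have hsub : Subsingleton (ZMod (p^0)) := by rw [pow_zero]; infer_instance
    obtain ⟨a, ha⟩ := hAne
    refine ⟨{0}, fun s => ⟨(a, 0), ⟨ha, Finset.mem_singleton_self 0, Subsingleton.elim _ _⟩, ?_⟩⟩
    rintro ⟨x, y⟩ ⟨hx, hy, -⟩
    exact Prod.ext (Subsingleton.elim _ _) (Subsingleton.elim _ _)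
  | succ γ ih =>
    intro A hAne hhom
    set π := ZMod.castHom (pow_dvd_pow p γ.le_succ) (ZMod (p^γ)) with hπ
    set A' := A.image π with hA'
    have hfib : p^(γ+1) / p^γ = p := by
      rw [pow_succ]
      exact Nat.mul_div_cancel_left _ (pow_pos hp.out.pos γ)
    -- cardinalities
    obtain ⟨k, hk⟩ := hhom (γ+1) le_rfl
    have hkA : A.card = p^k := by
      rw [← hk]
      congr 1
      rw [Finset.image_congr (g := id) (fun x _ => castHom_id_apply _ x), Finset.image_id]
    obtain ⟨k', hk'⟩ := hhom γ γ.le_succ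
    have hkA' : A'.card = p^k' := hk'
    -- fiber bounds
    have hfible : ∀ a' : ZMod (p^γ), (A.filter (fun x => π x = a')).card ≤ p := by
      intro a'
      calc (A.filter (fun x => π x = a')).card
          ≤ (Finset.univ.filter (fun x => π x = a')).card :=
            Finset.card_le_card (Finset.filter_subset_filter _ (Finset.subset_univ A))
        _ = p := by rw [card_fiber _ a', hfib]
    have hsum : A.card = ∑ a' ∈ A', (A.filter (fun x => π x = a')).card :=
      Finset.card_eq_sum_card_fiberwise (fun x hx => Finset.mem_image_of_mem π hx)
    have hAle : A.card ≤ A'.card * p := by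
      rw [hsum]
      calc ∑ a' ∈ A', (A.filter (fun x => π x = a')).card ≤ ∑ _a' ∈ A', p :=
            Finset.sum_le_sum (fun a' _ => hfible a')
        _ = A'.card * p := by rw [Finset.sum_const, smul_eq_mul]
    have hA'le : A'.card ≤ A.card := Finset.card_image_le
    have hp1 : 1 < p := hp.out.one_lt
    have hkk : k' ≤ k := by
      have : p ^ k' ≤ p ^ k := by rw [← hkA, ← hkA']; exact hA'le
      exact (Nat.pow_le_pow_iff_right hp1).mp this
    have hkk2 : k ≤ k' + 1 := by
      have : p ^ k ≤ p ^ (k' + 1) := by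
        rw [pow_succ, ← hkA, ← hkA']
        exact hAle
      exact (Nat.pow_le_pow_iff_right hp1).mp this
    -- homogeneity for A'
    have hhom' : ∀ n (hn : n ≤ γ), ∃ kk,
        (A'.image (ZMod.castHom (pow_dvd_pow p hn) (ZMod (p^n)))).card = p^kk := by
      intro n hn
      obtain ⟨kk, hkk⟩ := hhom n (hn.trans γ.le_succ)
      refine ⟨kk, ?_⟩
      rw [← hkk, hA', Finset.image_image]
      refine congrArg Finset.card ?_
      apply Finset.image_congr
      intro x _
      exact castHom_castHom _ _ x
    have hA'ne : A'.Nonempty := hAne.image π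
    obtain ⟨B', hB'⟩ := ih A' hA'ne hhom'
    rcases eq_or_lt_of_le hkk with hcase | hcase
    · -- k' = k : π injective on A ; B := full preimage of B'
      have hinj : Set.InjOn π A := by
        apply Finset.card_image_iff.mp
        rw [hkA', hkA, hcase]
      refine ⟨Finset.univ.filter (fun b => π b ∈ B'), fun s => ?_⟩
      obtain ⟨⟨a', b'⟩, ⟨ha', hb', hsum'⟩, huniq⟩ := hB' (π s)
      dsimp only at ha' hb' hsum'
      obtain ⟨a, ha, rfl⟩ := Finset.mem_image.mp ha'
      refine ⟨(a, s - a), ⟨ha, ?_, by ring⟩, ?_⟩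
      · apply Finset.mem_filter.mpr
        refine ⟨Finset.mem_univ _, ?_⟩
        rw [map_sub, show π s - π a = b' from by rw [← hsum']; ring]
        exact hb'
      · rintro ⟨x, y⟩ ⟨hx, hy, hxy⟩
        dsimp only at hx hy hxy
        have hyB' : π y ∈ B' := (Finset.mem_filter.mp hy).2
        have heq := huniq (π x, π y) ⟨Finset.mem_image_of_mem π hx, hyB', by
          rw [← map_add, hxy]⟩
        have hxa : π x = π a := congrArg Prod.fst heq
        have hxeq : x = a := hinj hx ha hxa
        subst hxeq
        have hyv : y = s - x := by rw [← hxy]; ring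
        rw [hyv]
    · -- k = k' + 1 : A is full preimage of A' ; B := lift of B'
      have hkeq : k = k' + 1 := by omega
      have hcard : A.card = A'.card * p := by rw [hkA, hkA', hkeq, pow_succ]
      have hful : Finset.univ.filter (fun x : ZMod (p^(γ+1)) => π x ∈ A') = A := by
        symm
        apply Finset.eq_of_subset_of_card_le
        · intro x hx
          exact Finset.mem_filter.mpr ⟨Finset.mem_univ _, Finset.mem_image_of_mem π hx⟩
        · have hcard2 : (Finset.univ.filter (fun x : ZMod (p^(γ+1)) => π x ∈ A')).card
              = ∑ a' ∈ A', ((Finset.univ.filter (fun x : ZMod (p^(γ+1)) => π x ∈ A')).filter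
                (fun x => π x = a')).card :=
            Finset.card_eq_sum_card_fiberwise (fun x hx => (Finset.mem_filter.mp hx).2)
          have heach : ∀ a' ∈ A',
              ((Finset.univ.filter (fun x : ZMod (p^(γ+1)) => π x ∈ A')).filter
                (fun x => π x = a')).card = p := by
            intro a' ha'
            rw [Finset.filter_filter]
            calc (Finset.univ.filter (fun x : ZMod (p^(γ+1)) => π x ∈ A' ∧ π x = a')).card
                = (Finset.univ.filter (fun x : ZMod (p^(γ+1)) => π x = a')).card := by
                  congr 1
                  apply Finset.filter_congr
                  intro x _
                  exact ⟨fun h => h.2, fun h => ⟨by rw [h]; exact ha', h⟩⟩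
              _ = p := by rw [card_fiber _ a', hfib]
          rw [hcard2, Finset.sum_congr rfl heach, Finset.sum_const, smul_eq_mul, hcard]
      set σ : ZMod (p^γ) → ZMod (p^(γ+1)) := fun b => ((b.val : ℕ) : ZMod (p^(γ+1))) with hσ
      have hπσ : ∀ b : ZMod (p^γ), π (σ b) = b := by
        intro b
        rw [hσ, map_natCast]
        exact ZMod.natCast_rightInverse b
      refine ⟨B'.image σ, fun s => ?_⟩
      obtain ⟨⟨a', b'⟩, ⟨ha', hb', hsum'⟩, huniq⟩ := hB' (π s)
      dsimp only at ha' hb' hsum'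
      refine ⟨(s - σ b', σ b'), ⟨?_, Finset.mem_image_of_mem σ hb', by ring⟩, ?_⟩
      · rw [← hful]
        apply Finset.mem_filter.mpr
        refine ⟨Finset.mem_univ _, ?_⟩
        rw [map_sub, hπσ]
        rw [show π s - b' = a' from by rw [← hsum']; ring]
        exact ha'
      · rintro ⟨x, y⟩ ⟨hx, hy, hxy⟩
        dsimp only at hx hy hxy
        obtain ⟨b'', hb'', rfl⟩ := Finset.mem_image.mp hy
        have hxa : π x ∈ A' := by rw [← hful] at hx; exact (Finset.mem_filter.mp hx).2
        have := huniq (π x, b'') ⟨hxa, hb'', by rw [← hxy, map_add, hπσ]⟩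
        have hb2 : b'' = b' := congrArg Prod.snd this
        subst hb2
        have hxv : x = s - σ b'' := eq_sub_of_add_eq hxy
        rw [hxv]

end Build

section Padic

lemma eps_pos (γ : ℕ) : (0:ℝ) < (p:ℝ)^(-(γ:ℤ)) :=
  zpow_pos (by exact_mod_cast hp.out.pos) _

lemma eps_le_one (γ : ℕ) : (p:ℝ)^(-(γ:ℤ)) ≤ 1 := by
  have h1 : (1:ℝ) ≤ (p:ℝ) := by exact_mod_cast hp.out.one_lt.le
  calc (p:ℝ)^(-(γ:ℤ)) ≤ (p:ℝ)^(0:ℤ) := by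
        apply zpow_le_zpow_right₀ h1; omega
    _ = 1 := zpow_zero _

lemma norm2 {a b : ℚ_[p]} {ε : ℝ} (ha : ‖a‖ ≤ ε) (hb : ‖b‖ ≤ ε) : ‖a + b‖ ≤ ε :=
  le_trans (Padic.nonarchimedean a b) (max_le ha hb)

lemma norm3 {a b c : ℚ_[p]} {ε : ℝ} (ha : ‖a‖ ≤ ε) (hb : ‖b‖ ≤ ε) (hc : ‖c‖ ≤ ε) :
    ‖a + b + c‖ ≤ ε :=
  norm2 (norm2 ha hb) hc

lemma int_norm_le {γ : ℕ} {z : ℤ} (hz : ((z : ℤ) : ZMod (p^γ)) = 0) :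
    ‖((z : ℤ) : ℚ_[p])‖ ≤ (p:ℝ)^(-(γ:ℤ)) := by
  have h1 : ((p^γ : ℕ) : ℤ) ∣ z := (ZMod.intCast_zmod_eq_zero_iff_dvd z (p^γ)).mp hz
  have h2 : ((p : ℤ))^γ ∣ z := by exact_mod_cast h1
  exact (Padic.norm_int_le_pow_iff_dvd z γ).mpr h2

lemma nat_norm_le_iff {γ : ℕ} (u v : ℕ) :
    ‖((u:ℚ_[p]) - (v:ℚ_[p]))‖ ≤ (p:ℝ)^(-(γ:ℤ)) ↔ ((u : ZMod (p^γ)) = (v : ZMod (p^γ))) := by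
  have h1 : ((u:ℚ_[p]) - v) = ((((u:ℤ) - (v:ℤ)) : ℤ) : ℚ_[p]) := by push_cast; ring
  rw [h1, Padic.norm_int_le_pow_iff_dvd]
  constructor
  · intro hdvd
    have h2 : (((u:ℤ) - (v:ℤ) : ℤ) : ZMod (p^γ)) = 0 := by
      rw [ZMod.intCast_zmod_eq_zero_iff_dvd]
      exact_mod_cast hdvd
    push_cast at h2
    rw [sub_eq_zero] at h2
    exact h2
  · intro heq
    have h2 : (((u:ℤ) - (v:ℤ) : ℤ) : ZMod (p^γ)) = 0 := by
      push_cast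
      rw [sub_eq_zero]
      exact heq
    have := (ZMod.intCast_zmod_eq_zero_iff_dvd _ (p^γ)).mp h2
    exact_mod_cast this

lemma sum_ite_unique {α : Type*} [Fintype α] (P : α → Prop) [DecidablePred P]
    (h : ∃! y, P y) : (∑ y : α, if P y then 1 else 0) = 1 := by
  obtain ⟨y0, hy0, huni⟩ := h
  rw [Finset.sum_eq_single y0]
  · rw [if_pos hy0]
  · intro y _ hy
    exact if_neg (fun hP => hy (huni y hP))
  · intro hy0'
    exact absurd (Finset.mem_univ y0) hy0'

open MeasureTheory in
open scoped Classical in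
lemma forward_conv (γ : ℕ) (C : Finset ℕ)
    [MeasurableSpace ℚ_[p]] [BorelSpace ℚ_[p]]
    (μ : Measure ℚ_[p]) [μ.IsAddHaarMeasure]
    (Ω : Set ℚ_[p])
    (hΩ : Ω = ⋃ c ∈ C, {x : ℚ_[p] | ‖x - (c : ℚ_[p])‖ ≤ (p : ℝ) ^ (-(γ : ℤ))})
    (T : Set ℚ_[p]) (hT : ∀ᵐ x ∂μ, ∃! t, t ∈ T ∧ x - t ∈ Ω) (s : ZMod (p^γ)) :
    conv (fun x => if x ∈ C.image (fun c : ℕ => (c : ZMod (p^γ))) then 1 else 0)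
      (fun d => if (∃ t ∈ T, ‖t - ((d.val : ℕ) : ℚ_[p])‖ ≤ (p:ℝ)^(-(γ:ℤ))) then 1 else 0)
      s = 1 := by
  have hΩmem : ∀ y : ℚ_[p], y ∈ Ω ↔ ∃ c ∈ C, ‖y - (c:ℚ_[p])‖ ≤ (p:ℝ)^(-(γ:ℤ)) := by
    intro y
    rw [hΩ]
    simp only [Set.mem_iUnion, Set.mem_setOf_eq, exists_prop]
  -- find a good point in the ball around s.val
  set Bs : Set ℚ_[p] := {x | ‖x - ((s.val : ℕ):ℚ_[p])‖ ≤ (p:ℝ)^(-(γ:ℤ))} with hBs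
  have hBsopen : IsOpen Bs := by
    have he : Bs = Metric.ball ((s.val : ℕ):ℚ_[p]) ((p:ℝ)^(-(γ:ℤ)+1)) := by
      ext x
      simp only [Metric.mem_ball, dist_eq_norm, Set.mem_setOf_eq, hBs]
      exact Padic.norm_le_pow_iff_norm_lt_pow_add_one _ _
    rw [he]
    exact Metric.isOpen_ball
  have hBsne : Bs.Nonempty := ⟨((s.val : ℕ):ℚ_[p]), by
    simp only [hBs, Set.mem_setOf_eq, sub_self, norm_zero]
    exact (eps_pos γ).le⟩
  have hgood : ∃ x ∈ Bs, ∃! t, t ∈ T ∧ x - t ∈ Ω := by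
    by_contra hcon
    push_neg at hcon
    have hsub : Bs ⊆ {x | ¬ ∃! t, t ∈ T ∧ x - t ∈ Ω} := fun x hx => hcon x hx
    have h0 : μ Bs = 0 := measure_mono_null hsub (MeasureTheory.ae_iff.mp hT)
    exact absurd h0 (ne_of_gt (hBsopen.measure_pos μ hBsne))
  obtain ⟨x, hxB, t0, ⟨ht0T, ht0Ω⟩, ht0u⟩ := hgood
  rw [hBs] at hxB
  simp only [Set.mem_setOf_eq] at hxB
  -- the unique decomposition
  obtain ⟨c0, hc0C, hc0n⟩ := (hΩmem (x - t0)).mp ht0Ω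
  set cbar : ZMod (p^γ) := ((c0 : ℕ) : ZMod (p^γ)) with hcbar
  have hmemA : cbar ∈ C.image (fun c : ℕ => (c : ZMod (p^γ))) :=
    Finset.mem_image_of_mem _ hc0C
  -- norm of integer-congruence terms
  have hintterm : ∀ (c : ℕ) (y : ZMod (p^γ)), ((c : ZMod (p^γ)) = y) →
      ‖((s.val : ℕ) : ℚ_[p]) - (c : ℚ_[p]) - (((s - y).val : ℕ) : ℚ_[p])‖ ≤ (p:ℝ)^(-(γ:ℤ)) := by
    intro c y hcy
    have he : ((s.val : ℕ) : ℚ_[p]) - (c : ℚ_[p]) - (((s - y).val : ℕ) : ℚ_[p]) =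
        ((((s.val : ℤ) - (c : ℤ) - ((s - y).val : ℤ)) : ℤ) : ℚ_[p]) := by push_cast; ring
    rw [he]
    apply int_norm_le
    push_cast
    rw [ZMod.natCast_rightInverse s, ZMod.natCast_rightInverse (s - y), hcy]
    ring
  have hkey0 : ‖t0 - (((s - cbar).val : ℕ) : ℚ_[p])‖ ≤ (p:ℝ)^(-(γ:ℤ)) := by
    have he : t0 - (((s - cbar).val : ℕ) : ℚ_[p]) =
        -(x - t0 - c0) + (x - ((s.val : ℕ):ℚ_[p])) +
          (((s.val : ℕ) : ℚ_[p]) - (c0 : ℚ_[p]) - (((s - cbar).val : ℕ) : ℚ_[p])) := by ring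
    rw [he]
    exact norm3 (by rw [norm_neg]; exact hc0n) hxB (hintterm c0 cbar rfl)
  have hEU : ∃! ybar : ZMod (p^γ), (ybar ∈ C.image (fun c : ℕ => (c : ZMod (p^γ)))) ∧
      (∃ t ∈ T, ‖t - (((s - ybar).val : ℕ) : ℚ_[p])‖ ≤ (p:ℝ)^(-(γ:ℤ))) := by
    refine ⟨cbar, ⟨hmemA, t0, ht0T, hkey0⟩, ?_⟩
    rintro y ⟨hyA, t, htT, htn⟩
    obtain ⟨cy, hcyC, hcy⟩ := Finset.mem_image.mp hyA
    have hxtΩ : x - t ∈ Ω := by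
      rw [hΩmem]
      refine ⟨cy, hcyC, ?_⟩
      have he : x - t - (cy : ℚ_[p]) =
          (x - ((s.val : ℕ):ℚ_[p])) +
            (((s.val : ℕ) : ℚ_[p]) - (cy : ℚ_[p]) - (((s - y).val : ℕ) : ℚ_[p])) +
            -(t - (((s - y).val : ℕ) : ℚ_[p])) := by ring
      rw [he]
      exact norm3 hxB (hintterm cy y hcy) (by rw [norm_neg]; exact htn)
    have hteq : t = t0 := ht0u t ⟨htT, hxtΩ⟩
    have hvv : ‖(((s - y).val : ℕ) : ℚ_[p]) - (((s - cbar).val : ℕ) : ℚ_[p])‖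
        ≤ (p:ℝ)^(-(γ:ℤ)) := by
      have he : (((s - y).val : ℕ) : ℚ_[p]) - (((s - cbar).val : ℕ) : ℚ_[p]) =
          -(t0 - (((s - y).val : ℕ) : ℚ_[p])) + (t0 - (((s - cbar).val : ℕ) : ℚ_[p])) := by
        ring
      rw [he]
      refine norm2 (by rw [norm_neg, ← hteq]; exact htn) hkey0
    have hzz : ((s - y) : ZMod (p^γ)) = (s - cbar) := by
      have := (nat_norm_le_iff (p := p) ((s-y).val) ((s-cbar).val)).mp hvv
      rwa [ZMod.natCast_rightInverse (s - y), ZMod.natCast_rightInverse (s - cbar)] at this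
    have h2 := congrArg (fun z => s - z) hzz
    simpa [sub_sub_cancel] using h2
  -- conclude
  unfold conv
  rw [Finset.sum_congr rfl (fun y _ => ?_), sum_ite_unique _ hEU]
  by_cases h1 : y ∈ C.image (fun c : ℕ => (c : ZMod (p^γ)))
  <;> by_cases h2 : (∃ t ∈ T, ‖t - ((((s - y).val : ℕ)) : ℚ_[p])‖ ≤ (p:ℝ)^(-(γ:ℤ)))
  <;> simp [h1, h2]

open scoped Classical in
lemma filter_push_eq_image (γ n : ℕ) (hn : n ≤ γ) (C : Finset ℕ) :
    Finset.univ.filter (fun r : ZMod (p^n) =>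
      push (pow_dvd_pow p hn)
        (fun x : ZMod (p^γ) => if x ∈ C.image (fun c : ℕ => (c : ZMod (p^γ))) then 1 else 0)
        r ≠ 0)
    = C.image (fun c : ℕ => (c : ZMod (p^n))) := by
  ext r
  simp only [Finset.mem_filter, Finset.mem_univ, true_and]
  unfold push
  constructor
  · intro hne
    by_contra hnotim
    apply hne
    apply Finset.sum_eq_zero
    intro x _
    split
    · next hx =>
      dsimp only
      split
      · next hxA =>
        exfalso
        obtain ⟨c, hcC, rfl⟩ := Finset.mem_image.mp hxA
        apply hnotim
        apply Finset.mem_image.mpr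
        exact ⟨c, hcC, by rw [← hx, map_natCast]⟩
      · rfl
    · rfl
  · intro him
    obtain ⟨c, hcC, rfl⟩ := Finset.mem_image.mp him
    intro h0
    have hz := (Finset.sum_eq_zero_iff).mp h0 ((c : ZMod (p^γ))) (Finset.mem_univ _)
    dsimp only at hz
    rw [if_pos (by rw [map_natCast]), if_pos (Finset.mem_image_of_mem _ hcC)] at hz
    exact one_ne_zero hz

lemma appr_norm (z : ℤ_[p]) (n : ℕ) :
    ‖(z : ℚ_[p]) - ((z.appr n : ℕ) : ℚ_[p])‖ ≤ (p:ℝ)^(-(n:ℤ)) := by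
  have hsp := PadicInt.appr_spec n z
  have h2 := (PadicInt.norm_le_pow_iff_mem_span_pow (z - ((z.appr n : ℕ) : ℤ_[p])) n).mpr hsp
  rw [PadicInt.norm_def] at h2
  have he : (((z - ((z.appr n : ℕ) : ℤ_[p])) : ℤ_[p]) : ℚ_[p]) =
      (z : ℚ_[p]) - ((z.appr n : ℕ) : ℚ_[p]) := by push_cast; ring
  rwa [he] at h2

lemma backward (γ : ℕ) (C : Finset ℕ) (hCne : C.Nonempty)
    (Ω : Set ℚ_[p])
    (hΩ : Ω = ⋃ c ∈ C, {x : ℚ_[p] | ‖x - (c : ℚ_[p])‖ ≤ (p : ℝ) ^ (-(γ : ℤ))})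
    (hhom : ∀ n : ℕ, 1 ≤ n → n ≤ γ →
      ∃ k : ℕ, (C.image (fun c : ℕ => (c : ZMod (p ^ n)))).card = p ^ k) :
    ∃ T : Set ℚ_[p], ∀ x : ℚ_[p], ∃! t, t ∈ T ∧ x - t ∈ Ω := by
  have hΩmem : ∀ y : ℚ_[p], y ∈ Ω ↔ ∃ c ∈ C, ‖y - (c:ℚ_[p])‖ ≤ (p:ℝ)^(-(γ:ℤ)) := by
    intro y
    rw [hΩ]
    simp only [Set.mem_iUnion, Set.mem_setOf_eq, exists_prop]
  have hpQ : ((p:ℚ_[p])) ≠ 0 := by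
    exact_mod_cast (Nat.cast_ne_zero (R := ℚ_[p])).mpr hp.out.ne_zero
  have hpR : (0:ℝ) < (p:ℝ) := by exact_mod_cast hp.out.pos
  set A : Finset (ZMod (p^γ)) := C.image (fun c : ℕ => (c : ZMod (p^γ))) with hA
  have hhomA : ∀ n (hn : n ≤ γ), ∃ k,
      (A.image (ZMod.castHom (pow_dvd_pow p hn) (ZMod (p^n)))).card = p^k := by
    intro n hn
    rcases Nat.eq_zero_or_pos n with rfl | hpos
    · refine ⟨0, ?_⟩
      have hsub : Subsingleton (ZMod (p^0)) := by rw [pow_zero]; infer_instance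
      obtain ⟨z, hz⟩ := (hCne.image (fun c : ℕ => (c : ZMod (p^γ)))).image
        (ZMod.castHom (pow_dvd_pow p (Nat.zero_le γ)) (ZMod (p^0)))
      rw [Finset.eq_singleton_iff_unique_mem.mpr ⟨hz, fun w _ => Subsingleton.elim w z⟩,
        Finset.card_singleton, pow_zero]
    · obtain ⟨k, hk⟩ := hhom n hpos hn
      refine ⟨k, ?_⟩
      rw [← hk, hA, Finset.image_image]
      refine congrArg Finset.card ?_
      apply Finset.image_congr
      intro c _
      exact map_natCast (ZMod.castHom (pow_dvd_pow p hn) (ZMod (p^n))) c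
  obtain ⟨B, hB⟩ := build γ A (hCne.image _) hhomA
  refine ⟨{x : ℚ_[p] | ∃ b ∈ B, ∃ m a : ℕ, a < p^m ∧
    x = ((b.val : ℕ) : ℚ_[p]) + (a : ℚ_[p]) / (p:ℚ_[p])^m}, ?_⟩
  intro x
  -- fractional part
  obtain ⟨m, hm⟩ : ∃ m : ℕ, ‖x‖ ≤ (p:ℝ)^(m:ℤ) := by
    obtain ⟨m, hm⟩ := exists_nat_gt ‖x‖
    refine ⟨m, le_trans hm.le ?_⟩
    calc (m:ℝ) ≤ ((p^m:ℕ):ℝ) := by exact_mod_cast (Nat.lt_pow_self (n := m) hp.out.one_lt).le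
      _ = (p:ℝ)^(m:ℤ) := by push_cast [zpow_natCast]; ring
  set y : ℚ_[p] := (p:ℚ_[p])^m * x with hy
  have hy1 : ‖y‖ ≤ 1 := by
    have hinv : (p:ℝ)^(-(m:ℤ)) * (p:ℝ)^((m:ℤ)) = 1 := by
      rw [← zpow_add₀ (ne_of_gt hpR)]
      simp
    calc ‖y‖ = ‖(p:ℚ_[p])^m‖ * ‖x‖ := norm_mul _ _
      _ = (p:ℝ)^(-(m:ℤ)) * ‖x‖ := by rw [Padic.norm_p_pow]
      _ ≤ (p:ℝ)^(-(m:ℤ)) * (p:ℝ)^(m:ℤ) := by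
          apply mul_le_mul_of_nonneg_left hm (le_of_lt (eps_pos m))
      _ = 1 := hinv
  set yz : ℤ_[p] := ⟨y, hy1⟩ with hyz
  set a := yz.appr m with ha
  have halt : a < p^m := PadicInt.appr_lt yz m
  have hya : ‖y - (a:ℚ_[p])‖ ≤ (p:ℝ)^(-(m:ℤ)) := appr_norm yz m
  set w : ℚ_[p] := x - (a:ℚ_[p])/(p:ℚ_[p])^m with hw
  have hwnorm : ‖w‖ ≤ 1 := by
    have he : w = (y - (a:ℚ_[p])) / (p:ℚ_[p])^m := by
      rw [hw, hy]
      field_simp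
    have hppow : (0:ℝ) < (p:ℝ)^(-(m:ℤ)) := eps_pos m
    calc ‖w‖ = ‖y - (a:ℚ_[p])‖ / (p:ℝ)^(-(m:ℤ)) := by
          rw [he, norm_div, Padic.norm_p_pow]
      _ ≤ (p:ℝ)^(-(m:ℤ)) / (p:ℝ)^(-(m:ℤ)) := by
          apply div_le_div_of_nonneg_right hya hppow.le
      _ = 1 := div_self (ne_of_gt hppow)
  set wz : ℤ_[p] := ⟨w, hwnorm⟩ with hwz
  set e := wz.appr γ with he'
  have hwe : ‖w - (e:ℚ_[p])‖ ≤ (p:ℝ)^(-(γ:ℤ)) := appr_norm wz γ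
  obtain ⟨⟨cbar, b⟩, ⟨hcbar, hbB, hsum⟩, huniq⟩ := hB ((e : ZMod (p^γ)))
  dsimp only at hcbar hbB hsum
  obtain ⟨c, hcC, hc⟩ := Finset.mem_image.mp hcbar
  set t : ℚ_[p] := ((b.val : ℕ) : ℚ_[p]) + (a : ℚ_[p]) / (p:ℚ_[p])^m with ht
  have htT : t ∈ {x : ℚ_[p] | ∃ b ∈ B, ∃ m a : ℕ, a < p^m ∧
      x = ((b.val : ℕ) : ℚ_[p]) + (a : ℚ_[p]) / (p:ℚ_[p])^m} :=
    ⟨b, hbB, m, a, halt, ht⟩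
  have hctn : ‖x - t - (c:ℚ_[p])‖ ≤ (p:ℝ)^(-(γ:ℤ)) := by
    have he2 : x - t - (c:ℚ_[p]) = (w - (e:ℚ_[p])) +
        (((e:ℚ_[p]) - ((b.val : ℕ):ℚ_[p]) - (c:ℚ_[p]))) := by
      rw [ht, hw]; ring
    rw [he2]
    refine norm2 hwe ?_
    have he3 : (e:ℚ_[p]) - ((b.val : ℕ):ℚ_[p]) - (c:ℚ_[p]) =
        (((e:ℤ) - (b.val:ℤ) - (c:ℤ) : ℤ) : ℚ_[p]) := by push_cast; ring
    rw [he3]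
    apply int_norm_le
    push_cast
    rw [ZMod.natCast_rightInverse b, hc, ← hsum]
    ring
  have htΩ : x - t ∈ Ω := (hΩmem _).mpr ⟨c, hcC, hctn⟩
  refine ⟨t, ⟨htT, htΩ⟩, ?_⟩
  rintro t' ⟨⟨b', hb'B, m', a', ha'lt, rfl⟩, ht'Ω⟩
  obtain ⟨c', hc'C, hc'n⟩ := (hΩmem _).mp ht'Ω
  set t'e : ℚ_[p] := ((b'.val : ℕ) : ℚ_[p]) + (a' : ℚ_[p]) / (p:ℚ_[p])^m' with ht'
  -- step 1 : norm of t' - t is at most 1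
  have hone : ∀ u v : ℕ, ‖((u:ℚ_[p])) - (v:ℚ_[p])‖ ≤ 1 := by
    intro u v
    have : ((u:ℚ_[p])) - (v:ℚ_[p]) = (((u:ℤ) - (v:ℤ) : ℤ) : ℚ_[p]) := by push_cast; ring
    rw [this]
    exact Padic.norm_int_le_one _
  have htt1 : ‖t'e - t‖ ≤ 1 := by
    have he4 : t'e - t = (x - t - (c:ℚ_[p])) + -(x - t'e - (c':ℚ_[p])) +
        ((c:ℚ_[p]) - (c':ℚ_[p])) := by ring
    rw [he4]
    have h1 : ‖x - t - (c:ℚ_[p])‖ ≤ 1 := le_trans hctn (eps_le_one γ)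
    have h2 : ‖-(x - t'e - (c':ℚ_[p]))‖ ≤ 1 := by
      rw [norm_neg]; exact le_trans hc'n (eps_le_one γ)
    have h3 : ‖(c:ℚ_[p]) - (c':ℚ_[p])‖ ≤ 1 := hone c c'
    exact norm3 h1 h2 h3
  -- step 2 : fractional parts are equal
  set M := max m m' with hM
  set D : ℚ_[p] := (a':ℚ_[p])/(p:ℚ_[p])^m' - (a:ℚ_[p])/(p:ℚ_[p])^m with hD
  have hD1 : ‖D‖ ≤ 1 := by
    have he5 : D = (t'e - t) + (((b.val:ℕ):ℚ_[p]) - ((b'.val:ℕ):ℚ_[p])) := by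
      rw [hD, ht, ht']; ring
    rw [he5]
    exact norm2 htt1 (hone _ _)
  set z : ℤ := (a' : ℤ) * (p:ℤ)^(M - m') - (a:ℤ) * (p:ℤ)^(M - m) with hz
  have hzD : ((z:ℤ):ℚ_[p]) = (p:ℚ_[p])^M * D := by
    have e1 : (p:ℚ_[p])^M = (p:ℚ_[p])^(M-m') * (p:ℚ_[p])^(m') := by
      rw [← pow_add]; congr 1; omega
    have e2 : (p:ℚ_[p])^M = (p:ℚ_[p])^(M-m) * (p:ℚ_[p])^(m) := by
      rw [← pow_add]; congr 1; omega
    have f1 : ((p:ℚ_[p]))^M * ((a':ℚ_[p])/(p:ℚ_[p])^m') = (a':ℚ_[p]) * (p:ℚ_[p])^(M-m') := by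
      rw [e1]; field_simp
    have f2 : ((p:ℚ_[p]))^M * ((a:ℚ_[p])/(p:ℚ_[p])^m) = (a:ℚ_[p]) * (p:ℚ_[p])^(M-m) := by
      rw [e2]; field_simp
    rw [hz, hD, mul_sub, f1, f2]
    push_cast
    try ring
  have hzdvd : (p:ℤ)^M ∣ z := by
    apply (Padic.norm_int_le_pow_iff_dvd z M).mp
    rw [hzD, norm_mul, Padic.norm_p_pow]
    calc (p:ℝ)^(-(M:ℤ)) * ‖D‖ ≤ (p:ℝ)^(-(M:ℤ)) * 1 :=
          mul_le_mul_of_nonneg_left hD1 (eps_pos M).le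
      _ = (p:ℝ)^(-(M:ℤ)) := mul_one _
  have hzbound : |z| < (p:ℤ)^M := by
    have hb1 : (a':ℤ) * (p:ℤ)^(M-m') < (p:ℤ)^M := by
      calc (a':ℤ) * (p:ℤ)^(M-m') < (p:ℤ)^(m') * (p:ℤ)^(M-m') := by
            apply mul_lt_mul_of_pos_right (by exact_mod_cast ha'lt)
            exact pow_pos (by exact_mod_cast hp.out.pos) _
        _ = (p:ℤ)^M := by rw [← pow_add]; congr 1; omega
    have hb2 : (a:ℤ) * (p:ℤ)^(M-m) < (p:ℤ)^M := by
      calc (a:ℤ) * (p:ℤ)^(M-m) < (p:ℤ)^(m) * (p:ℤ)^(M-m) := by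
            apply mul_lt_mul_of_pos_right (by exact_mod_cast halt)
            exact pow_pos (by exact_mod_cast hp.out.pos) _
        _ = (p:ℤ)^M := by rw [← pow_add]; congr 1; omega
    have hnn1 : (0:ℤ) ≤ (a':ℤ) * (p:ℤ)^(M-m') := by positivity
    have hnn2 : (0:ℤ) ≤ (a:ℤ) * (p:ℤ)^(M-m) := by positivity
    rw [hz, abs_lt]
    constructor <;> linarith
  have hz0 : z = 0 := Int.eq_zero_of_abs_lt_dvd hzdvd hzbound
  have hDzero : D = 0 := by
    have h5 : (p:ℚ_[p])^M * D = 0 := by rw [← hzD, hz0]; simp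
    exact (mul_eq_zero.mp h5).resolve_left (pow_ne_zero _ hpQ)
  have hfrac : (a':ℚ_[p])/(p:ℚ_[p])^m' = (a:ℚ_[p])/(p:ℚ_[p])^m := by
    have := sub_eq_zero.mp (hD ▸ hDzero)
    exact this
  -- step 3 : residues agree
  have hcong : ‖((c + b.val : ℕ):ℚ_[p]) - ((c' + b'.val : ℕ):ℚ_[p])‖ ≤ (p:ℝ)^(-(γ:ℤ)) := by
    have he6 : ((c + b.val : ℕ):ℚ_[p]) - ((c' + b'.val : ℕ):ℚ_[p]) =
        (x - t'e - (c':ℚ_[p])) + -(x - t - (c:ℚ_[p])) := by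
      rw [ht', ht, hfrac]
      push_cast
      ring
    rw [he6]
    exact norm2 hc'n (by rw [norm_neg]; exact hctn)
  have hZcong : ((c + b.val : ℕ) : ZMod (p^γ)) = ((c' + b'.val : ℕ) : ZMod (p^γ)) :=
    (nat_norm_le_iff _ _).mp hcong
  have hsum' : ((c' : ℕ) : ZMod (p^γ)) + b' = ((e : ℕ) : ZMod (p^γ)) := by
    push_cast at hZcong
    rw [ZMod.natCast_rightInverse b, ZMod.natCast_rightInverse b', hc] at hZcong
    rw [← hZcong]
    exact hsum
  have heq := huniq (((c' : ℕ) : ZMod (p^γ)), b')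
    ⟨Finset.mem_image_of_mem _ hc'C, hb'B, hsum'⟩
  have hbb : b' = b := congrArg Prod.snd heq
  rw [ht', hbb, hfrac, ← ht]

end Padic

end PHomAux

/-- For `Ω = ⋃_{c∈C} (c + p^γ ℤ_p)` with `C ⊆ {0,…,p^γ-1}` nonempty,
`Ω` tiles `ℚ_p` by translation iff for every `1 ≤ n ≤ γ` the cardinality of the image of
`C` in `ℤ/p^nℤ` is a power of `p`. -/
theorem compactOpen_tiles_iff_pHomogeneous
    (p γ : ℕ) [Fact p.Prime] (hγ : 1 ≤ γ)
    (C : Finset ℕ) (hCne : C.Nonempty) (hCsub : ∀ c ∈ C, c < p ^ γ)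
    [MeasurableSpace ℚ_[p]] [BorelSpace ℚ_[p]]
    (μ : Measure ℚ_[p]) [μ.IsAddHaarMeasure]
    (Ω : Set ℚ_[p])
    (hΩ : Ω = ⋃ c ∈ C, {x : ℚ_[p] | ‖x - (c : ℚ_[p])‖ ≤ (p : ℝ) ^ (-(γ : ℤ))}) :
    (∃ T : Set ℚ_[p], ∀ᵐ x ∂μ, ∃! t, t ∈ T ∧ x - t ∈ Ω) ↔
      (∀ n : ℕ, 1 ≤ n → n ≤ γ →
        ∃ k : ℕ, (C.image (fun c : ℕ => (c : ZMod (p ^ n)))).card = p ^ k) := by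
  constructor
  · rintro ⟨T, hT⟩ n hn1 hnγ
    have hconv := PHomAux.forward_conv (p := p) γ C μ Ω hΩ T hT
    obtain ⟨k, hk⟩ := PHomAux.supp_card_push_eq_ppow γ _ _ hconv n hnγ
    refine ⟨k, ?_⟩
    rw [← hk, PHomAux.filter_push_eq_image γ n hnγ C]
  · intro hhom
    obtain ⟨T, hT⟩ := PHomAux.backward γ C hCne Ω hΩ hhom
    exact ⟨T, MeasureTheory.ae_of_all μ hT⟩

end
end

section
/- Let p be a prime and γ ≥ 1 an integer. A nonempty subset C of ℤ/p^γℤ is a spectral set in ℤ/p^γℤ if and only if C tiles ℤ/p^γℤ. -/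
open Finset

noncomputable section

namespace Fug
open Polynomial

/-- The standard primitive N-th root of unity. -/
def zeta (N : ℕ) : ℂ := Complex.exp (2 * Real.pi * Complex.I / N)

lemma zeta_prim {N : ℕ} (hN : N ≠ 0) : IsPrimitiveRoot (zeta N) N :=
  Complex.isPrimitiveRoot_exp N hN

variable {N : ℕ}

lemma zeta_pow_N (hN : N ≠ 0) : zeta N ^ N = 1 := (zeta_prim hN).pow_eq_one

lemma zeta_ne_zero (hN : N ≠ 0) : zeta N ≠ 0 := Complex.exp_ne_zero _

/-- reduce an integer exponent mod N -/
lemma zeta_zpow_mod (hN : N ≠ 0) (m : ℤ) :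
    zeta N ^ m = zeta N ^ ((m : ZMod N)).val := by
  haveI : NeZero N := ⟨hN⟩
  have h : ((((m : ZMod N)).val : ℤ) : ZMod N) = (m : ZMod N) := by
    push_cast
    exact ZMod.natCast_rightInverse _
  have hdvd : (N : ℤ) ∣ m - ((m : ZMod N)).val := by
    rwa [← ZMod.intCast_zmod_eq_zero_iff_dvd, Int.cast_sub, sub_eq_zero, eq_comm]
  obtain ⟨k, hk⟩ := hdvd
  have hm : m = ((m : ZMod N)).val + N * k := by linarith
  conv_lhs => rw [hm]
  rw [zpow_add₀ (zeta_ne_zero hN), zpow_natCast, zpow_mul, zpow_natCast,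
    zeta_pow_N hN, one_zpow, mul_one]

lemma zeta_pow_mod (hN : N ≠ 0) (m : ℕ) :
    zeta N ^ m = zeta N ^ ((m : ZMod N)).val := by
  have := zeta_zpow_mod hN (m : ℤ)
  rw [zpow_natCast] at this
  rw [this]; norm_cast

/-- sum over ZMod of g(val) equals sum over range -/
lemma sum_val_eq_range [NeZero N] (g : ℕ → ℂ) :
    ∑ x : ZMod N, g x.val = ∑ i ∈ Finset.range N, g i := by
  apply Finset.sum_nbij' (fun x : ZMod N => x.val) (fun i : ℕ => (i : ZMod N))
  · intro x _; exact Finset.mem_range.2 (ZMod.val_lt x)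
  · intro i _; exact Finset.mem_univ _
  · intro x _; exact ZMod.natCast_rightInverse x
  · intro i hi; exact ZMod.val_cast_of_lt (Finset.mem_range.1 hi)
  · intro x _; rfl

lemma sum_pow_val [NeZero N] (w : ℂ) (hw : w ^ N = 1) :
    ∑ x : ZMod N, w ^ x.val = if w = 1 then (N : ℂ) else 0 := by
  rw [sum_val_eq_range]
  split_ifs with h
  · simp [h]
  · have := geom_sum_eq h N
    rw [this, hw, sub_self, zero_div]

variable {p n k : ℕ} [hp : Fact p.Prime]
def P (N : ℕ) (C : Finset (ZMod N)) : ℤ[X] := ∑ c ∈ C, X ^ c.val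

lemma aeval_P (C : Finset (ZMod N)) (w : ℂ) :
    aeval w (P N C) = ∑ c ∈ C, w ^ (ZMod.val c) := by
  simp [P]

lemma eval_one_P (C : Finset (ZMod N)) : eval 1 (P N C) = C.card := by
  rw [P, eval_finset_sum]
  simp

variable {p n : ℕ} [hp : Fact p.Prime]

lemma mu_prim (hN : N = p ^ n) (a : ZMod N) (v : ℕ) (hv : v < n)
    (h1 : p ^ v ∣ a.val) (h2 : ¬ p ^ (v + 1) ∣ a.val) :
    IsPrimitiveRoot (zeta N ^ a.val) (p ^ (n - v)) := by
  obtain ⟨u, hu⟩ := h1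
  have hpu : ¬ p ∣ u := by
    intro hdvd
    exact h2 (by rw [hu, pow_succ]; exact mul_dvd_mul_left _ hdvd)
  have hN0 : N ≠ 0 := by
    rw [hN]; exact pow_ne_zero _ hp.out.pos.ne'
  have hsplit : N = p ^ v * p ^ (n - v) := by
    rw [hN, ← pow_add]
    congr 1
    omega
  have h3 : IsPrimitiveRoot (zeta N ^ p ^ v) (p ^ (n - v)) :=
    (zeta_prim hN0).pow (Nat.pos_of_ne_zero hN0) hsplit
  have h4 := h3.pow_of_coprime u
    (Nat.Coprime.pow_right _ ((Nat.Prime.coprime_iff_not_dvd hp.out).2 hpu).symm)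
  rwa [← pow_mul, ← hu] at h4

lemma vanish_iff (hN : N = p ^ n) (C : Finset (ZMod N)) (a : ZMod N) (v : ℕ) (hv : v < n)
    (h1 : p ^ v ∣ a.val) (h2 : ¬ p ^ (v + 1) ∣ a.val) :
    (∑ c ∈ C, zeta N ^ (c.val * a.val) = 0) ↔ cyclotomic (p ^ (n - v)) ℤ ∣ P N C := by
  have hμ := mu_prim hN a v hv h1 h2
  set μ := zeta N ^ a.val with hμdef
  have hpos : 0 < p ^ (n - v) := pow_pos hp.out.pos _
  have hbridge : ∑ c ∈ C, zeta N ^ (c.val * a.val) = aeval μ (P N C) := by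
    rw [aeval_P]
    refine Finset.sum_congr rfl fun c _ => ?_
    rw [hμdef, ← pow_mul, mul_comm]
  rw [hbridge]
  constructor
  · intro h0
    have hq : aeval μ ((P N C).map (algebraMap ℤ ℚ)) = 0 := by
      rwa [aeval_map_algebraMap]
    have hdvdQ : cyclotomic (p ^ (n - v)) ℚ ∣ (P N C).map (algebraMap ℤ ℚ) := by
      rw [cyclotomic_eq_minpoly_rat hμ hpos]
      exact minpoly.dvd ℚ μ hq
    refine (map_dvd_map (Int.castRingHom ℚ) Int.cast_injective
      (cyclotomic.monic _ ℤ)).mp ?_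
    rw [map_cyclotomic]
    exact hdvdQ
  · intro hdvd
    obtain ⟨q, hq⟩ := hdvd
    rw [hq, map_mul]
    have hroot : aeval μ (cyclotomic (p ^ (n - v)) ℤ) = 0 := by
      have h5 : IsRoot (cyclotomic (p ^ (n - v)) ℂ) μ := hμ.isRoot_cyclotomic hpos
      rw [aeval_def, eval₂_eq_eval_map, map_cyclotomic]
      exact h5
    rw [hroot, zero_mul]

lemma pow_card_dvd_card (hN : N = p ^ n) (C : Finset (ZMod N)) (S : Finset ℕ)
    (hS1 : ∀ j ∈ S, 1 ≤ j) (hdvd : ∀ j ∈ S, cyclotomic (p ^ j) ℤ ∣ P N C) :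
    (p : ℤ) ^ S.card ∣ (C.card : ℤ) := by
  have hprodQ : (∏ j ∈ S, cyclotomic (p ^ j) ℚ) ∣ (P N C).map (algebraMap ℤ ℚ) := by
    apply Finset.prod_dvd_of_coprime
    · intro i hi j hj hij
      exact cyclotomic.isCoprime_rat fun h =>
        hij (Nat.pow_right_injective hp.out.two_le h)
    · intro j hj
      have := Polynomial.map_dvd (Int.castRingHom ℚ) (hdvd j hj)
      rwa [map_cyclotomic] at this
  have hprodZ : (∏ j ∈ S, cyclotomic (p ^ j) ℤ) ∣ P N C := by
    refine (map_dvd_map (Int.castRingHom ℚ) Int.cast_injective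
      (monic_prod_of_monic _ _ fun j _ => cyclotomic.monic _ ℤ)).mp ?_
    rw [Polynomial.map_prod]
    simpa only [map_cyclotomic, algebraMap_int_eq] using hprodQ
  have heval := Polynomial.eval_dvd (x := (1 : ℤ)) hprodZ
  rw [eval_one_P, eval_prod] at heval
  have : ∏ j ∈ S, eval 1 (cyclotomic (p ^ j) ℤ) = (p : ℤ) ^ S.card := by
    rw [← Finset.prod_const]
    refine Finset.prod_congr rfl fun j hj => ?_
    have h1j := hS1 j hj
    obtain ⟨k, rfl⟩ : ∃ k, j = k + 1 := ⟨j - 1, by omega⟩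
    exact eval_one_cyclotomic_prime_pow k
  rwa [this] at heval

/-- digit expansion with digit positions σ -/
def dig (p : ℕ) {k : ℕ} (σ : Fin k → ℕ) (f : Fin k → Fin p) : ℤ :=
  ∑ i, (f i : ℤ) * (p : ℤ) ^ (σ i)

lemma dig_sub_exact {σ : Fin k → ℕ} (hσ : Function.Injective σ)
    {f g : Fin k → Fin p} (hfg : f ≠ g) :
    ∃ i : Fin k, (p : ℤ) ^ (σ i) ∣ (dig p σ f - dig p σ g) ∧
      ¬ (p : ℤ) ^ (σ i + 1) ∣ (dig p σ f - dig p σ g) := by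
  have hD : dig p σ f - dig p σ g = ∑ i, ((f i : ℤ) - (g i : ℤ)) * (p : ℤ) ^ (σ i) := by
    rw [dig, dig, ← Finset.sum_sub_distrib]
    exact Finset.sum_congr rfl fun i _ => by ring
  have hs : (univ.filter (fun i => f i ≠ g i)).Nonempty := by
    obtain ⟨i, hi⟩ := Function.ne_iff.mp hfg
    exact ⟨i, by simp [hi]⟩
  obtain ⟨i₀, hi₀mem, hi₀min⟩ := Finset.exists_min_image _ σ hs
  have hi₀ : f i₀ ≠ g i₀ := (Finset.mem_filter.mp hi₀mem).2
  refine ⟨i₀, ?_, ?_⟩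
  · rw [hD]
    apply Finset.dvd_sum
    intro j _
    by_cases hj : f j = g j
    · simp [hj]
    · have : σ i₀ ≤ σ j := hi₀min j (by simp [hj])
      exact Dvd.dvd.mul_left (pow_dvd_pow _ this) _
  · intro hdvd
    have hR : (p : ℤ) ^ (σ i₀ + 1) ∣
        ∑ j ∈ univ.erase i₀, ((f j : ℤ) - (g j : ℤ)) * (p : ℤ) ^ (σ j) := by
      apply Finset.dvd_sum
      intro j hj
      have hji : j ≠ i₀ := (Finset.mem_erase.mp hj).1
      by_cases hfj : f j = g j
      · simp [hfj]
      · have h1 : σ i₀ ≤ σ j := hi₀min j (by simp [hfj])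
        have h2 : σ i₀ ≠ σ j := fun h => hji (hσ h.symm)
        exact Dvd.dvd.mul_left (pow_dvd_pow _ (by omega)) _
    have hsplit : dig p σ f - dig p σ g =
        ((f i₀ : ℤ) - (g i₀ : ℤ)) * (p : ℤ) ^ (σ i₀) +
        ∑ j ∈ univ.erase i₀, ((f j : ℤ) - (g j : ℤ)) * (p : ℤ) ^ (σ j) := by
      rw [hD, ← Finset.add_sum_erase _ _ (Finset.mem_univ i₀)]
    have hterm : (p : ℤ) ^ (σ i₀ + 1) ∣ ((f i₀ : ℤ) - (g i₀ : ℤ)) * (p : ℤ) ^ (σ i₀) := by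
      have := dvd_sub hdvd hR
      rw [hsplit] at this
      simpa using this
    have hpd : (p : ℤ) ∣ ((f i₀ : ℤ) - (g i₀ : ℤ)) := by
      have h0 : ((p : ℤ) ^ (σ i₀)) ≠ 0 := pow_ne_zero _ (by exact_mod_cast hp.out.pos.ne')
      have hterm' : (p : ℤ) ^ (σ i₀) * p ∣ (p : ℤ) ^ (σ i₀) * ((f i₀ : ℤ) - (g i₀ : ℤ)) := by
        rw [← pow_succ, mul_comm ((p : ℤ) ^ (σ i₀))]
        exact hterm
      exact (mul_dvd_mul_iff_left h0).mp hterm'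
    have habs : |(f i₀ : ℤ) - (g i₀ : ℤ)| < p := by
      have h1 : (f i₀ : ℤ) < p := by exact_mod_cast (f i₀).isLt
      have h2 : (g i₀ : ℤ) < p := by exact_mod_cast (g i₀).isLt
      have h3 : 0 ≤ (f i₀ : ℤ) := by positivity
      have h4 : 0 ≤ (g i₀ : ℤ) := by positivity
      rw [abs_lt]; omega
    have hz := Int.eq_zero_of_abs_lt_dvd hpd habs
    have hfg' : (f i₀ : ℤ) = (g i₀ : ℤ) := by omega
    exact hi₀ (Fin.ext (by exact_mod_cast hfg'))

/-- transfer exact p-power divisibility from an integer to the `val` of its image in `ZMod N`. -/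
lemma val_transfer (hN : N = p ^ n) (d : ℤ) (v : ℕ) (hv : v < n)
    (h1 : (p : ℤ) ^ v ∣ d) (h2 : ¬ (p : ℤ) ^ (v + 1) ∣ d) :
    (d : ZMod N) ≠ 0 ∧ p ^ v ∣ ((d : ZMod N)).val ∧ ¬ p ^ (v + 1) ∣ ((d : ZMod N)).val := by
  have hN0 : N ≠ 0 := by rw [hN]; exact pow_ne_zero _ hp.out.pos.ne'
  haveI : NeZero N := ⟨hN0⟩
  have hcast : ((((d : ZMod N)).val : ℤ) : ZMod N) = (d : ZMod N) := by
    push_cast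
    exact ZMod.natCast_rightInverse _
  have hdvdN : (N : ℤ) ∣ (((d : ZMod N)).val : ℤ) - d := by
    rw [← ZMod.intCast_zmod_eq_zero_iff_dvd, Int.cast_sub, hcast, sub_self]
  have hpN : (p : ℤ) ^ (v + 1) ∣ (N : ℤ) := by
    rw [hN]; push_cast; exact pow_dvd_pow _ (by omega)
  constructor
  · intro h0
    rw [h0, ZMod.val_zero] at hdvdN
    simp only [Int.ofNat_zero, Int.cast_zero, zero_sub, dvd_neg] at hdvdN
    exact h2 ((hpN.trans hdvdN))
  constructor
  · have : (p : ℤ) ^ v ∣ (((d : ZMod N)).val : ℤ) := by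
      have := dvd_add (dvd_trans (pow_dvd_pow _ (by omega : v ≤ v + 1)) (hpN.trans hdvdN)) h1
      simpa using this
    exact_mod_cast this
  · intro hcon
    apply h2
    have hcon' : (p : ℤ) ^ (v + 1) ∣ (((d : ZMod N)).val : ℤ) := by exact_mod_cast hcon
    have := dvd_sub hcon' (hpN.trans hdvdN)
    simpa using this

/-- exact p-adic valuation of a nonzero integer -/
lemma int_exact (d : ℤ) (hd : d ≠ 0) :
    (p : ℤ) ^ (d.natAbs.factorization p) ∣ d ∧
    ¬ (p : ℤ) ^ (d.natAbs.factorization p + 1) ∣ d := by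
  have hna : d.natAbs ≠ 0 := Int.natAbs_ne_zero.mpr hd
  constructor
  · have h := Nat.ordProj_dvd d.natAbs p
    have h2 : ((p : ℤ)) ^ (d.natAbs.factorization p) ∣ (d.natAbs : ℤ) := by exact_mod_cast h
    exact h2.trans (Int.natAbs_dvd.mpr dvd_rfl)
  · intro hcon
    have h2 : ((p : ℤ)) ^ (d.natAbs.factorization p + 1) ∣ (d.natAbs : ℤ) :=
      Int.dvd_natAbs.mpr hcon
    have h3 : p ^ (d.natAbs.factorization p + 1) ∣ d.natAbs := by exact_mod_cast h2
    exact Nat.pow_succ_factorization_not_dvd hna hp.out h3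

lemma ultra (p : ℕ) (hp2 : 2 ≤ p) (V : Finset ℕ) :
    ∀ (Λ : Finset ℤ), (∀ x ∈ Λ, ∀ y ∈ Λ, x ≠ y →
      ∃ v ∈ V, (p : ℤ) ^ v ∣ (x - y) ∧ ¬ (p : ℤ) ^ (v + 1) ∣ (x - y)) →
    Λ.card ≤ p ^ V.card := by
  induction V using Finset.strongInduction with
  | _ V ih =>
    intro Λ hΛ
    by_cases hcard : Λ.card ≤ 1
    · exact hcard.trans (Nat.one_le_pow _ _ (by omega))
    push_neg at hcard
    obtain ⟨x₁, hx₁, y₁, hy₁, hxy₁⟩ := Finset.one_lt_card.mp hcard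
    have hV : V.Nonempty := by
      obtain ⟨v, hv, -, -⟩ := hΛ x₁ hx₁ y₁ hy₁ hxy₁
      exact ⟨v, hv⟩
    set v₀ := V.min' hV with hv₀def
    have hv₀ : v₀ ∈ V := V.min'_mem hV
    set M : ℤ := (p : ℤ) ^ (v₀ + 1) with hMdef
    have hppos : (0 : ℤ) < p := by exact_mod_cast (by omega : 0 < p)
    have hMpos : (0 : ℤ) < M := pow_pos hppos _
    have hq : (0 : ℤ) < (p : ℤ) ^ v₀ := pow_pos hppos _
    have hdvd0 : ∀ x ∈ Λ, ∀ y ∈ Λ, (p : ℤ) ^ v₀ ∣ (x - y) := by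
      intro x hx y hy
      by_cases h : x = y
      · simp [h]
      · obtain ⟨v, hv, h1, -⟩ := hΛ x hx y hy h
        exact (pow_dvd_pow _ (V.min'_le v hv)).trans h1
    have fibers : ∀ b ∈ Λ.image (fun x : ℤ => x % M),
        (Λ.filter (fun a => a % M = b)).card ≤ p ^ ((V.erase v₀).card) := by
      intro b _
      apply ih (V.erase v₀) (Finset.erase_ssubset hv₀)
      intro x hx y hy hxy
      obtain ⟨hxΛ, hxb⟩ := Finset.mem_filter.mp hx
      obtain ⟨hyΛ, hyb⟩ := Finset.mem_filter.mp hy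
      obtain ⟨v, hv, h1, h2⟩ := hΛ x hxΛ y hyΛ hxy
      have hmod : Int.ModEq M y x := by
        unfold Int.ModEq
        rw [hxb, hyb]
      have hMd : M ∣ x - y := Int.ModEq.dvd hmod
      have hvne : v ≠ v₀ := by
        intro h
        rw [h] at h2
        exact h2 hMd
      exact ⟨v, Finset.mem_erase.mpr ⟨hvne, hv⟩, h1, h2⟩
    have himg : (Λ.image (fun x : ℤ => x % M)).card ≤ p := by
      set r₀ := x₁ % (p : ℤ) ^ v₀ with hr₀
      have hmemb : ∀ b ∈ Λ.image (fun x : ℤ => x % M),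
          0 ≤ b ∧ b < M ∧ b % (p : ℤ) ^ v₀ = r₀ := by
        intro b hb
        obtain ⟨x, hxΛ, rfl⟩ := Finset.mem_image.mp hb
        refine ⟨Int.emod_nonneg x hMpos.ne', Int.emod_lt_of_pos x hMpos, ?_⟩
        have h1 : (p : ℤ) ^ v₀ ∣ M := pow_dvd_pow _ (Nat.le_succ _)
        rw [Int.emod_emod_of_dvd x h1]
        exact Int.modEq_iff_dvd.mpr (hdvd0 x₁ hx₁ x hxΛ)
      have hinj : Set.InjOn (fun b : ℤ => b / (p : ℤ) ^ v₀)
          (Λ.image (fun x : ℤ => x % M)) := by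
        intro b hb b' hb' heq
        obtain ⟨hb0, hbM, hbr⟩ := hmemb b hb
        obtain ⟨hb0', hbM', hbr'⟩ := hmemb b' hb'
        have e1 : b / (p : ℤ) ^ v₀ * (p : ℤ) ^ v₀ + b % (p : ℤ) ^ v₀ = b :=
          Int.ediv_mul_add_emod b _
        have e2 : b' / (p : ℤ) ^ v₀ * (p : ℤ) ^ v₀ + b' % (p : ℤ) ^ v₀ = b' :=
          Int.ediv_mul_add_emod b' _
        simp only at heq
        rw [← e1, ← e2, heq, hbr, hbr']
      have hmaps : ∀ b ∈ Λ.image (fun x : ℤ => x % M),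
          b / (p : ℤ) ^ v₀ ∈ Finset.Ico (0 : ℤ) p := by
        intro b hb
        obtain ⟨hb0, hbM, -⟩ := hmemb b hb
        rw [Finset.mem_Ico]
        constructor
        · exact Int.ediv_nonneg hb0 hq.le
        · rw [Int.ediv_lt_iff_lt_mul hq]
          calc b < M := hbM
            _ = (p : ℤ) * (p : ℤ) ^ v₀ := by rw [hMdef, pow_succ]; ring
            _ = _ := by ring
      calc (Λ.image (fun x : ℤ => x % M)).card ≤ (Finset.Ico (0 : ℤ) (p : ℤ)).card :=
            Finset.card_le_card_of_injOn _ hmaps hinj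
        _ = p := by rw [Int.card_Ico]; simp
    calc Λ.card ≤ p ^ ((V.erase v₀).card) * (Λ.image (fun x : ℤ => x % M)).card :=
          Finset.card_le_mul_card_image _ _ fibers
      _ ≤ p ^ ((V.erase v₀).card) * p := Nat.mul_le_mul_left _ himg
      _ = p ^ ((V.erase v₀).card + 1) := by rw [pow_succ]
      _ = p ^ V.card := by
          rw [Finset.card_erase_of_mem hv₀]
          congr 1
          have := Finset.card_pos.mpr hV
          omega

variable {p n k N : ℕ} [hp : Fact p.Prime]

def digN (p : ℕ) {k : ℕ} (σ : Fin k → ℕ) (f : Fin k → Fin p) : ℕ :=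
  ∑ i, (f i : ℕ) * p ^ (σ i)

lemma digN_cast (σ : Fin k → ℕ) (f : Fin k → Fin p) :
    ((digN p σ f : ℤ)) = dig p σ f := by
  rw [digN, dig]
  push_cast
  rfl

lemma pow_val_natCast [NeZero N] (w : ℂ) (hw : w ^ N = 1) (m : ℕ) :
    w ^ ((m : ZMod N)).val = w ^ m := by
  rw [ZMod.val_natCast]
  conv_rhs => rw [← Nat.div_add_mod m N]
  rw [pow_add, pow_mul, hw, one_pow, one_mul]

lemma geom_fin (w : ℂ) (hw1 : w ≠ 1) (hwp : w ^ p = 1) :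
    ∑ d : Fin p, w ^ (d : ℕ) = 0 := by
  rw [Fin.sum_univ_eq_sum_range (fun i => w ^ i), geom_sum_eq hw1, hwp, sub_self, zero_div]

/-- The digit set associated to a set of digit positions `E ⊆ [0, n)`. -/
lemma digit_set (hN : N = p ^ n) (E : Finset ℕ) (hE : ∀ e ∈ E, e < n) :
    ∃ Θ : Finset (ZMod N), Θ.card = p ^ E.card ∧
      (∀ x ∈ Θ, ∀ y ∈ Θ, x ≠ y → ∃ v ∈ E,
        p ^ v ∣ (x - y).val ∧ ¬ p ^ (v + 1) ∣ (x - y).val) ∧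
      (∀ μ : ℂ, μ ^ N = 1 → (∃ e ∈ E, μ ^ (p ^ e) ≠ 1 ∧ (μ ^ (p ^ e)) ^ p = 1) →
        ∑ t ∈ Θ, μ ^ t.val = 0) := by
  have hN0 : N ≠ 0 := by rw [hN]; exact pow_ne_zero _ hp.out.pos.ne'
  haveI : NeZero N := ⟨hN0⟩
  set k := E.card with hk
  set σ : Fin k → ℕ := fun i => ((E.orderIsoOfFin rfl) i : ℕ) with hσdef
  have hσinj : Function.Injective σ := fun i j h => by
    apply (E.orderIsoOfFin rfl).injective
    exact Subtype.ext h
  have hσmem : ∀ i, σ i ∈ E := fun i => ((E.orderIsoOfFin rfl) i).2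
  have hσlt : ∀ i, σ i < n := fun i => hE _ (hσmem i)
  have hσsurj : ∀ e ∈ E, ∃ i, σ i = e := by
    intro e he
    obtain ⟨i, hi⟩ := (E.orderIsoOfFin rfl).surjective ⟨e, he⟩
    exact ⟨i, by rw [hσdef]; simp [hi]⟩
  set F : (Fin k → Fin p) → ZMod N := fun f => ((digN p σ f : ℕ) : ZMod N) with hF
  -- injectivity
  have hFinj : Function.Injective F := by
    intro f g hfg'
    by_contra hne
    obtain ⟨i, -, h2⟩ := dig_sub_exact hσinj hne
    apply h2
    have hcast : (((digN p σ f : ℤ) - (digN p σ g : ℤ) : ℤ) : ZMod N) = 0 := by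
      push_cast
      rw [hF] at hfg'
      simp only at hfg'
      push_cast at hfg'
      rw [hfg', sub_self]
    have hdvd := (ZMod.intCast_zmod_eq_zero_iff_dvd _ N).mp hcast
    rw [digN_cast, digN_cast] at hdvd
    refine dvd_trans ?_ hdvd
    rw [hN]
    push_cast
    exact pow_dvd_pow _ (by have := hσlt i; omega)
  refine ⟨Finset.univ.image F, ?_, ?_, ?_⟩
  · rw [Finset.card_image_of_injective _ hFinj, Finset.card_univ]
    simp [hk]
  · intro x hx y hy hxy
    obtain ⟨f, -, rfl⟩ := Finset.mem_image.mp hx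
    obtain ⟨g, -, rfl⟩ := Finset.mem_image.mp hy
    have hfg : f ≠ g := fun h => hxy (by rw [h])
    obtain ⟨i, h1, h2⟩ := dig_sub_exact hσinj hfg
    have hd : F f - F g = (((dig p σ f - dig p σ g : ℤ)) : ZMod N) := by
      rw [hF]
      push_cast [← digN_cast]
      ring
    have := val_transfer (p := p) (n := n) hN (dig p σ f - dig p σ g) (σ i) (hσlt i) h1 h2
    exact ⟨σ i, hσmem i, by rw [hd]; exact this.2.1, by rw [hd]; exact this.2.2⟩
  · rintro μ hμN ⟨e, he, hμe1, hμep⟩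
    rw [Finset.sum_image (fun a _ b _ h => hFinj h)]
    have hμ0 : μ ≠ 0 := by
      intro h
      rw [h] at hμN
      simp [zero_pow hN0] at hμN
    have hterm : ∀ f : Fin k → Fin p, μ ^ (F f).val = ∏ i, (μ ^ (p ^ σ i)) ^ (f i : ℕ) := by
      intro f
      rw [hF]
      simp only
      rw [pow_val_natCast μ hμN, digN, ← Finset.prod_pow_eq_pow_sum]
      refine Finset.prod_congr rfl fun i _ => ?_
      rw [← pow_mul, mul_comm]
    simp only [hterm]
    have hswap := Finset.prod_univ_sum (fun _ : Fin k => (Finset.univ : Finset (Fin p)))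
      (fun i d => (μ ^ (p ^ σ i)) ^ (d : ℕ))
    rw [Fintype.piFinset_univ] at hswap
    rw [← hswap]
    obtain ⟨i₀, hi₀⟩ := hσsurj e he
    apply Finset.prod_eq_zero (Finset.mem_univ i₀)
    rw [hi₀]
    exact geom_fin _ hμe1 hμep

variable {p n k N : ℕ} [hp : Fact p.Prime]

lemma val_cast [NeZero N] (x : ZMod N) : ((x.val : ℕ) : ZMod N) = x :=
  ZMod.natCast_rightInverse x

lemma exists_spectrum (hN : N = p ^ n) (C : Finset (ZMod N)) (S : Finset ℕ)
    (hS : S ⊆ Finset.Icc 1 n) (hcard : C.card = p ^ S.card)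
    (hdvd : ∀ j ∈ S, cyclotomic (p ^ j) ℤ ∣ P N C) :
    ∃ Λ : Finset (ZMod N), Λ.card = C.card ∧
      ∀ l ∈ Λ, ∀ l' ∈ Λ, l ≠ l' → ∑ c ∈ C, zeta N ^ (c.val * (l - l').val) = 0 := by
  set E := S.image (fun j => n - j) with hE
  have hjbd : ∀ j ∈ S, 1 ≤ j ∧ j ≤ n := fun j hj => Finset.mem_Icc.mp (hS hj)
  have hEsub : ∀ e ∈ E, e < n := by
    intro e he
    obtain ⟨j, hj, rfl⟩ := Finset.mem_image.mp he
    have := hjbd j hj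
    omega
  have hEcard : E.card = S.card := by
    rw [hE]
    apply Finset.card_image_of_injOn
    intro i hi j hj h
    simp only at h
    have h1 := hjbd i hi
    have h2 := hjbd j hj
    omega
  obtain ⟨Θ, hΘcard, hΘdiff, -⟩ := digit_set hN E hEsub
  refine ⟨Θ, by rw [hΘcard, hEcard, hcard], ?_⟩
  intro l hl l' hl' hll
  obtain ⟨v, hvE, h1, h2⟩ := hΘdiff l hl l' hl' hll
  obtain ⟨j, hjS, rfl⟩ := Finset.mem_image.mp hvE
  have hj := hjbd j hjS
  have hvlt : n - j < n := by omega
  rw [vanish_iff hN C (l - l') (n - j) hvlt h1 h2]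
  have hnj : n - (n - j) = j := by omega
  rw [hnj]
  exact hdvd j hjS

lemma spectral_analysis (hN : N = p ^ n) (C : Finset (ZMod N)) (hC : C.Nonempty)
    (Λ : Finset (ZMod N)) (hΛcard : Λ.card = C.card)
    (horth : ∀ l ∈ Λ, ∀ l' ∈ Λ, l ≠ l' →
      ∑ c ∈ C, zeta N ^ (c.val * (l - l').val) = 0) :
    ∃ S : Finset ℕ, S ⊆ Finset.Icc 1 n ∧ C.card = p ^ S.card ∧
      ∀ j ∈ S, cyclotomic (p ^ j) ℤ ∣ P N C := by
  classical
  have hN0 : N ≠ 0 := by rw [hN]; exact pow_ne_zero _ hp.out.pos.ne'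
  haveI : NeZero N := ⟨hN0⟩
  set S := (Finset.Icc 1 n).filter (fun j => cyclotomic (p ^ j) ℤ ∣ P N C) with hSdef
  refine ⟨S, Finset.filter_subset _ _, ?_, fun j hj => (Finset.mem_filter.mp hj).2⟩
  have hlow : p ^ S.card ≤ C.card := by
    have hdvd := pow_card_dvd_card hN C S
      (fun j hj => (Finset.mem_Icc.mp (Finset.mem_filter.mp hj).1).1)
      (fun j hj => (Finset.mem_filter.mp hj).2)
    have h2 : p ^ S.card ∣ C.card := by exact_mod_cast hdvd
    exact Nat.le_of_dvd (Finset.card_pos.mpr hC) h2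
  set V := S.image (fun j => n - j) with hV
  set Λ' := Λ.image (fun l : ZMod N => ((l.val : ℕ) : ℤ)) with hΛ'
  have hvalinj : Function.Injective (fun l : ZMod N => ((l.val : ℕ) : ℤ)) := by
    intro x y h
    simp only [Nat.cast_inj] at h
    have := congrArg (fun m : ℕ => ((m : ℕ) : ZMod N)) h
    simpa [val_cast] using this
  have hΛ'card : Λ'.card = Λ.card := Finset.card_image_of_injective _ hvalinj
  have hcond : ∀ x ∈ Λ', ∀ y ∈ Λ', x ≠ y →
      ∃ v ∈ V, (p : ℤ) ^ v ∣ (x - y) ∧ ¬ (p : ℤ) ^ (v + 1) ∣ (x - y) := by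
    intro x hx y hy hxy
    obtain ⟨l, hl, rfl⟩ := Finset.mem_image.mp hx
    obtain ⟨l', hl', rfl⟩ := Finset.mem_image.mp hy
    have hll : l ≠ l' := fun h => hxy (by rw [h])
    set d : ℤ := ((l.val : ℕ) : ℤ) - ((l'.val : ℕ) : ℤ) with hd
    have hd0 : d ≠ 0 := sub_ne_zero.mpr hxy
    set v := d.natAbs.factorization p with hv'
    obtain ⟨h1, h2⟩ := int_exact (p := p) d hd0
    have hvn : v < n := by
      have hna0 : d.natAbs ≠ 0 := Int.natAbs_ne_zero.mpr hd0
      have hnd : p ^ v ∣ d.natAbs := Nat.ordProj_dvd _ _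
      have hled : p ^ v ≤ d.natAbs := Nat.le_of_dvd (Nat.pos_of_ne_zero hna0) hnd
      have hb1 : l.val < N := ZMod.val_lt l
      have hb2 : l'.val < N := ZMod.val_lt l'
      have hb1' : ((l.val : ℕ) : ℤ) < (N : ℤ) := by exact_mod_cast hb1
      have hb2' : ((l'.val : ℕ) : ℤ) < (N : ℤ) := by exact_mod_cast hb2
      have hnn1 : (0 : ℤ) ≤ ((l.val : ℕ) : ℤ) := Int.natCast_nonneg _
      have hnn2 : (0 : ℤ) ≤ ((l'.val : ℕ) : ℤ) := Int.natCast_nonneg _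
      have h3 : |d| < (N : ℤ) := by
        rw [hd, abs_sub_lt_iff]
        constructor <;> linarith
      have h4 : ((d.natAbs : ℕ) : ℤ) < (N : ℤ) := by
        rw [Int.natCast_natAbs]; exact h3
      have habs : d.natAbs < N := by exact_mod_cast h4
      have hlt : p ^ v < N := lt_of_le_of_lt hled habs
      have hlt2 : p ^ v < p ^ n := hN ▸ hlt
      exact (Nat.pow_lt_pow_iff_right hp.out.one_lt).mp hlt2
    have htrans := val_transfer (p := p) (n := n) hN d v hvn h1 h2
    have hdiffeq : ((d : ℤ) : ZMod N) = l - l' := by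
      rw [hd]
      push_cast
      rw [val_cast, val_cast]
    rw [hdiffeq] at htrans
    have hsum := horth l hl l' hl' hll
    have hjdvd := (vanish_iff hN C (l - l') v hvn htrans.2.1 htrans.2.2).mp hsum
    have hjmem : (n - v) ∈ S := Finset.mem_filter.mpr
      ⟨Finset.mem_Icc.mpr ⟨by omega, by omega⟩, hjdvd⟩
    exact ⟨v, Finset.mem_image.mpr ⟨n - v, hjmem, by omega⟩, h1, h2⟩
  have hup := ultra p hp.out.two_le V Λ' hcond
  have hle : C.card ≤ p ^ S.card := by
    calc C.card = Λ'.card := by rw [hΛ'card, hΛcard]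
      _ ≤ p ^ V.card := hup
      _ ≤ p ^ S.card := Nat.pow_le_pow_right hp.out.pos Finset.card_image_le
  exact le_antisymm hle hlow

variable {p n k N : ℕ} [hp : Fact p.Prime]

lemma zeta_pow_pow_eq [NeZero N] {m m' : ℕ} (h : ((m : ℕ) : ZMod N) = ((m' : ℕ) : ZMod N)) :
    zeta N ^ m = zeta N ^ m' := by
  have hN0 : N ≠ 0 := NeZero.ne N
  rw [zeta_pow_mod hN0 m, zeta_pow_mod hN0 m', h]

/-- character sum over the whole group -/
lemma sum_all [NeZero N] (d : ZMod N) :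
    ∑ a : ZMod N, zeta N ^ ((d * a).val) = if d = 0 then (N : ℂ) else 0 := by
  have hN0 : N ≠ 0 := NeZero.ne N
  have hterm : ∀ a : ZMod N, zeta N ^ ((d * a).val) = (zeta N ^ d.val) ^ a.val := by
    intro a
    rw [← pow_mul]
    apply zeta_pow_pow_eq
    push_cast [val_cast]
    rfl
  simp only [hterm]
  have hw : (zeta N ^ d.val) ^ N = 1 := by
    rw [← pow_mul, mul_comm, pow_mul, zeta_pow_N hN0, one_pow]
  rw [sum_pow_val (zeta N ^ d.val) hw]
  congr 1
  simp only [eq_iff_iff]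
  constructor
  · intro h
    have := ((zeta_prim hN0).pow_eq_one_iff_dvd d.val).mp h
    have hv := ZMod.val_lt d
    have h0 : d.val = 0 := Nat.eq_zero_of_dvd_of_lt this hv
    exact (ZMod.val_eq_zero d).mp h0
  · intro h
    rw [h, ZMod.val_zero, pow_zero]

lemma conv_sum [NeZero N] (C T : Finset (ZMod N)) (a : ZMod N) :
    (∑ c ∈ C, zeta N ^ (c.val * a.val)) * (∑ t ∈ T, zeta N ^ (t.val * a.val)) =
    ∑ x : ZMod N,
      ((((C ×ˢ T).filter (fun ct => ct.1 + ct.2 = x)).card : ℂ)) * zeta N ^ (x.val * a.val) := by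
  have hN0 : N ≠ 0 := NeZero.ne N
  rw [Finset.sum_mul_sum]
  have hterm : ∀ c t : ZMod N,
      zeta N ^ (c.val * a.val) * zeta N ^ (t.val * a.val) =
      zeta N ^ ((c + t).val * a.val) := by
    intro c t
    rw [← pow_add]
    apply zeta_pow_pow_eq
    push_cast [val_cast]
    ring
  have h1 : ∑ c ∈ C, ∑ t ∈ T, zeta N ^ (c.val * a.val) * zeta N ^ (t.val * a.val)
      = ∑ ct ∈ C ×ˢ T, zeta N ^ ((ct.1 + ct.2).val * a.val) := by
    rw [Finset.sum_product]
    exact Finset.sum_congr rfl fun c _ => Finset.sum_congr rfl fun t _ => hterm c t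
  rw [h1]
  refine Eq.trans (Finset.sum_fiberwise_of_maps_to'
    (fun ct (_ : ct ∈ C ×ˢ T) => Finset.mem_univ (ct.1 + ct.2))
    (fun x : ZMod N => zeta N ^ (x.val * a.val))).symm ?_
  refine Finset.sum_congr rfl fun x _ => ?_
  rw [Finset.sum_const, nsmul_eq_mul]

variable {p n k N : ℕ} [hp : Fact p.Prime]

lemma exists_tile (hN : N = p ^ n) (C : Finset (ZMod N)) (S : Finset ℕ)
    (hS : S ⊆ Finset.Icc 1 n) (hcard : C.card = p ^ S.card)
    (hdvd : ∀ j ∈ S, cyclotomic (p ^ j) ℤ ∣ P N C) :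
    ∃ T : Finset (ZMod N), ∀ x : ZMod N,
      ∃! ct : ZMod N × ZMod N, ct.1 ∈ C ∧ ct.2 ∈ T ∧ ct.1 + ct.2 = x := by
  have hN0 : N ≠ 0 := by rw [hN]; exact pow_ne_zero _ hp.out.pos.ne'
  haveI : NeZero N := ⟨hN0⟩
  have hScard : S.card ≤ n := by
    have := Finset.card_le_card hS
    simpa using this
  set E := ((Finset.Icc 1 n) \ S).image (fun j => j - 1) with hE
  have hjbd : ∀ j ∈ Finset.Icc 1 n \ S, 1 ≤ j ∧ j ≤ n := fun j hj =>
    Finset.mem_Icc.mp (Finset.mem_sdiff.mp hj).1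
  have hEsub : ∀ e ∈ E, e < n := by
    intro e he
    obtain ⟨j, hj, rfl⟩ := Finset.mem_image.mp he
    have := hjbd j hj
    omega
  have hEcard : E.card = n - S.card := by
    rw [hE, Finset.card_image_of_injOn, Finset.card_sdiff_of_subset hS, Nat.card_Icc]
    · omega
    · intro i hi j hj h
      simp only at h
      have h1 := hjbd i hi
      have h2 := hjbd j hj
      omega
  obtain ⟨Θ, hΘcard, -, hΘvan⟩ := digit_set hN E hEsub
  have hzero : ∀ a : ZMod N, a ≠ 0 →
      (∑ c ∈ C, zeta N ^ (c.val * a.val)) * (∑ t ∈ Θ, zeta N ^ (t.val * a.val)) = 0 := by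
    intro a ha
    set v := a.val.factorization p with hv
    have hval0 : a.val ≠ 0 := fun h => ha ((ZMod.val_eq_zero a).mp h)
    have h1 : p ^ v ∣ a.val := Nat.ordProj_dvd _ _
    have h2 : ¬ p ^ (v + 1) ∣ a.val := Nat.pow_succ_factorization_not_dvd hval0 hp.out
    have hvn : v < n := by
      have hled : p ^ v ≤ a.val := Nat.le_of_dvd (Nat.pos_of_ne_zero hval0) h1
      have hva : a.val < N := ZMod.val_lt a
      have hlt2 : p ^ v < p ^ n := hN ▸ lt_of_le_of_lt hled hva
      exact (Nat.pow_lt_pow_iff_right hp.out.one_lt).mp hlt2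
    by_cases hjS : (n - v) ∈ S
    · exact mul_eq_zero_of_left ((vanish_iff hN C a v hvn h1 h2).mpr (hdvd _ hjS)) _
    · apply mul_eq_zero_of_right
      have hterm : ∀ t : ZMod N, zeta N ^ (t.val * a.val) = (zeta N ^ a.val) ^ t.val := by
        intro t
        rw [← pow_mul, mul_comm]
      simp only [hterm]
      have hμprim : IsPrimitiveRoot (zeta N ^ a.val) (p ^ (n - v)) := mu_prim hN a v hvn h1 h2
      have hw : IsPrimitiveRoot ((zeta N ^ a.val) ^ (p ^ (n - v - 1))) p := by
        apply hμprim.pow (pow_pos hp.out.pos _)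
        rw [← pow_succ]
        congr 1
        omega
      apply hΘvan (zeta N ^ a.val)
      · rw [← pow_mul, mul_comm, pow_mul, zeta_pow_N hN0, one_pow]
      · exact ⟨n - v - 1,
          Finset.mem_image.mpr ⟨n - v,
            Finset.mem_sdiff.mpr ⟨Finset.mem_Icc.mpr ⟨by omega, by omega⟩, hjS⟩, rfl⟩,
          hw.ne_one hp.out.one_lt, hw.pow_eq_one⟩
  set r : ZMod N → ℕ := fun x => (((C ×ˢ Θ).filter (fun ct => ct.1 + ct.2 = x)).card) with hr
  have hrsum : ∑ x : ZMod N, r x = N := by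
    have h1 : (C ×ˢ Θ).card = ∑ x : ZMod N, r x :=
      Finset.card_eq_sum_card_fiberwise (fun ct _ => Finset.mem_univ (ct.1 + ct.2))
    rw [← h1, Finset.card_product, hcard, hΘcard, hEcard, ← pow_add, hN]
    congr 1
    omega
  have hone : ∀ y : ZMod N, r y = 1 := by
    have key : ∀ a : ZMod N,
        ∑ x : ZMod N, (((r x : ℂ)) - 1) * zeta N ^ (x.val * a.val) = 0 := by
      intro a
      have hsplit : ∑ x : ZMod N, (((r x : ℂ)) - 1) * zeta N ^ (x.val * a.val)
          = (∑ x : ZMod N, ((r x : ℂ)) * zeta N ^ (x.val * a.val))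
            - ∑ x : ZMod N, zeta N ^ (x.val * a.val) := by
        rw [← Finset.sum_sub_distrib]
        exact Finset.sum_congr rfl fun x _ => by ring
      rw [hsplit]
      by_cases ha : a = 0
      · subst ha
        simp only [ZMod.val_zero, Nat.mul_zero, pow_zero, mul_one]
        rw [sub_eq_zero]
        have hc1 : ∑ x : ZMod N, ((r x : ℂ)) = ((∑ x : ZMod N, r x : ℕ) : ℂ) := by
          push_cast
          rfl
        rw [hc1, hrsum]
        rw [Finset.sum_const, Finset.card_univ, ZMod.card, nsmul_eq_mul, mul_one]
      · have hfirst : ∑ x : ZMod N, ((r x : ℂ)) * zeta N ^ (x.val * a.val) = 0 := by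
          rw [hr]
          simp only
          rw [← conv_sum C Θ a]
          exact hzero a ha
        have hsecond : ∑ x : ZMod N, zeta N ^ (x.val * a.val) = 0 := by
          have hconv : ∀ x : ZMod N, zeta N ^ (x.val * a.val) = zeta N ^ ((a * x).val) := by
            intro x
            apply zeta_pow_pow_eq
            push_cast [val_cast]
            ring
          simp only [hconv]
          rw [sum_all a, if_neg ha]
        rw [hfirst, hsecond, sub_zero]
    intro y
    have hexp : ∀ x a : ZMod N,
        zeta N ^ (x.val * a.val) * zeta N ^ (((-y) * a).val) =
        zeta N ^ (((x - y) * a).val) := by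
      intro x a
      rw [← pow_add]
      apply zeta_pow_pow_eq
      push_cast [val_cast]
      ring
    have e2 : ∑ a : ZMod N, ∑ x : ZMod N,
        (((r x : ℂ)) - 1) * zeta N ^ (((x - y) * a).val) = 0 := by
      rw [Finset.sum_eq_zero]
      intro a _
      have e1 : ∑ x : ZMod N, (((r x : ℂ)) - 1) * zeta N ^ (((x - y) * a).val)
          = (∑ x : ZMod N, (((r x : ℂ)) - 1) * zeta N ^ (x.val * a.val)) *
            zeta N ^ (((-y) * a).val) := by
        rw [Finset.sum_mul]
        refine Finset.sum_congr rfl fun x _ => ?_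
        rw [mul_assoc, hexp]
      rw [e1, key a, zero_mul]
    have e3 : (((r y : ℂ)) - 1) * N = 0 := by
      calc (((r y : ℂ)) - 1) * N
          = ∑ x : ZMod N, (((r x : ℂ)) - 1) * (if x - y = 0 then (N : ℂ) else 0) := by
            rw [Finset.sum_eq_single_of_mem y (Finset.mem_univ y)]
            · rw [sub_self, if_pos rfl]
            · intro x _ hxy
              rw [if_neg (sub_ne_zero.mpr hxy), mul_zero]
        _ = ∑ x : ZMod N, ∑ a : ZMod N,
              (((r x : ℂ)) - 1) * zeta N ^ (((x - y) * a).val) := by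
            refine Finset.sum_congr rfl fun x _ => ?_
            rw [← Finset.mul_sum, sum_all (x - y)]
        _ = ∑ a : ZMod N, ∑ x : ZMod N,
              (((r x : ℂ)) - 1) * zeta N ^ (((x - y) * a).val) := Finset.sum_comm
        _ = 0 := e2
    have hNne : ((N : ℕ) : ℂ) ≠ 0 := Nat.cast_ne_zero.mpr hN0
    have : ((r y : ℂ)) - 1 = 0 := by
      rcases mul_eq_zero.mp e3 with h | h
      · exact h
      · exact absurd h hNne
    have hry : ((r y : ℂ)) = ((1 : ℕ) : ℂ) := by
      rw [Nat.cast_one]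
      exact sub_eq_zero.mp this
    exact Nat.cast_injective hry
  refine ⟨Θ, fun x => ?_⟩
  have h1 := hone x
  rw [hr] at h1
  simp only at h1
  obtain ⟨ct₀, hct₀⟩ := Finset.card_eq_one.mp h1
  have hmem : ct₀ ∈ (C ×ˢ Θ).filter (fun ct => ct.1 + ct.2 = x) := by
    rw [hct₀]
    exact Finset.mem_singleton_self ct₀
  obtain ⟨hprod, hsum⟩ := Finset.mem_filter.mp hmem
  obtain ⟨hc₀, ht₀⟩ := Finset.mem_product.mp hprod
  refine ⟨ct₀, ⟨hc₀, ht₀, hsum⟩, ?_⟩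
  rintro ct ⟨hc, ht, hs⟩
  have hctmem : ct ∈ (C ×ˢ Θ).filter (fun ct => ct.1 + ct.2 = x) :=
    Finset.mem_filter.mpr ⟨Finset.mem_product.mpr ⟨hc, ht⟩, hs⟩
  rw [hct₀] at hctmem
  exact Finset.mem_singleton.mp hctmem

variable {p n k N : ℕ} [hp : Fact p.Prime]

lemma tiling_analysis (hN : N = p ^ n) (C : Finset (ZMod N)) (hC : C.Nonempty)
    (T : Set (ZMod N))
    (htile : ∀ x : ZMod N, ∃! ct : ZMod N × ZMod N, ct.1 ∈ C ∧ ct.2 ∈ T ∧ ct.1 + ct.2 = x) :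
    ∃ S : Finset ℕ, S ⊆ Finset.Icc 1 n ∧ C.card = p ^ S.card ∧
      ∀ j ∈ S, cyclotomic (p ^ j) ℤ ∣ P N C := by
  classical
  have hN0 : N ≠ 0 := by rw [hN]; exact pow_ne_zero _ hp.out.pos.ne'
  haveI : NeZero N := ⟨hN0⟩
  set T₀ : Finset (ZMod N) := (Set.toFinite T).toFinset with hT₀def
  have hT₀mem : ∀ z, z ∈ T₀ ↔ z ∈ T := fun z => Set.Finite.mem_toFinset _
  have hfib : ∀ x : ZMod N, ((C ×ˢ T₀).filter (fun ct => ct.1 + ct.2 = x)).card = 1 := by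
    intro x
    obtain ⟨ct₀, ⟨hc, ht, hs⟩, huniq⟩ := htile x
    rw [Finset.card_eq_one]
    refine ⟨ct₀, Finset.eq_singleton_iff_unique_mem.mpr ⟨?_, ?_⟩⟩
    · exact Finset.mem_filter.mpr ⟨Finset.mem_product.mpr ⟨hc, (hT₀mem _).mpr ht⟩, hs⟩
    · intro ct hct
      obtain ⟨hprod, hsum⟩ := Finset.mem_filter.mp hct
      obtain ⟨h1, h2⟩ := Finset.mem_product.mp hprod
      exact huniq ct ⟨h1, (hT₀mem _).mp h2, hsum⟩
  have hcardprod : C.card * T₀.card = N := by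
    rw [← Finset.card_product,
      Finset.card_eq_sum_card_fiberwise (fun ct (_ : ct ∈ C ×ˢ T₀) =>
        Finset.mem_univ (ct.1 + ct.2))]
    simp only [hfib]
    rw [Finset.sum_const, Finset.card_univ, ZMod.card, smul_eq_mul, mul_one]
  have hchar : ∀ a : ZMod N, a ≠ 0 →
      (∑ c ∈ C, zeta N ^ (c.val * a.val)) * (∑ t ∈ T₀, zeta N ^ (t.val * a.val)) = 0 := by
    intro a ha
    rw [conv_sum C T₀ a]
    have hone : ∀ x : ZMod N,
        (((C ×ˢ T₀).filter (fun ct => ct.1 + ct.2 = x)).card : ℂ) = 1 := fun x => by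
      rw [hfib x, Nat.cast_one]
    simp only [hone, one_mul]
    have hconv : ∀ x : ZMod N, zeta N ^ (x.val * a.val) = zeta N ^ ((a * x).val) := by
      intro x
      apply zeta_pow_pow_eq
      push_cast [val_cast]
      ring
    simp only [hconv]
    rw [sum_all a, if_neg ha]
  have hdichot : ∀ j ∈ Finset.Icc 1 n,
      cyclotomic (p ^ j) ℤ ∣ P N C ∨ cyclotomic (p ^ j) ℤ ∣ P N T₀ := by
    intro j hj
    obtain ⟨hj1, hjn⟩ := Finset.mem_Icc.mp hj
    set a : ZMod N := ((p ^ (n - j) : ℕ) : ZMod N) with ha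
    have hlt : p ^ (n - j) < N := by
      rw [hN]
      exact Nat.pow_lt_pow_right hp.out.one_lt (by omega)
    have hval : a.val = p ^ (n - j) := ZMod.val_cast_of_lt hlt
    have ha0 : a ≠ 0 := by
      intro h
      rw [h, ZMod.val_zero] at hval
      exact (pow_ne_zero _ hp.out.pos.ne') hval.symm
    have h1 : p ^ (n - j) ∣ a.val := by rw [hval]
    have h2 : ¬ p ^ (n - j + 1) ∣ a.val := by
      rw [hval]
      intro hdd
      have hle := Nat.le_of_dvd (pow_pos hp.out.pos _) hdd
      have hlt2 : p ^ (n - j) < p ^ (n - j + 1) :=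
        Nat.pow_lt_pow_right hp.out.one_lt (by omega)
      omega
    have hvn : n - j < n := by omega
    rcases mul_eq_zero.mp (hchar a ha0) with h | h
    · left
      have hd := (vanish_iff hN C a (n - j) hvn h1 h2).mp h
      rwa [show n - (n - j) = j by omega] at hd
    · right
      have hd := (vanish_iff hN T₀ a (n - j) hvn h1 h2).mp h
      rwa [show n - (n - j) = j by omega] at hd
  set S := (Finset.Icc 1 n).filter (fun j => cyclotomic (p ^ j) ℤ ∣ P N C) with hSdef
  refine ⟨S, Finset.filter_subset _ _, ?_, fun j hj => (Finset.mem_filter.mp hj).2⟩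
  have hlowC : p ^ S.card ≤ C.card := by
    have hdvd := pow_card_dvd_card hN C S
      (fun j hj => (Finset.mem_Icc.mp (Finset.mem_filter.mp hj).1).1)
      (fun j hj => (Finset.mem_filter.mp hj).2)
    have h2 : p ^ S.card ∣ C.card := by exact_mod_cast hdvd
    exact Nat.le_of_dvd (Finset.card_pos.mpr hC) h2
  set S' := (Finset.Icc 1 n) \ S with hS'
  have hdvdT : ∀ j ∈ S', cyclotomic (p ^ j) ℤ ∣ P N T₀ := by
    intro j hj
    obtain ⟨hjI, hjS⟩ := Finset.mem_sdiff.mp hj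
    rcases hdichot j hjI with h | h
    · exact absurd (Finset.mem_filter.mpr ⟨hjI, h⟩) hjS
    · exact h
  have hT₀pos : 0 < T₀.card := by
    rcases Nat.eq_zero_or_pos T₀.card with h | h
    · rw [h, mul_zero] at hcardprod
      omega
    · exact h
  have hlowT : p ^ S'.card ≤ T₀.card := by
    have hdvd := pow_card_dvd_card hN T₀ S'
      (fun j hj => (Finset.mem_Icc.mp (Finset.mem_sdiff.mp hj).1).1)
      hdvdT
    have h2 : p ^ S'.card ∣ T₀.card := by exact_mod_cast hdvd
    exact Nat.le_of_dvd hT₀pos h2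
  have hcards : S.card + S'.card = n := by
    have h1 : S.card ≤ (Finset.Icc 1 n).card := Finset.card_le_card (Finset.filter_subset _ _)
    have h2 : S'.card = (Finset.Icc 1 n).card - S.card := by
      rw [hS']
      exact Finset.card_sdiff_of_subset (Finset.filter_subset _ _)
    rw [Nat.card_Icc] at h1 h2
    omega
  have hkey : C.card * T₀.card ≤ p ^ S.card * T₀.card := by
    calc C.card * T₀.card = p ^ S.card * p ^ S'.card := by
          rw [hcardprod, ← pow_add, hcards, ← hN]
      _ ≤ p ^ S.card * T₀.card := Nat.mul_le_mul_left _ hlowT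
  have hCle : C.card ≤ p ^ S.card := Nat.le_of_mul_le_mul_right hkey hT₀pos
  exact le_antisymm hCle hlowC


lemma exp_term_eq (p γ : ℕ) [hp : Fact p.Prime] (c l l' : ZMod (p ^ γ)) :
    Complex.exp (2 * Real.pi * Complex.I *
      ((c.val : ℂ) * ((l.val : ℂ) - (l'.val : ℂ)) / (p : ℂ) ^ γ)) =
    zeta (p ^ γ) ^ (c.val * (l - l').val) := by
  have hN0 : p ^ γ ≠ 0 := pow_ne_zero _ hp.out.pos.ne'
  haveI : NeZero (p ^ γ) := ⟨hN0⟩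
  set m : ℤ := (c.val : ℤ) * ((l.val : ℤ) - (l'.val : ℤ)) with hm
  have harg : 2 * Real.pi * Complex.I *
      ((c.val : ℂ) * ((l.val : ℂ) - (l'.val : ℂ)) / (p : ℂ) ^ γ)
      = (m : ℂ) * (2 * Real.pi * Complex.I / ((p ^ γ : ℕ) : ℂ)) := by
    have hpne : ((p : ℂ)) ^ γ ≠ 0 := pow_ne_zero _ (by exact_mod_cast hp.out.pos.ne')
    rw [hm]
    push_cast
    field_simp
  rw [harg, Complex.exp_int_mul]
  have hz : Complex.exp (2 * Real.pi * Complex.I / ((p ^ γ : ℕ) : ℂ)) = zeta (p ^ γ) := rfl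
  rw [hz, zeta_zpow_mod hN0 m, zeta_pow_mod hN0 (c.val * (l - l').val)]
  have hcast : ((m : ℤ) : ZMod (p ^ γ)) = ((c.val * (l - l').val : ℕ) : ZMod (p ^ γ)) := by
    rw [hm]
    push_cast [val_cast]
    ring
  rw [hcast]

end Fug

/-- a nonempty subset of `ℤ/p^γℤ` is a spectral set iff it tiles `ℤ/p^γℤ`. -/
theorem zmod_spectral_iff_tile
    (p γ : ℕ) [Fact p.Prime] (hγ : 1 ≤ γ)
    (C : Finset (ZMod (p ^ γ))) (hCne : C.Nonempty) :
    (∃ Λ : Finset (ZMod (p ^ γ)), Λ.card = C.card ∧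
      ∀ l ∈ Λ, ∀ l' ∈ Λ, l ≠ l' →
        ∑ c ∈ C, Complex.exp (2 * Real.pi * Complex.I *
          ((c.val : ℂ) * ((l.val : ℂ) - (l'.val : ℂ)) / (p : ℂ) ^ γ)) = 0) ↔
    (∃ T : Set (ZMod (p ^ γ)), ∀ x : ZMod (p ^ γ),
      ∃! ct : ZMod (p ^ γ) × ZMod (p ^ γ), ct.1 ∈ C ∧ ct.2 ∈ T ∧ ct.1 + ct.2 = x) := by
  constructor
  · rintro ⟨Λ, hΛcard, horth⟩
    have horth' : ∀ l ∈ Λ, ∀ l' ∈ Λ, l ≠ l' →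
        ∑ c ∈ C, Fug.zeta (p ^ γ) ^ (c.val * (l - l').val) = 0 := by
      intro l hl l' hl' hll
      have h := horth l hl l' hl' hll
      rwa [Finset.sum_congr rfl (fun c _ => Fug.exp_term_eq p γ c l l')] at h
    obtain ⟨S, hS, hcard, hdvd⟩ := Fug.spectral_analysis rfl C hCne Λ hΛcard horth'
    obtain ⟨T, hT⟩ := Fug.exists_tile rfl C S hS hcard hdvd
    refine ⟨(T : Set (ZMod (p ^ γ))), fun x => ?_⟩
    obtain ⟨ct, hctprop, huniq⟩ := hT x
    exact ⟨ct, ⟨hctprop.1, Finset.mem_coe.mpr hctprop.2.1, hctprop.2.2⟩,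
      fun y hy => huniq y ⟨hy.1, Finset.mem_coe.mp hy.2.1, hy.2.2⟩⟩
  · rintro ⟨T, htile⟩
    obtain ⟨S, hS, hcard, hdvd⟩ := Fug.tiling_analysis rfl C hCne T htile
    obtain ⟨Λ, hΛcard, horth⟩ := Fug.exists_spectrum rfl C S hS hcard hdvd
    refine ⟨Λ, hΛcard, ?_⟩
    intro l hl l' hl' hll
    rw [Finset.sum_congr rfl (fun c _ => Fug.exp_term_eq p γ c l l')]
    exact horth l hl l' hl' hll
end
end

section
/- Let p be a prime, γ ≥ 1 an integer, and C a nonempty subset of ℤ/p^γℤ. Then C tiles ℤ/p^γℤ if and only if for every integer n with 1 ≤ n ≤ γ the image of C under the natural projection ℤ/p^γℤ → ℤ/p^nℤ has cardinality p^{k_n} for some k_n ∈ ℕ. -/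
open Finset

noncomputable section

namespace ZTilePH

open Polynomial

variable {p : ℕ} [hp : Fact p.Prime]

/-- local projection: `ZMod M → ZMod m` via `val`. -/
def proj (m : ℕ) {M : ℕ} (x : ZMod M) : ZMod m := ((x.val : ℕ) : ZMod m)

def Tiling {N : ℕ} (A B : Finset (ZMod N)) : Prop :=
  ∀ x : ZMod N, ∃! ct : ZMod N × ZMod N, ct.1 ∈ A ∧ ct.2 ∈ B ∧ ct.1 + ct.2 = x

lemma Tiling.symm {N : ℕ} {A B : Finset (ZMod N)} (h : Tiling A B) : Tiling B A := by
  intro x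
  obtain ⟨⟨c, t⟩, ⟨hc, ht, hct⟩, huniq⟩ := h x
  refine ⟨(t, c), ⟨ht, hc, by rw [add_comm]; exact hct⟩, ?_⟩
  rintro ⟨b, a⟩ ⟨hb, ha, hab⟩
  have := huniq (a, b) ⟨ha, hb, by rw [add_comm]; exact hab⟩
  simp only [Prod.mk.injEq] at this ⊢
  exact ⟨this.2, this.1⟩

lemma proj_eq_castHom {m M : ℕ} [NeZero M] (h : m ∣ M) (x : ZMod M) :
    proj m x = ZMod.castHom h (ZMod m) x := by
  rw [ZMod.castHom_apply, ← ZMod.natCast_val]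
  rfl

lemma proj_add {m M : ℕ} [NeZero M] (h : m ∣ M) (x y : ZMod M) :
    proj m (x + y) = proj m x + proj m y := by
  simp [proj_eq_castHom h, map_add]

lemma proj_self {M : ℕ} [NeZero M] (x : ZMod M) : proj M x = x := by
  have := ZMod.natCast_rightInverse (n := M) x
  simpa [proj] using this

lemma proj_val {m M : ℕ} (x : ZMod M) : (proj m x).val = x.val % m := by
  simp [proj, ZMod.val_natCast]

lemma proj_comp {m m' M : ℕ} (h : m ∣ m') (x : ZMod M) :
    proj m (proj m' x) = proj m x := by
  unfold proj
  rw [ZMod.val_natCast]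
  exact (ZMod.natCast_eq_natCast_iff _ _ _).2 ((Nat.mod_modEq _ _).of_dvd h)

lemma proj_eq_iff {m M : ℕ} (x y : ZMod M) :
    proj m x = proj m y ↔ x.val ≡ y.val [MOD m] := ZMod.natCast_eq_natCast_iff _ _ _

lemma image_proj_comp {m m' M : ℕ} (h : m ∣ m') (C : Finset (ZMod M)) :
    (C.image (proj m')).image (proj m) = C.image (proj m) := by
  rw [Finset.image_image]
  exact Finset.image_congr (fun x _ => proj_comp h x)


lemma fiber_card_le {n : ℕ} (s : Finset (ZMod (p^(n+1)))) (y : ZMod (p^n)) :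
    (s.filter (fun z => proj (p^n) z = y)).card ≤ p := by
  have hppos : 0 < p ^ n := pow_pos hp.out.pos n
  have h := Finset.card_le_card_of_injOn (fun z : ZMod (p^(n+1)) => z.val / p^n)
    (s := s.filter (fun z => proj (p^n) z = y)) (t := Finset.range p)
    (by
      intro z _
      simp only [Finset.mem_coe, Finset.mem_range]
      rw [Nat.div_lt_iff_lt_mul hppos]
      calc z.val < p^(n+1) := ZMod.val_lt z
      _ = p * p^n := by ring)
    (by
      intro z hz z' hz' hdiv
      simp only [Finset.coe_filter, Set.mem_setOf_eq] at hz hz'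
      have hmod : z.val % p^n = z'.val % p^n :=
        (proj_eq_iff z z').1 (hz.2.trans hz'.2.symm)
      have hval : z.val = z'.val := by
        have h1 := Nat.div_add_mod z.val (p^n)
        have h2 := Nat.div_add_mod z'.val (p^n)
        change z.val / p^n = z'.val / p^n at hdiv
        rw [hdiv] at h1
        omega
      exact ZMod.val_injective _ hval)
  simpa using h

-- the full ambient fiber has card ≤ p as well (s = univ); combined with card p inside C
-- we get fullness.

lemma card_image_le_mul {n : ℕ} (s : Finset (ZMod (p^(n+1)))) :
    s.card ≤ p * (s.image (proj (p^n))).card := by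
  rw [Finset.card_eq_sum_card_fiberwise (f := proj (p^n)) (t := s.image (proj (p^n)))
    (fun x hx => Finset.mem_image_of_mem _ hx)]
  calc ∑ y ∈ s.image (proj (p^n)), (s.filter (fun z => proj (p^n) z = y)).card
      ≤ ∑ _y ∈ s.image (proj (p^n)), p := Finset.sum_le_sum (fun y _ => fiber_card_le s y)
    _ = (s.image (proj (p^n))).card * p := by rw [Finset.sum_const, smul_eq_mul]
    _ = p * (s.image (proj (p^n))).card := mul_comm _ _

lemma full_fibers_of_card {n : ℕ} (s : Finset (ZMod (p^(n+1))))
    (hcard : s.card = p * (s.image (proj (p^n))).card) :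
    ∀ z : ZMod (p^(n+1)), proj (p^n) z ∈ s.image (proj (p^n)) → z ∈ s := by
  have hsum : s.card = ∑ y ∈ s.image (proj (p^n)),
      (s.filter (fun z => proj (p^n) z = y)).card :=
    Finset.card_eq_sum_card_fiberwise (fun x hx => Finset.mem_image_of_mem _ hx)
  have hconst : ∑ y ∈ s.image (proj (p^n)), (s.filter (fun z => proj (p^n) z = y)).card
      = ∑ _y ∈ s.image (proj (p^n)), p := by
    rw [← hsum, hcard, Finset.sum_const, smul_eq_mul, mul_comm]
  have hall : ∀ y ∈ s.image (proj (p^n)),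
      (s.filter (fun z => proj (p^n) z = y)).card = p :=
    (Finset.sum_eq_sum_iff_of_le (fun y _ => fiber_card_le s y)).1 hconst
  intro z hz
  set y := proj (p^n) z with hy
  have h1 : (s.filter (fun w => proj (p^n) w = y)).card = p := hall y hz
  have h2 : (s.filter (fun w => proj (p^n) w = y)) ⊆
      (Finset.univ.filter (fun w : ZMod (p^(n+1)) => proj (p^n) w = y)) := by
    intro w hw
    simp only [Finset.mem_filter] at hw ⊢
    exact ⟨Finset.mem_univ _, hw.2⟩
  have h3 := fiber_card_le (Finset.univ : Finset (ZMod (p^(n+1)))) y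
  have heq := Finset.eq_of_subset_of_card_le h2 (by omega)
  have hzmem : z ∈ Finset.univ.filter (fun w : ZMod (p^(n+1)) => proj (p^n) w = y) := by
    simp [hy]
  rw [← heq] at hzmem
  exact (Finset.mem_filter.1 hzmem).1


lemma proj_sub {m M : ℕ} [NeZero M] (h : m ∣ M) (x y : ZMod M) :
    proj m (x - y) = proj m x - proj m y := by
  simp [proj_eq_castHom h, map_sub]

lemma proj_natCast {m M : ℕ} [NeZero M] (h : m ∣ M) (k : ℕ) :
    proj m ((k : ZMod M)) = (k : ZMod m) := by
  rw [proj_eq_castHom h, map_natCast]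

section Main
variable {γ : ℕ} (C : Finset (ZMod (p^γ)))

/-- step `n → n+1` has full fibers over the image -/
def Full (n : ℕ) : Prop :=
  (C.image (proj (p^(n+1)))).card = p * (C.image (proj (p^n))).card

lemma card_proj_zero (hCne : C.Nonempty) : (C.image (proj (p^0))).card = 1 := by
  have h1 : (C.image (proj (p^0))).Nonempty := hCne.image _
  have h2 : (C.image (proj (p^0))).card ≤ 1 :=
    Finset.card_le_one.2 (fun a _ b _ => by
      have : Subsingleton (ZMod (p^0)) := by rw [pow_zero]; infer_instance
      exact Subsingleton.elim a b)
  have := Finset.card_pos.2 h1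
  omega

lemma dichotomy (hCne : C.Nonempty)
    (hpow : ∀ n, 1 ≤ n → n ≤ γ → ∃ k, (C.image (proj (p^n) (M := p^γ))).card = p ^ k)
    {n : ℕ} (hn : n < γ) :
    Full C n ∨ (C.image (proj (p^(n+1)))).card = (C.image (proj (p^n))).card := by
  have hp1 : 1 < p := hp.out.one_lt
  obtain ⟨f, hf⟩ := hpow (n+1) (by omega) (by omega)
  obtain ⟨e, he⟩ : ∃ e, (C.image (proj (p^n) (M := p^γ))).card = p ^ e := by
    rcases Nat.eq_zero_or_pos n with h0 | h0
    · exact ⟨0, by rw [h0]; exact (card_proj_zero C hCne).trans (pow_zero p).symm⟩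
    · exact hpow n h0 (by omega)
  have hmono : (C.image (proj (p^n))).card ≤ (C.image (proj (p^(n+1)))).card := by
    conv_lhs => rw [← image_proj_comp (pow_dvd_pow p (Nat.le_succ n)) C]
    exact Finset.card_image_le
  have hle : (C.image (proj (p^(n+1)))).card ≤ p * (C.image (proj (p^n))).card := by
    have := card_image_le_mul (p := p) (C.image (proj (p^(n+1))))
    rwa [image_proj_comp (pow_dvd_pow p (Nat.le_succ n)) C] at this
  rw [hf, he] at hmono hle ⊢
  have hef : e ≤ f := (Nat.pow_le_pow_iff_right hp1).1 hmono
  have hfe : f ≤ e + 1 := by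
    have : p ^ f ≤ p ^ (e+1) := by rw [pow_succ, mul_comm]; exact hle
    exact (Nat.pow_le_pow_iff_right hp1).1 this
  rcases Nat.lt_or_ge e f with h | h
  · left
    unfold Full
    rw [hf, he]
    have : f = e + 1 := by omega
    rw [this, pow_succ, mul_comm]
  · right
    have : f = e := by omega
    rw [this]

lemma inj_of_card_eq {n : ℕ}
    (h : (C.image (proj (p^(n+1)))).card = (C.image (proj (p^n))).card) :
    ∀ z ∈ C.image (proj (p^(n+1))), ∀ z' ∈ C.image (proj (p^(n+1))),
      proj (p^n) z = proj (p^n) z' → z = z' := by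
  have : ((C.image (proj (p^(n+1)))).image (proj (p^n))).card
      = (C.image (proj (p^(n+1)))).card := by
    rw [image_proj_comp (pow_dvd_pow p (Nat.le_succ n)) C, h]
  have hinj := Finset.injOn_of_card_image_eq this
  intro z hz z' hz' hpr
  exact hinj (Finset.mem_coe.2 hz) (Finset.mem_coe.2 hz') hpr

lemma full_mem {n : ℕ} (h : Full C n) :
    ∀ z : ZMod (p^(n+1)), proj (p^n) z ∈ C.image (proj (p^n)) → z ∈ C.image (proj (p^(n+1))) := by
  intro z hz
  have hcard : (C.image (proj (p^(n+1)))).card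
      = p * ((C.image (proj (p^(n+1)))).image (proj (p^n))).card := by
    rw [image_proj_comp (pow_dvd_pow p (Nat.le_succ n)) C]; exact h
  refine full_fibers_of_card (p := p) _ hcard z ?_
  rwa [image_proj_comp (pow_dvd_pow p (Nat.le_succ n)) C]

theorem tiling_of_pow (hγ : 1 ≤ γ) (hCne : C.Nonempty)
    (hpow : ∀ n, 1 ≤ n → n ≤ γ → ∃ k, (C.image (proj (p^n) (M := p^γ))).card = p ^ k) :
    ∃ T : Set (ZMod (p ^ γ)), ∀ x : ZMod (p ^ γ),
      ∃! ct : ZMod (p ^ γ) × ZMod (p ^ γ), ct.1 ∈ C ∧ ct.2 ∈ T ∧ ct.1 + ct.2 = x := by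
  have hp1 : 1 < p := hp.out.one_lt
  -- existence of partial decompositions
  have exist : ∀ n, n ≤ γ → ∀ x : ZMod (p^γ), ∃ c ∈ C, ∃ tv : ℕ, tv < p^n ∧
      (∀ j, j < n → Full C j → tv % p^(j+1) = tv % p^j) ∧
      proj (p^n) c + (tv : ZMod (p^n)) = proj (p^n) x := by
    intro n
    induction n with
    | zero =>
      intro _ x
      obtain ⟨c, hc⟩ := hCne
      refine ⟨c, hc, 0, by simp, by omega, ?_⟩
      have : Subsingleton (ZMod (p^0)) := by rw [pow_zero]; infer_instance
      exact Subsingleton.elim _ _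
    | succ n ih =>
      intro hn x
      obtain ⟨c, hc, tv, htv, hconds, heqn⟩ := ih (by omega) x
      by_cases hF : Full C n
      · -- choose a better c from the full fiber
        set y : ZMod (p^(n+1)) := proj (p^(n+1)) x - (tv : ZMod (p^(n+1))) with hy
        have hyproj : proj (p^n) y = proj (p^n) c := by
          rw [hy, proj_sub (pow_dvd_pow p (Nat.le_succ n)),
            proj_comp (pow_dvd_pow p (Nat.le_succ n)),
            proj_natCast (pow_dvd_pow p (Nat.le_succ n))]
          rw [← heqn]; ring
        have hymem : y ∈ C.image (proj (p^(n+1))) := by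
          refine full_mem C hF y ?_
          rw [hyproj]
          exact Finset.mem_image_of_mem _ hc
        obtain ⟨c', hc', hc'y⟩ := Finset.mem_image.1 hymem
        refine ⟨c', hc', tv, ?_, ?_, ?_⟩
        · exact lt_of_lt_of_le htv (Nat.pow_le_pow_right (by omega) (Nat.le_succ n))
        · intro j hj _hFj
          rcases Nat.lt_or_ge j n with h | h
          · exact hconds j h _hFj
          · have hjn : j = n := by omega
            subst hjn
            rw [Nat.mod_eq_of_lt htv,
              Nat.mod_eq_of_lt (lt_of_lt_of_le htv (Nat.pow_le_pow_right (by omega) (Nat.le_succ j)))]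
        · rw [hc'y, hy]; ring
      · -- extend tv by a new digit
        set w : ZMod (p^(n+1)) :=
          proj (p^(n+1)) x - proj (p^(n+1)) c - (tv : ZMod (p^(n+1))) with hw
        have hwproj : proj (p^n) w = 0 := by
          rw [hw, proj_sub (pow_dvd_pow p (Nat.le_succ n)),
            proj_sub (pow_dvd_pow p (Nat.le_succ n)),
            proj_comp (pow_dvd_pow p (Nat.le_succ n)),
            proj_comp (pow_dvd_pow p (Nat.le_succ n)),
            proj_natCast (pow_dvd_pow p (Nat.le_succ n))]
          rw [← heqn]; ring
        have hdvd : p^n ∣ w.val := by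
          have : ((w.val : ℕ) : ZMod (p^n)) = 0 := hwproj
          exact (ZMod.natCast_eq_zero_iff _ _).1 this
        obtain ⟨d, hd⟩ := hdvd
        have hdp : d < p := by
          have hwlt : w.val < p^(n+1) := ZMod.val_lt w
          rw [hd, pow_succ] at hwlt
          exact lt_of_mul_lt_mul_left hwlt (Nat.zero_le _)
        refine ⟨c, hc, tv + w.val, ?_, ?_, ?_⟩
        · have h1 : tv + w.val < p^n * (d + 1) := by rw [Nat.mul_add, Nat.mul_one, ← hd]; omega
          have h2 : p^n * (d+1) ≤ p^n * p := Nat.mul_le_mul_left _ (by omega)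
          have h3 : p^(n+1) = p^n * p := pow_succ p n
          omega
        · intro j hj hFj
          rcases Nat.lt_or_ge j n with h | h
          · obtain ⟨e, he⟩ : p^(j+1) ∣ w.val :=
              dvd_trans (pow_dvd_pow p (by omega)) ⟨d, hd⟩
            obtain ⟨e', he'⟩ : p^j ∣ w.val :=
              dvd_trans (pow_dvd_pow p (by omega)) ⟨d, hd⟩
            have hj1 : (tv + w.val) % p^(j+1) = tv % p^(j+1) := by
              rw [he, Nat.add_mul_mod_self_left]
            have hj2 : (tv + w.val) % p^j = tv % p^j := by
              rw [he', Nat.add_mul_mod_self_left]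
            rw [hj1, hj2]
            exact hconds j h hFj
          · have hjn : j = n := by omega
            subst hjn
            exact absurd hFj hF
        · have hwval : ((w.val : ℕ) : ZMod (p^(n+1))) = w := ZMod.natCast_rightInverse w
          push_cast
          rw [hwval, hw]
          ring
  -- uniqueness of decompositions
  have uniq : ∀ c ∈ C, ∀ c' ∈ C, ∀ t t' : ZMod (p^γ),
      (∀ n, n < γ → Full C n → t.val % p^(n+1) = t.val % p^n) →
      (∀ n, n < γ → Full C n → t'.val % p^(n+1) = t'.val % p^n) →
      c + t = c' + t' →
      ∀ n, n ≤ γ → proj (p^n) c = proj (p^n) c' ∧ proj (p^n) t = proj (p^n) t' := by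
    intro c hc c' hc' t t' hT hT' hadd n
    induction n with
    | zero =>
      intro _
      have : Subsingleton (ZMod (p^0)) := by rw [pow_zero]; infer_instance
      exact ⟨Subsingleton.elim _ _, Subsingleton.elim _ _⟩
    | succ n ih =>
      intro hn
      obtain ⟨ihc, iht⟩ := ih (by omega)
      have hdvd1 : p^(n+1) ∣ p^γ := pow_dvd_pow p hn
      have hsumn : proj (p^(n+1)) c + proj (p^(n+1)) t
          = proj (p^(n+1)) c' + proj (p^(n+1)) t' := by
        rw [← proj_add hdvd1, ← proj_add hdvd1, hadd]
      by_cases hF : Full C n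
      · have ht1 : t.val % p^(n+1) = t.val % p^n := hT n (by omega) hF
        have ht1' : t'.val % p^(n+1) = t'.val % p^n := hT' n (by omega) hF
        have hmodn : t.val % p^n = t'.val % p^n := (proj_eq_iff t t').1 iht
        have htt : proj (p^(n+1)) t = proj (p^(n+1)) t' := by
          refine (proj_eq_iff t t').2 ?_
          show t.val % p^(n+1) = t'.val % p^(n+1)
          rw [ht1, ht1', hmodn]
        refine ⟨?_, htt⟩
        rw [htt] at hsumn
        exact add_right_cancel hsumn
      · have heqcard : (C.image (proj (p^(n+1)))).card = (C.image (proj (p^n))).card := by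
          rcases dichotomy C hCne hpow (show n < γ by omega) with h | h
          · exact absurd h hF
          · exact h
        have hcc : proj (p^(n+1)) c = proj (p^(n+1)) c' := by
          refine inj_of_card_eq C heqcard _ (Finset.mem_image_of_mem _ hc)
            _ (Finset.mem_image_of_mem _ hc') ?_
          rw [proj_comp (pow_dvd_pow p (Nat.le_succ n)),
            proj_comp (pow_dvd_pow p (Nat.le_succ n))]
          exact ihc
        refine ⟨hcc, ?_⟩
        rw [hcc] at hsumn
        exact add_left_cancel hsumn
  -- assembly
  refine ⟨{t : ZMod (p^γ) | ∀ n, n < γ → Full C n → t.val % p^(n+1) = t.val % p^n}, ?_⟩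
  intro x
  obtain ⟨c, hc, tv, htv, hconds, heqg⟩ := exist γ le_rfl x
  set t : ZMod (p^γ) := (tv : ZMod (p^γ)) with hts
  have htval : t.val = tv := ZMod.val_cast_of_lt htv
  have ht : t ∈ {t : ZMod (p^γ) | ∀ n, n < γ → Full C n →
      t.val % p^(n+1) = t.val % p^n} := by
    intro n hn hF
    rw [htval]
    exact hconds n hn hF
  have hsum : c + t = x := by
    have h1 := heqg
    rw [proj_self, proj_self] at h1
    exact h1
  refine ⟨(c, t), ⟨hc, ht, hsum⟩, ?_⟩
  rintro ⟨c₁, t₁⟩ ⟨hc₁, ht₁, hsum₁⟩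
  have h := uniq c₁ hc₁ c hc t₁ t ht₁ ht (by rw [hsum₁, hsum]) γ le_rfl
  rw [proj_self, proj_self, proj_self, proj_self] at h
  exact Prod.ext h.1 h.2

end Main

lemma fibers_full_of_sum_zero {γ : ℕ} (hγ : 1 ≤ γ) (S : Finset (ZMod (p^γ)))
    {ζ : ℂ} (hζ : IsPrimitiveRoot ζ (p^γ)) (hsum : ∑ c ∈ S, ζ ^ (c.val) = 0) :
    ∀ y : ZMod (p^γ), ∀ c ∈ S, proj (p^(γ-1)) y = proj (p^(γ-1)) c → y ∈ S := by
  rcases S.eq_empty_or_nonempty with rfl | ⟨c₀, hc₀⟩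
  · intro y c hc; simp at hc
  set m := p ^ (γ-1) with hmdef
  have hγ1 : γ - 1 + 1 = γ := by omega
  have hp1 : 1 < p := hp.out.one_lt
  have hmpos : 0 < m := pow_pos hp.out.pos _
  have hqpos : 0 < p ^ γ := pow_pos hp.out.pos _
  have hqm : p ^ γ = m * p := by rw [hmdef, ← pow_succ, hγ1]
  set A : ℚ[X] := ∑ c ∈ S, X ^ c.val with hAdef
  have hAeval : aeval ζ A = 0 := by
    rw [hAdef, map_sum]
    simpa using hsum
  have hcA : ∀ c ∈ S, A.coeff c.val = 1 := by
    intro c hc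
    rw [hAdef, Polynomial.finset_sum_coeff]
    rw [Finset.sum_eq_single c]
    · simp [Polynomial.coeff_X_pow]
    · intro c' hc' hne
      rw [Polynomial.coeff_X_pow]
      rw [if_neg]
      intro h
      exact hne (ZMod.val_injective _ h.symm)
    · intro h; exact absurd hc h
  have hmemA : ∀ j, A.coeff j ≠ 0 → ∃ c ∈ S, c.val = j := by
    intro j hj
    by_contra hcon
    push_neg at hcon
    apply hj
    rw [hAdef, Polynomial.finset_sum_coeff]
    refine Finset.sum_eq_zero (fun c hc => ?_)
    rw [Polynomial.coeff_X_pow, if_neg]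
    intro h
    exact hcon c hc h.symm
  have hA0 : A ≠ 0 := by
    intro h
    have := hcA c₀ hc₀
    rw [h] at this
    simp at this
  have hdvd : cyclotomic (p ^ γ) ℚ ∣ A := by
    rw [cyclotomic_eq_minpoly_rat hζ hqpos]
    exact minpoly.dvd ℚ ζ hAeval
  obtain ⟨B, hB⟩ := hdvd
  have hBne : B ≠ 0 := by
    rintro rfl
    rw [mul_zero] at hB
    exact hA0 hB
  have hdegA : A.natDegree < p ^ γ := by
    rw [Polynomial.natDegree_lt_iff_degree_lt hA0, Polynomial.degree_lt_iff_coeff_zero]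
    intro j hj
    by_contra h
    obtain ⟨c, _, hcv⟩ := hmemA j h
    have := ZMod.val_lt c
    omega
  have hdegC : (cyclotomic (p ^ γ) ℚ).natDegree = m * (p-1) := by
    rw [Polynomial.natDegree_cyclotomic,
      Nat.totient_prime_pow hp.out (show 0 < γ by omega)]
  have hdegB : B.natDegree < m := by
    have hmul : A.natDegree = (cyclotomic (p ^ γ) ℚ).natDegree + B.natDegree := by
      rw [hB]
      exact Polynomial.natDegree_mul (cyclotomic.monic (p ^ γ) ℚ).ne_zero hBne
    have hqm2 : p ^ γ = m * (p-1) + m := by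
      rw [hqm]
      have hp' : p = (p - 1) + 1 := by omega
      calc m * p = m * ((p-1)+1) := by rw [← hp']
        _ = m * (p-1) + m := by ring
    rw [hmul, hdegC] at hdegA
    omega
  have hgeom : cyclotomic (p ^ γ) ℚ = ∑ i ∈ Finset.range p, (X : ℚ[X]) ^ (m * i) := by
    have := Polynomial.cyclotomic_prime_pow_eq_geom_sum (R := ℚ) (n := γ - 1) hp.out
    rw [hγ1] at this
    rw [this]
    refine Finset.sum_congr rfl (fun i _ => ?_)
    rw [← pow_mul]
  have hkey : ∀ r, r < m → ∀ i, i < p → A.coeff (r + m * i) = B.coeff r := by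
    intro r hr i hi
    rw [hB, hgeom, Finset.sum_mul, Polynomial.finset_sum_coeff]
    have hterm : ∀ i' ∈ Finset.range p, ((X : ℚ[X]) ^ (m * i') * B).coeff (r + m * i)
        = if m * i' ≤ r + m * i then B.coeff (r + m * i - m * i') else 0 := by
      intro i' _
      rw [mul_comm ((X : ℚ[X]) ^ (m * i')) B, Polynomial.coeff_mul_X_pow']
    rw [Finset.sum_congr rfl hterm]
    rw [Finset.sum_eq_single i]
    · rw [if_pos (by omega)]
      congr 1
      omega
    · intro i' _ hne
      rcases Nat.lt_or_ge i' i with h | h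
      · have h1 : m * (i' + 1) ≤ m * i := Nat.mul_le_mul_left m (by omega)
        rw [Nat.mul_add, Nat.mul_one] at h1
        rw [if_pos (by omega)]
        refine Polynomial.coeff_eq_zero_of_natDegree_lt ?_
        omega
      · have hgt : i < i' := by omega
        have h1 : m * (i + 1) ≤ m * i' := Nat.mul_le_mul_left m (by omega)
        rw [Nat.mul_add, Nat.mul_one] at h1
        rw [if_neg (by omega)]
    · intro h
      exact absurd (Finset.mem_range.2 hi) h
  intro y c hc hproj
  have hmodeq : y.val % m = c.val % m := (proj_eq_iff y c).1 hproj
  have hylt : y.val < p ^ γ := ZMod.val_lt y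
  have hclt : c.val < p ^ γ := ZMod.val_lt c
  have hyv : y.val = y.val % m + m * (y.val / m) := (Nat.mod_add_div _ _).symm
  have hcv : c.val = c.val % m + m * (c.val / m) := (Nat.mod_add_div _ _).symm
  have hpm : p * m = m * p := Nat.mul_comm p m
  have hiy : y.val / m < p := by
    rw [Nat.div_lt_iff_lt_mul hmpos]
    omega
  have hic : c.val / m < p := by
    rw [Nat.div_lt_iff_lt_mul hmpos]
    omega
  have hAy : A.coeff y.val = B.coeff (y.val % m) := by
    conv_lhs => rw [hyv]
    exact hkey _ (Nat.mod_lt _ hmpos) _ hiy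
  have hAc : A.coeff c.val = B.coeff (c.val % m) := by
    conv_lhs => rw [hcv]
    exact hkey _ (Nat.mod_lt _ hmpos) _ hic
  have : A.coeff y.val = 1 := by
    rw [hAy, hmodeq, ← hAc, hcA c hc]
  obtain ⟨c'', hc'', hcv''⟩ := hmemA y.val (by rw [this]; norm_num)
  have : c'' = y := ZMod.val_injective _ hcv''
  rwa [this] at hc''


lemma image_proj_self {M : ℕ} [NeZero M] (s : Finset (ZMod M)) :
    s.image (proj M) = s := by
  rw [Finset.image_congr (g := id) (fun x _ => proj_self x), Finset.image_id]

lemma pow_mod_eq {q : ℕ} {ζ : ℂ} (hζq : ζ ^ q = 1) (a : ℕ) : ζ ^ (a % q) = ζ ^ a := by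
  conv_rhs => rw [← Nat.div_add_mod a q]
  rw [pow_add, pow_mul, hζq, one_pow, one_mul]

lemma sum_univ_zero {γ : ℕ} (hγ : 1 ≤ γ) {ζ : ℂ} (hζ : IsPrimitiveRoot ζ (p^γ)) :
    ∑ x : ZMod (p^γ), ζ ^ x.val = 0 := by
  have h1 : 1 < p ^ γ := Nat.one_lt_pow (by omega) hp.out.one_lt
  refine Eq.trans ?_ (hζ.geom_sum_eq_zero h1)
  exact Finset.sum_nbij' (fun x => x.val) (fun j => (j : ZMod (p^γ)))
    (fun x _ => Finset.mem_range.2 (ZMod.val_lt x))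
    (fun j _ => Finset.mem_univ _)
    (fun x _ => ZMod.natCast_rightInverse x)
    (fun j hj => ZMod.val_cast_of_lt (Finset.mem_range.1 hj))
    (fun x _ => rfl)

lemma tiling_sum_mul {γ : ℕ} (hγ : 1 ≤ γ) {C T : Finset (ZMod (p^γ))} (h : Tiling C T)
    {ζ : ℂ} (hζ : IsPrimitiveRoot ζ (p^γ)) :
    (∑ c ∈ C, ζ ^ c.val) * (∑ t ∈ T, ζ ^ t.val) = 0 := by
  have hq1 : ζ ^ (p^γ) = 1 := hζ.pow_eq_one
  rw [Finset.sum_mul_sum]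
  calc ∑ c ∈ C, ∑ t ∈ T, ζ ^ c.val * ζ ^ t.val
      = ∑ c ∈ C, ∑ t ∈ T, ζ ^ ((c + t).val) := by
        refine Finset.sum_congr rfl (fun c _ => Finset.sum_congr rfl (fun t _ => ?_))
        rw [← pow_add, ZMod.val_add, pow_mod_eq hq1]
    _ = ∑ ct ∈ C ×ˢ T, ζ ^ ((ct.1 + ct.2).val) :=
        (Finset.sum_product' (s := C) (t := T)
          (f := fun c t : ZMod (p^γ) => ζ ^ ((c + t).val))).symm
    _ = ∑ x : ZMod (p^γ), ζ ^ x.val := by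
        refine Finset.sum_bij (fun ct _ => ct.1 + ct.2) (fun _ _ => Finset.mem_univ _)
          ?_ ?_ (fun _ _ => rfl)
        · intro a₁ ha₁ a₂ ha₂ heq
          rw [Finset.mem_product] at ha₁ ha₂
          exact (h (a₁.1 + a₁.2)).unique ⟨ha₁.1, ha₁.2, rfl⟩ ⟨ha₂.1, ha₂.2, heq.symm⟩
        · intro b _
          obtain ⟨⟨c, t⟩, ⟨hc, ht, hct⟩, _⟩ := h b
          exact ⟨(c, t), Finset.mem_product.2 ⟨hc, ht⟩, hct⟩
    _ = 0 := sum_univ_zero hγ hζ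

lemma descend_aux {γ : ℕ} (hγ : 1 ≤ γ) {C T : Finset (ZMod (p^γ))} (h : Tiling C T)
    (hT : ∀ y : ZMod (p^γ), ∀ t ∈ T, proj (p^(γ-1)) y = proj (p^(γ-1)) t → y ∈ T) :
    Tiling (C.image (proj (p^(γ-1)))) (T.image (proj (p^(γ-1)))) := by
  have hdvd : p^(γ-1) ∣ p^γ := pow_dvd_pow p (by omega)
  intro x'
  have hx : proj (p^(γ-1)) ((x'.val : ZMod (p^γ))) = x' := by
    rw [proj_natCast hdvd]
    exact ZMod.natCast_rightInverse x'
  obtain ⟨⟨c, t⟩, ⟨hc, ht, hct⟩, huniq⟩ := h ((x'.val : ZMod (p^γ)))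
  refine ⟨(proj _ c, proj _ t),
    ⟨Finset.mem_image_of_mem _ hc, Finset.mem_image_of_mem _ ht, ?_⟩, ?_⟩
  · rw [← proj_add hdvd, hct, hx]
  · rintro ⟨a, b⟩ ⟨ha, hb, hab⟩
    obtain ⟨c₁, hc₁, rfl⟩ := Finset.mem_image.1 ha
    obtain ⟨t₁, ht₁, rfl⟩ := Finset.mem_image.1 hb
    have he : proj (p^(γ-1)) ((x'.val : ZMod (p^γ)) - (c₁ + t₁)) = 0 := by
      rw [proj_sub hdvd, proj_add hdvd, hx, hab, sub_self]
    set e : ZMod (p^γ) := (x'.val : ZMod (p^γ)) - (c₁ + t₁) with hedef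
    have ht₁e : t₁ + e ∈ T := by
      refine hT (t₁ + e) t₁ ht₁ ?_
      rw [proj_add hdvd, he, add_zero]
    have hsum2 : c₁ + (t₁ + e) = (x'.val : ZMod (p^γ)) := by
      rw [hedef]; ring
    have hu := huniq (c₁, t₁ + e) ⟨hc₁, ht₁e, hsum2⟩
    rw [Prod.mk.injEq] at hu
    obtain ⟨huc, hut⟩ := hu
    have hpt : proj (p^(γ-1)) t₁ = proj (p^(γ-1)) t := by
      rw [← hut, proj_add hdvd, he, add_zero]
    rw [Prod.mk.injEq]
    exact ⟨by rw [huc], hpt⟩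

lemma descend_step {γ : ℕ} (hγ : 1 ≤ γ) {C T : Finset (ZMod (p^γ))} (h : Tiling C T) :
    Tiling (C.image (proj (p^(γ-1)))) (T.image (proj (p^(γ-1)))) := by
  have hζ := Complex.isPrimitiveRoot_exp (p^γ) (pow_ne_zero _ hp.out.ne_zero)
  have hprod := tiling_sum_mul hγ h hζ
  rcases mul_eq_zero.1 hprod with h0 | h0
  · exact (descend_aux hγ h.symm (fibers_full_of_sum_zero hγ C hζ h0)).symm
  · exact descend_aux hγ h (fibers_full_of_sum_zero hγ T hζ h0)

lemma descend_all : ∀ γ : ℕ, ∀ C T : Finset (ZMod (p^γ)), Tiling C T →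
    ∀ n, n ≤ γ → Tiling (C.image (proj (p^n))) (T.image (proj (p^n))) := by
  intro γ
  induction γ with
  | zero =>
    intro C T h n hn
    have hn0 : n = 0 := by omega
    subst hn0
    rw [image_proj_self, image_proj_self]
    exact h
  | succ γ' ih =>
    intro C T h n hn
    rcases eq_or_lt_of_le hn with heq | hlt
    · subst heq
      rw [image_proj_self, image_proj_self]
      exact h
    · have hn' : n ≤ γ' := by omega
      have hstep : Tiling (C.image (proj (p^γ'))) (T.image (proj (p^γ'))) :=
        descend_step (γ := γ' + 1) (by omega) h
      have := ih _ _ hstep n hn'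
      rwa [image_proj_comp (pow_dvd_pow p hn'), image_proj_comp (pow_dvd_pow p hn')] at this

lemma Tiling.card_mul {N : ℕ} [NeZero N] {A B : Finset (ZMod N)} (h : Tiling A B) :
    A.card * B.card = N := by
  have hbij : (A ×ˢ B).card = (Finset.univ : Finset (ZMod N)).card := by
    refine Finset.card_bij (fun ct _ => ct.1 + ct.2) (fun _ _ => Finset.mem_univ _) ?_ ?_
    · intro a₁ ha₁ a₂ ha₂ heq
      rw [Finset.mem_product] at ha₁ ha₂
      exact (h (a₁.1 + a₁.2)).unique ⟨ha₁.1, ha₁.2, rfl⟩ ⟨ha₂.1, ha₂.2, heq.symm⟩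
    · intro b _
      obtain ⟨⟨c, t⟩, ⟨hc, ht, hct⟩, _⟩ := h b
      exact ⟨(c, t), Finset.mem_product.2 ⟨hc, ht⟩, hct⟩
  rw [Finset.card_product] at hbij
  rw [hbij, Finset.card_univ, ZMod.card]


end ZTilePH

/-- a nonempty subset `C ⊆ ℤ/p^γℤ` tiles `ℤ/p^γℤ` iff for every `1 ≤ n ≤ γ`
the cardinality of the image of `C` under the projection `ℤ/p^γℤ → ℤ/p^nℤ` is a power of `p`. -/
theorem zmod_tile_iff_pHomogeneous
    (p γ : ℕ) [Fact p.Prime] (hγ : 1 ≤ γ)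
    (C : Finset (ZMod (p ^ γ))) (hCne : C.Nonempty) :
    (∃ T : Set (ZMod (p ^ γ)), ∀ x : ZMod (p ^ γ),
      ∃! ct : ZMod (p ^ γ) × ZMod (p ^ γ), ct.1 ∈ C ∧ ct.2 ∈ T ∧ ct.1 + ct.2 = x) ↔
    (∀ n : ℕ, 1 ≤ n → ∀ hn : n ≤ γ, ∃ k : ℕ,
      (C.image (ZMod.castHom (pow_dvd_pow p hn) (ZMod (p ^ n)))).card = p ^ k) := by
  have himg : ∀ n, ∀ hn : n ≤ γ,
      C.image (ZMod.castHom (pow_dvd_pow p hn) (ZMod (p ^ n)))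
        = C.image (ZTilePH.proj (p ^ n)) :=
    fun n hn => Finset.image_congr
      (fun x _ => (ZTilePH.proj_eq_castHom (pow_dvd_pow p hn) x).symm)
  constructor
  · rintro ⟨Tset, hT⟩ n h1n hn
    classical
    set Tf := Set.Finite.toFinset (Set.toFinite Tset) with hTf
    have htile : ZTilePH.Tiling C Tf := by
      intro x
      obtain ⟨ct, ⟨hm1, hm2, hm3⟩, hu⟩ := hT x
      refine ⟨ct, ⟨hm1, ?_, hm3⟩, ?_⟩
      · rw [hTf, Set.Finite.mem_toFinset]; exact hm2
      · rintro y ⟨hy1, hy2, hy3⟩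
        refine hu y ⟨hy1, ?_, hy3⟩
        rw [hTf, Set.Finite.mem_toFinset] at hy2; exact hy2
    have hdesc := ZTilePH.descend_all γ C Tf htile n hn
    have hcard := hdesc.card_mul
    have hdvd : (C.image (ZTilePH.proj (p ^ n))).card ∣ p ^ n := ⟨_, hcard.symm⟩
    obtain ⟨k, _, hk⟩ := (Nat.dvd_prime_pow (Fact.out : p.Prime)).1 hdvd
    exact ⟨k, by rw [himg n hn]; exact hk⟩
  · intro hpow
    refine ZTilePH.tiling_of_pow C hγ hCne ?_
    intro n h1n hn
    obtain ⟨k, hk⟩ := hpow n h1n hn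
    refine ⟨k, ?_⟩
    rw [← himg n hn]
    exact hk
end
end

section
/- Let p be a prime, γ ≥ 1 an integer, and C a nonempty subset of ℤ/p^γℤ. Then the cardinality of the image of C in ℤ/p^nℤ is a power of p for every 1 ≤ n ≤ γ if and only if there exists a set I ⊆ {0, 1, …, γ − 1} with #C = p^{#I} such that ∑_{c∈C} e^{−2πi c̃ p^ℓ / p^γ} = 0 for every ℓ ∈ I, where c̃ denotes any integer lift of c (the sum is independent of the lifts). -/
open Finset

noncomputable section

section ZPHaux

open Finset Polynomial

namespace ZPH

variable (p : ℕ)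

/-- image of the value set at level `n` -/
def E (n : ℕ) (V : Finset ℕ) : Finset ℕ := V.image (· % p ^ n)

/-- cardinality at level `n` -/
def a (n : ℕ) (V : Finset ℕ) : ℕ := (E p n V).card

/-- fiber count at level `n` -/
def nu (n : ℕ) (V : Finset ℕ) (x : ℕ) : ℕ := (V.filter (fun v => v % p ^ n = x)).card

variable {p}

lemma mem_E {n : ℕ} {V : Finset ℕ} {x : ℕ} : x ∈ E p n V ↔ ∃ v ∈ V, v % p ^ n = x := by
  simp [E]

lemma E_lt (hp : 0 < p) {n : ℕ} {V : Finset ℕ} {x : ℕ} (hx : x ∈ E p n V) : x < p ^ n := by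
  obtain ⟨v, -, rfl⟩ := mem_E.1 hx
  exact Nat.mod_lt _ (pow_pos hp n)

lemma E_proj {n m : ℕ} (h : n ≤ m) (V : Finset ℕ) :
    (E p m V).image (· % p ^ n) = E p n V := by
  unfold E
  rw [Finset.image_image]
  refine Finset.image_congr ?_
  intro v _
  exact Nat.mod_mod_of_dvd v (pow_dvd_pow p h)

lemma a_zero {V : Finset ℕ} (h : V.Nonempty) : a p 0 V = 1 := by
  have : E p 0 V = {0} := by
    have : E p 0 V = V.image (fun _ => 0) := by
      refine Finset.image_congr fun v _ => ?_
      simp [pow_zero, Nat.mod_one]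
    rw [this, Finset.image_const h]
  rw [a, this, Finset.card_singleton]

lemma a_mono {n m : ℕ} (h : n ≤ m) (V : Finset ℕ) : a p n V ≤ a p m V := by
  rw [a, a, ← E_proj h V]
  exact Finset.card_image_le

lemma psi_inj (hp : 0 < p) (n : ℕ) :
    Function.Injective (fun x : ℕ => (x % p ^ n, x / p ^ n)) := by
  intro x y h
  simp only [Prod.mk.injEq] at h
  rw [← Nat.mod_add_div x (p ^ n), ← Nat.mod_add_div y (p ^ n), h.1, h.2]

lemma psi_maps (hp : 0 < p) {n : ℕ} {V : Finset ℕ} {x : ℕ} (hx : x ∈ E p (n + 1) V) :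
    (x % p ^ n, x / p ^ n) ∈ E p n V ×ˢ Finset.range p := by
  obtain ⟨v, hv, rfl⟩ := mem_E.1 hx
  refine Finset.mem_product.2 ⟨mem_E.2 ⟨v, hv, ?_⟩, Finset.mem_range.2 ?_⟩
  · simpa using (Nat.mod_mod_of_dvd v (pow_dvd_pow p n.le_succ)).symm
  · have h1 : v % p ^ (n + 1) < p ^ (n + 1) := Nat.mod_lt _ (pow_pos hp _)
    rw [Nat.div_lt_iff_lt_mul (pow_pos hp n)]
    calc v % p ^ (n+1) < p ^ (n+1) := h1
    _ = p * p ^ n := by ring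
    _ = p * p ^ n := rfl

lemma a_succ_le (hp : 0 < p) (n : ℕ) (V : Finset ℕ) : a p (n + 1) V ≤ p * a p n V := by
  have := Finset.card_le_card_of_injOn (s := E p (n+1) V) (t := E p n V ×ˢ Finset.range p)
    (fun x : ℕ => (x % p ^ n, x / p ^ n))
    (fun x hx => psi_maps hp hx) ((psi_inj hp n).injOn)
  rwa [Finset.card_product, Finset.card_range, mul_comm] at this

lemma image_psi_of_full (hp : 0 < p) {n : ℕ} {V : Finset ℕ}
    (h : a p (n + 1) V = p * a p n V) :
    (E p (n + 1) V).image (fun x => (x % p ^ n, x / p ^ n)) = E p n V ×ˢ Finset.range p := by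
  apply Finset.eq_of_subset_of_card_le
  · intro z hz
    obtain ⟨x, hx, rfl⟩ := Finset.mem_image.1 hz
    exact psi_maps hp hx
  · rw [Finset.card_product, Finset.card_range,
      Finset.card_image_of_injOn ((psi_inj hp n).injOn)]
    rw [mul_comm]
    exact le_of_eq h.symm

-- generic forcing lemmas
lemma all_eq_one_of_sum_eq_card {α : Type*} {s : Finset α} {f : α → ℕ}
    (h1 : ∀ x ∈ s, 1 ≤ f x) (hs : ∑ x ∈ s, f x = s.card) : ∀ x ∈ s, f x = 1 := by
  intro x hx
  by_contra hne
  have h2 : 1 < f x := lt_of_le_of_ne (h1 x hx) (Ne.symm hne)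
  have : ∑ y ∈ s, (1 : ℕ) < ∑ y ∈ s, f y :=
    Finset.sum_lt_sum h1 ⟨x, hx, h2⟩
  rw [Finset.sum_const, smul_eq_mul, mul_one, hs] at this
  exact lt_irrefl _ this

lemma all_eq_of_sum_eq_card_mul {α : Type*} {s : Finset α} {f : α → ℕ} {r : ℕ}
    (h1 : ∀ x ∈ s, f x ≤ r) (hs : ∑ x ∈ s, f x = r * s.card) : ∀ x ∈ s, f x = r := by
  intro x hx
  by_contra hne
  have h2 : f x < r := lt_of_le_of_ne (h1 x hx) hne
  have : ∑ y ∈ s, f y < ∑ y ∈ s, (r : ℕ) :=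
    Finset.sum_lt_sum h1 ⟨x, hx, h2⟩
  rw [Finset.sum_const, smul_eq_mul, hs, mul_comm] at this
  exact lt_irrefl _ this

/-- fiber of `E p (n+1) V` over `y` at level `n` -/
def t (p n : ℕ) (V : Finset ℕ) (y : ℕ) : Finset ℕ :=
  (E p (n + 1) V).filter (fun x => x % p ^ n = y)

lemma card_E_eq_sum_t (p n : ℕ) (V : Finset ℕ) :
    a p (n + 1) V = ∑ y ∈ E p n V, (t p n V y).card := by
  refine Finset.card_eq_sum_card_fiberwise ?_
  intro x hx
  obtain ⟨v, hv, rfl⟩ := mem_E.1 hx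
  exact mem_E.2 ⟨v, hv, (Nat.mod_mod_of_dvd v (pow_dvd_pow p n.le_succ)).symm⟩

lemma t_card_pos {n : ℕ} {V : Finset ℕ} {y : ℕ} (hy : y ∈ E p n V) :
    1 ≤ (t p n V y).card := by
  obtain ⟨v, hv, rfl⟩ := mem_E.1 hy
  refine Finset.card_pos.2 ⟨v % p ^ (n + 1), Finset.mem_filter.2
    ⟨mem_E.2 ⟨v, hv, rfl⟩, Nat.mod_mod_of_dvd v (pow_dvd_pow p n.le_succ)⟩⟩

lemma t_card_le (hp : 0 < p) (n : ℕ) (V : Finset ℕ) (y : ℕ) : (t p n V y).card ≤ p := by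
  have : (t p n V y).card ≤ (Finset.range p).card := by
    refine Finset.card_le_card_of_injOn (fun x => x / p ^ n) ?_ ?_
    · intro x hx
      obtain ⟨hx1, -⟩ := Finset.mem_filter.1 hx
      exact (Finset.mem_product.1 (psi_maps hp hx1)).2
    · intro x hx y' hy' hxy
      obtain ⟨-, hx2⟩ := Finset.mem_filter.1 hx
      obtain ⟨-, hy2⟩ := Finset.mem_filter.1 hy'
      have := psi_inj hp n (a₁ := x) (a₂ := y')
      apply this
      simp only [Prod.mk.injEq]
      exact ⟨hx2.trans hy2.symm, hxy⟩
  simpa using this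

lemma nu_pos_iff {n : ℕ} {V : Finset ℕ} {x : ℕ} : 0 < nu p n V x ↔ x ∈ E p n V := by
  rw [nu, Finset.card_pos, Finset.filter_nonempty_iff]
  simp [mem_E]

lemma nu_top {γ : ℕ} {V : Finset ℕ} (hV : ∀ v ∈ V, v < p ^ γ) {x : ℕ}
    (hx : x ∈ E p γ V) : nu p γ V x = 1 := by
  obtain ⟨v, hv, rfl⟩ := mem_E.1 hx
  have hmod : ∀ w ∈ V, w % p ^ γ = w := fun w hw => Nat.mod_eq_of_lt (hV w hw)
  rw [nu]
  have : V.filter (fun w => w % p ^ γ = v % p ^ γ) = {v} := by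
    ext w
    simp only [Finset.mem_filter, Finset.mem_singleton]
    constructor
    · rintro ⟨hw, h⟩
      rw [hmod w hw, hmod v hv] at h
      exact h
    · rintro rfl
      exact ⟨hv, rfl⟩
  rw [this, Finset.card_singleton]

lemma nu_step (p n : ℕ) (V : Finset ℕ) (y : ℕ) :
    nu p n V y = ∑ x ∈ t p n V y, nu p (n + 1) V x := by
  rw [nu]
  rw [Finset.card_eq_sum_card_fiberwise (f := fun v => v % p ^ (n + 1)) (t := t p n V y) ?_]
  · refine Finset.sum_congr rfl fun x hx => ?_
    obtain ⟨-, hx2⟩ := Finset.mem_filter.1 hx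
    rw [nu, Finset.filter_filter]
    congr 1
    apply Finset.filter_congr
    intro v _
    constructor
    · rintro ⟨-, h⟩; exact h
    · rintro h
      refine ⟨?_, h⟩
      rw [← hx2, ← h]
      exact (Nat.mod_mod_of_dvd v (pow_dvd_pow p n.le_succ)).symm
  · intro v hv
    have hv1 := Finset.mem_filter.1 hv
    refine Finset.mem_filter.2 ⟨mem_E.2 ⟨v, hv1.1, rfl⟩, ?_⟩
    rw [Nat.mod_mod_of_dvd v (pow_dvd_pow p n.le_succ)]
    exact hv1.2

lemma E_nonempty {n : ℕ} {V : Finset ℕ} (h : V.Nonempty) : (E p n V).Nonempty :=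
  h.image _

lemma t_card_const (hp : 0 < p) {n : ℕ} {V : Finset ℕ}
    (hr : a p (n + 1) V = a p n V ∨ a p (n + 1) V = p * a p n V) :
    ∃ r : ℕ, ∀ y ∈ E p n V, (t p n V y).card = r := by
  rcases hr with h | h
  · refine ⟨1, all_eq_one_of_sum_eq_card (fun y hy => t_card_pos hy) ?_⟩
    rw [← card_E_eq_sum_t, h]; rfl
  · refine ⟨p, all_eq_of_sum_eq_card_mul (fun y _ => t_card_le hp n V y) ?_⟩
    rw [← card_E_eq_sum_t, h]; rfl

lemma nu_const (hp : 0 < p) {γ : ℕ} {V : Finset ℕ} (hV : ∀ v ∈ V, v < p ^ γ)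
    (hstep : ∀ n < γ, a p (n + 1) V = a p n V ∨ a p (n + 1) V = p * a p n V) :
    ∀ d n, n + d = γ → ∀ x ∈ E p n V, ∀ y ∈ E p n V, nu p n V x = nu p n V y := by
  intro d
  induction d with
  | zero =>
    intro n hn x hx y hy
    obtain rfl : n = γ := by omega
    rw [nu_top hV hx, nu_top hV hy]
  | succ d ih =>
    intro n hn x hx y hy
    have hn1 : n + 1 + d = γ := by omega
    have hlt : n < γ := by omega
    obtain ⟨r, hr⟩ := t_card_const hp (hstep n hlt)
    have hsum : ∀ z ∈ E p n V, ∀ w ∈ t p n V z, nu p (n+1) V w = nu p (n+1) V w := by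
      intro z _ w _; rfl
    -- pick a reference element of E p (n+1) V if fibers nonempty; handle via cases on r
    rcases Nat.eq_zero_or_pos r with rfl | hrpos
    · rw [nu_step, nu_step, Finset.card_eq_zero.1 (hr x hx), Finset.card_eq_zero.1 (hr y hy)]
    · obtain ⟨w₀, hw₀⟩ := Finset.card_pos.1 (by rw [hr x hx]; exact hrpos)
      have hw₀E : w₀ ∈ E p (n+1) V := (Finset.mem_filter.1 hw₀).1
      have key : ∀ z ∈ E p n V, nu p n V z = r * nu p (n+1) V w₀ := by
        intro z hz
        rw [nu_step]
        have hcg : ∑ w ∈ t p n V z, nu p (n+1) V w = ∑ _w ∈ t p n V z, nu p (n+1) V w₀ :=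
          Finset.sum_congr rfl (fun w hw => ih (n+1) hn1 w (Finset.mem_filter.1 hw).1 w₀ hw₀E)
        rw [hcg, Finset.sum_const, hr z hz, smul_eq_mul]
      rw [key x hx, key y hy]

lemma filter_lt_succ_card (J : Finset ℕ) (n : ℕ) :
    (J.filter (· < n + 1)).card
      = (J.filter (· < n)).card + (if n ∈ J then 1 else 0) := by
  split_ifs with h
  · have heq : J.filter (· < n + 1) = insert n (J.filter (· < n)) := by
      ext j
      simp only [Finset.mem_filter, Finset.mem_insert]
      constructor
      · rintro ⟨hj, hlt⟩
        rcases Nat.lt_succ_iff_lt_or_eq.1 hlt with h' | h'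
        · exact Or.inr ⟨hj, h'⟩
        · exact Or.inl h'
      · rintro (rfl | ⟨hj, hlt⟩)
        · exact ⟨h, Nat.lt_succ_self _⟩
        · exact ⟨hj, Nat.lt_succ_of_lt hlt⟩
    rw [heq, Finset.card_insert_of_notMem (by simp)]
  · have heq : J.filter (· < n + 1) = J.filter (· < n) := by
      apply Finset.filter_congr
      intro j hj
      constructor
      · intro hlt
        rcases Nat.lt_succ_iff_lt_or_eq.1 hlt with h' | h'
        · exact h'
        · exact absurd (h' ▸ hj) h
      · exact Nat.lt_succ_of_lt
    rw [heq, add_zero]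

lemma filter_ge_card (J : Finset ℕ) (n : ℕ) :
    (J.filter (fun j => n ≤ j)).card
      = (J.filter (fun j => n + 1 ≤ j)).card + (if n ∈ J then 1 else 0) := by
  split_ifs with h
  · have heq : J.filter (fun j => n ≤ j) = insert n (J.filter (fun j => n + 1 ≤ j)) := by
      ext j
      simp only [Finset.mem_filter, Finset.mem_insert]
      constructor
      · rintro ⟨hj, hle⟩
        rcases eq_or_lt_of_le hle with h' | h'
        · exact Or.inl h'.symm
        · exact Or.inr ⟨hj, h'⟩
      · rintro (rfl | ⟨hj, hle⟩)
        · exact ⟨h, le_refl _⟩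
        · exact ⟨hj, Nat.le_of_succ_le hle⟩
    rw [heq, Finset.card_insert_of_notMem (by simp)]
  · have heq : J.filter (fun j => n ≤ j) = J.filter (fun j => n + 1 ≤ j) := by
      apply Finset.filter_congr
      intro j hj
      constructor
      · intro hle
        rcases eq_or_lt_of_le hle with h' | h'
        · exact absurd (h' ▸ hj) h
        · exact h'
      · exact fun h' => Nat.le_of_succ_le h'
    simp [heq]

lemma a_eq_pow_of_steps (hp : 0 < p) {γ : ℕ} {V : Finset ℕ} (hne : V.Nonempty)
    {J : Finset ℕ}
    (hfull : ∀ j < γ, j ∈ J → a p (j + 1) V = p * a p j V)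
    (hthin : ∀ j < γ, j ∉ J → a p (j + 1) V = a p j V) :
    ∀ n ≤ γ, a p n V = p ^ (J.filter (· < n)).card := by
  intro n
  induction n with
  | zero => intro _; simp [a_zero hne]
  | succ n ih =>
    intro hn
    have hlt : n < γ := hn
    rw [filter_lt_succ_card]
    by_cases h : n ∈ J
    · rw [hfull n hlt h, ih (le_of_lt hlt), if_pos h, pow_succ, mul_comm]
    · rw [hthin n hlt h, ih (le_of_lt hlt), if_neg h, add_zero]

lemma a_ge_pow (hp : 0 < p) {γ : ℕ} {V : Finset ℕ} (hne : V.Nonempty)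
    {J : Finset ℕ}
    (hfull : ∀ j < γ, j ∈ J → a p (j + 1) V = p * a p j V) :
    ∀ n ≤ γ, p ^ (J.filter (· < n)).card ≤ a p n V := by
  intro n
  induction n with
  | zero => intro _; simp [a_zero hne]
  | succ n ih =>
    intro hn
    have hlt : n < γ := hn
    rw [filter_lt_succ_card]
    by_cases h : n ∈ J
    · rw [hfull n hlt h, if_pos h, pow_succ, mul_comm]
      exact Nat.mul_le_mul_left p (ih (le_of_lt hlt))
    · rw [if_neg h, add_zero]
      exact le_trans (ih (le_of_lt hlt)) (a_mono n.le_succ V)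

lemma a_top_ge (hp : 0 < p) {γ : ℕ} {V : Finset ℕ}
    {J : Finset ℕ} (hJsub : J ⊆ Finset.range γ)
    (hfull : ∀ j < γ, j ∈ J → a p (j + 1) V = p * a p j V) :
    ∀ d n, n + d = γ → a p n V * p ^ (J.filter (fun j => n ≤ j)).card ≤ a p γ V := by
  intro d
  induction d with
  | zero =>
    intro n hn
    obtain rfl : n = γ := by omega
    have : J.filter (fun j => n ≤ j) = ∅ := by
      apply Finset.filter_false_of_mem
      intro j hj
      have := Finset.mem_range.1 (hJsub hj)
      omega
    simp [this]
  | succ d ih =>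
    intro n hn
    have hn1 : (n + 1) + d = γ := by omega
    have hlt : n < γ := by omega
    have ih1 := ih (n + 1) hn1
    rw [filter_ge_card]
    by_cases h : n ∈ J
    · rw [if_pos h]
      calc a p n V * p ^ ((J.filter (fun j => n + 1 ≤ j)).card + 1)
          = (p * a p n V) * p ^ (J.filter (fun j => n + 1 ≤ j)).card := by ring
        _ = a p (n + 1) V * p ^ (J.filter (fun j => n + 1 ≤ j)).card := by
            rw [hfull n hlt h]
        _ ≤ a p γ V := ih1
    · rw [if_neg h, add_zero]
      calc a p n V * p ^ (J.filter (fun j => n + 1 ≤ j)).card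
          ≤ a p (n + 1) V * p ^ (J.filter (fun j => n + 1 ≤ j)).card :=
            Nat.mul_le_mul_right _ (a_mono n.le_succ V)
        _ ≤ a p γ V := ih1

lemma a_eq_pow_converse (hp : 0 < p) {γ : ℕ} {V : Finset ℕ} (hne : V.Nonempty)
    {J : Finset ℕ} (hJsub : J ⊆ Finset.range γ)
    (hfull : ∀ j < γ, j ∈ J → a p (j + 1) V = p * a p j V)
    (htop : a p γ V = p ^ J.card) :
    ∀ n ≤ γ, a p n V = p ^ (J.filter (· < n)).card := by
  intro n hn
  have h1 := a_ge_pow hp hne hfull n hn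
  have h2 := a_top_ge hp hJsub hfull (γ - n) n (by omega)
  have hsplit : (J.filter (· < n)).card + (J.filter (fun j => n ≤ j)).card = J.card := by
    have := Finset.card_filter_add_card_filter_not (s := J) (p := (· < n))
    rw [← this]
    have heq : J.filter (fun j => n ≤ j) = J.filter (fun a => ¬ a < n) :=
      Finset.filter_congr (fun j _ => by simp [Nat.not_lt])
    rw [heq]
  refine le_antisymm ?_ h1
  have hpow : (0:ℕ) < p ^ (J.filter (fun j => n ≤ j)).card := pow_pos hp _
  have : a p n V * p ^ (J.filter (fun j => n ≤ j)).card
      ≤ p ^ (J.filter (· < n)).card * p ^ (J.filter (fun j => n ≤ j)).card := by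
    rw [← pow_add, hsplit, ← htop]
    exact h2
  exact Nat.le_of_mul_le_mul_right this hpow

open Complex in
lemma isPrimitiveRoot_zeta (N : ℕ) (hN : N ≠ 0) :
    IsPrimitiveRoot (Complex.exp (-(2 * Real.pi * Complex.I) / N)) N := by
  have h := (Complex.isPrimitiveRoot_exp N hN).inv
  rw [← Complex.exp_neg] at h
  rw [neg_div]
  exact h

lemma full_level_sum_zero (hp : p.Prime) {n : ℕ} {V : Finset ℕ} (hne : V.Nonempty)
    (hfull : a p (n + 1) V = p * a p n V)
    (hconst : ∀ x ∈ E p (n + 1) V, ∀ y ∈ E p (n + 1) V,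
      nu p (n + 1) V x = nu p (n + 1) V y) :
    ∑ v ∈ V, Complex.exp (-(2 * Real.pi * Complex.I) / (p : ℂ) ^ (n + 1)) ^ (v % p ^ (n + 1))
      = 0 := by
  have hp0 : 0 < p := hp.pos
  set ζ : ℂ := Complex.exp (-(2 * Real.pi * Complex.I) / (p : ℂ) ^ (n + 1)) with hζ
  -- step 1 : group the sum by residues
  have h1 : ∑ v ∈ V, ζ ^ (v % p ^ (n + 1))
      = ∑ x ∈ E p (n + 1) V, (nu p (n + 1) V x : ℂ) * ζ ^ x := by
    have hmaps : ∀ v ∈ V, v % p ^ (n + 1) ∈ E p (n + 1) V :=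
      fun v hv => mem_E.2 ⟨v, hv, rfl⟩
    have h0 := Finset.sum_fiberwise_of_maps_to hmaps (fun v => ζ ^ (v % p ^ (n + 1)))
    rw [← h0]
    refine Finset.sum_congr rfl fun x hx => ?_
    have : ∑ v ∈ V.filter (fun v => v % p ^ (n + 1) = x), ζ ^ (v % p ^ (n + 1))
        = ∑ v ∈ V.filter (fun v => v % p ^ (n + 1) = x), ζ ^ x := by
      refine Finset.sum_congr rfl fun v hv => ?_
      rw [(Finset.mem_filter.1 hv).2]
    rw [this, Finset.sum_const, nu, nsmul_eq_mul]
  -- step 2 : use constancy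
  obtain ⟨x₀, hx₀⟩ := E_nonempty (n := n + 1) hne
  have h2 : ∑ x ∈ E p (n + 1) V, (nu p (n + 1) V x : ℂ) * ζ ^ x
      = (nu p (n + 1) V x₀ : ℂ) * ∑ x ∈ E p (n + 1) V, ζ ^ x := by
    rw [Finset.mul_sum]
    refine Finset.sum_congr rfl fun x hx => ?_
    rw [hconst x hx x₀ hx₀]
  -- step 3 : the inner sum vanishes
  have h3 : ∑ x ∈ E p (n + 1) V, ζ ^ x = 0 := by
    have himg := image_psi_of_full hp0 hfull
    have hsum : ∑ x ∈ E p (n + 1) V, ζ ^ x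
        = ∑ z ∈ E p n V ×ˢ Finset.range p, ζ ^ (z.1 + p ^ n * z.2) := by
      rw [← himg, Finset.sum_image (fun x _ y _ h => psi_inj hp0 n h)]
      refine Finset.sum_congr rfl fun x _ => ?_
      simp only []
      rw [Nat.mod_add_div x (p ^ n)]
    rw [hsum, Finset.sum_product]
    have hzz : ∀ y k : ℕ, ζ ^ (y + p ^ n * k) = ζ ^ y * (ζ ^ p ^ n) ^ k := by
      intro y k
      rw [pow_add, pow_mul]
    have hrw : ∀ y : ℕ, ∑ k ∈ Finset.range p, ζ ^ (y + p ^ n * k)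
        = ζ ^ y * ∑ k ∈ Finset.range p, (ζ ^ p ^ n) ^ k := by
      intro y
      rw [Finset.mul_sum]
      exact Finset.sum_congr rfl fun k _ => hzz y k
    have hω : ζ ^ p ^ n = Complex.exp (-(2 * Real.pi * Complex.I) / p) := by
      rw [hζ, ← Complex.exp_nat_mul]
      congr 1
      have : ((p : ℂ)) ^ (n + 1) = (p : ℂ) ^ n * p := by ring
      rw [this]
      have hpn : ((p : ℂ)) ^ n ≠ 0 := pow_ne_zero _ (Nat.cast_ne_zero.2 hp0.ne')
      have hp' : (p : ℂ) ≠ 0 := Nat.cast_ne_zero.2 hp0.ne'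
      push_cast
      field_simp
    have hgeom : ∑ k ∈ Finset.range p, (ζ ^ p ^ n) ^ k = 0 := by
      rw [hω]
      have hprim : IsPrimitiveRoot (Complex.exp (-(2 * Real.pi * Complex.I) / p)) p := by
        have := isPrimitiveRoot_zeta p hp0.ne'
        simpa using this
      exact hprim.geom_sum_eq_zero hp.one_lt
    calc ∑ y ∈ E p n V, ∑ k ∈ Finset.range p, ζ ^ (y + p ^ n * k)
        = ∑ y ∈ E p n V, ζ ^ y * ∑ k ∈ Finset.range p, (ζ ^ p ^ n) ^ k :=
          Finset.sum_congr rfl fun y _ => hrw y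
      _ = 0 := by rw [hgeom]; simp
  rw [h1, h2, h3, mul_zero]

open Polynomial in
lemma full_of_sum_zero (hp : p.Prime) {n : ℕ} {V : Finset ℕ} (hne : V.Nonempty)
    (hvan : ∑ v ∈ V,
      Complex.exp (-(2 * Real.pi * Complex.I) / (p : ℂ) ^ (n + 1)) ^ (v % p ^ (n + 1)) = 0) :
    a p (n + 1) V = p * a p n V := by
  have hp0 : 0 < p := hp.pos
  have hN0 : 0 < p ^ (n + 1) := pow_pos hp0 _
  set ζ : ℂ := Complex.exp (-(2 * Real.pi * Complex.I) / (p : ℂ) ^ (n + 1)) with hζ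
  have hprim : IsPrimitiveRoot ζ (p ^ (n + 1)) := by
    have := isPrimitiveRoot_zeta (p ^ (n + 1)) hN0.ne'
    rw [hζ]
    convert this using 3
    push_cast
    ring
  set P : Polynomial ℤ := ∑ v ∈ V, Polynomial.X ^ (v % p ^ (n + 1)) with hP
  have hcoeff : ∀ t, P.coeff t = (nu p (n + 1) V t : ℤ) := by
    intro t
    rw [hP, Polynomial.finset_sum_coeff]
    have : ∀ v ∈ V, (Polynomial.X ^ (v % p ^ (n + 1)) : Polynomial ℤ).coeff t
        = if v % p ^ (n + 1) = t then 1 else 0 := by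
      intro v _
      rw [Polynomial.coeff_X_pow]
      simp [eq_comm]
    rw [Finset.sum_congr rfl this, Finset.sum_boole, nu]
  have haeval : Polynomial.aeval ζ P = 0 := by
    rw [hP, map_sum]
    simpa using hvan
  have hdvd : Polynomial.cyclotomic (p ^ (n + 1)) ℤ ∣ P := by
    rw [Polynomial.cyclotomic_eq_minpoly hprim hN0]
    exact minpoly.isIntegrallyClosed_dvd (hprim.isIntegral hN0) haeval
  obtain ⟨Q, hPQ⟩ := hdvd
  have hP0 : P ≠ 0 := by
    intro h
    obtain ⟨v₀, hv₀⟩ := hne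
    have h1 : 0 < nu p (n + 1) V (v₀ % p ^ (n + 1)) :=
      nu_pos_iff.2 (mem_E.2 ⟨v₀, hv₀, rfl⟩)
    have := hcoeff (v₀ % p ^ (n + 1))
    rw [h] at this
    simp only [Polynomial.coeff_zero] at this
    omega
  have hQ0 : Q ≠ 0 := by
    rintro rfl
    rw [mul_zero] at hPQ
    exact hP0 hPQ
  have hPdeg : P.natDegree ≤ p ^ (n + 1) - 1 := by
    rw [hP]
    refine Polynomial.natDegree_sum_le_of_forall_le _ _ fun v _ => ?_
    rw [Polynomial.natDegree_X_pow]
    have := Nat.mod_lt v hN0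
    omega
  have hQdeg : Q.natDegree ≤ p ^ n - 1 := by
    have hmul := Polynomial.natDegree_mul (Polynomial.cyclotomic_ne_zero (p ^ (n + 1)) ℤ) hQ0
    rw [← hPQ] at hmul
    rw [Polynomial.natDegree_cyclotomic] at hmul
    have htot : Nat.totient (p ^ (n + 1)) = p ^ n * (p - 1) :=
      Nat.totient_prime_pow hp n.succ_pos
    have hsplit : p ^ n * p = p ^ n * (p - 1) + p ^ n := by
      rw [← Nat.mul_succ]
      congr 1
      omega
    have hNn : p ^ (n + 1) = p ^ n * p := by ring
    have hA : 0 < p ^ n := pow_pos hp0 n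
    rw [htot] at hmul
    rw [hNn, hsplit] at hPdeg
    omega
  have key : ∀ y k, y < p ^ n → k < p → P.coeff (y + p ^ n * k) = Q.coeff y := by
    intro y k hy hk
    rw [hPQ, Polynomial.cyclotomic_prime_pow_eq_geom_sum hp]
    have hexp : ∀ i : ℕ, ((Polynomial.X : Polynomial ℤ) ^ p ^ n) ^ i * Q
        = Q * Polynomial.X ^ (p ^ n * i) := by
      intro i
      rw [← pow_mul, mul_comm]
    rw [Finset.sum_mul, Polynomial.finset_sum_coeff]
    have hterm : ∀ i : ℕ, (((Polynomial.X : Polynomial ℤ) ^ p ^ n) ^ i * Q).coeff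
        (y + p ^ n * k) = if p ^ n * i ≤ y + p ^ n * k
          then Q.coeff (y + p ^ n * k - p ^ n * i) else 0 := by
      intro i
      rw [hexp i, Polynomial.coeff_mul_X_pow']
    rw [Finset.sum_congr rfl fun i _ => hterm i]
    rw [Finset.sum_eq_single_of_mem k (Finset.mem_range.2 hk)]
    · rw [if_pos (Nat.le_add_left _ _), Nat.add_sub_cancel]
    · intro i _ hik
      rcases lt_or_gt_of_ne hik with hik | hik
      · rw [if_pos]
        · apply Polynomial.coeff_eq_zero_of_natDegree_lt
          have h1 : p ^ n ≤ y + p ^ n * k - p ^ n * i := by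
            have : p ^ n * i + p ^ n ≤ p ^ n * k := by
              calc p ^ n * i + p ^ n = p ^ n * (i + 1) := by ring
              _ ≤ p ^ n * k := Nat.mul_le_mul_left _ hik
            omega
          have hA : 0 < p ^ n := pow_pos hp0 n
          omega
        · calc p ^ n * i ≤ p ^ n * k := Nat.mul_le_mul_left _ (le_of_lt hik)
          _ ≤ y + p ^ n * k := Nat.le_add_left _ _
      · rw [if_neg]
        intro hcon
        have : p ^ n * (k + 1) ≤ p ^ n * i := Nat.mul_le_mul_left _ hik
        have h2 : p ^ n * k + p ^ n ≤ p ^ n * i := by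
          calc p ^ n * k + p ^ n = p ^ n * (k + 1) := by ring
          _ ≤ p ^ n * i := this
        omega
  have hnuinv : ∀ y k k', y < p ^ n → k < p → k' < p →
      nu p (n + 1) V (y + p ^ n * k) = nu p (n + 1) V (y + p ^ n * k') := by
    intro y k k' hy hk hk'
    have h1 := (hcoeff (y + p ^ n * k)).symm.trans (key y k hy hk)
    have h2 := (hcoeff (y + p ^ n * k')).symm.trans (key y k' hy hk')
    have h3 := h1.trans h2.symm
    exact_mod_cast h3
  -- conclude fullness
  have himg : (E p (n + 1) V).image (fun x => (x % p ^ n, x / p ^ n))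
      = E p n V ×ˢ Finset.range p := by
    apply Finset.Subset.antisymm
    · intro z hz
      obtain ⟨x, hx, rfl⟩ := Finset.mem_image.1 hz
      exact psi_maps hp0 hx
    · intro z hz
      obtain ⟨hz1, hz2⟩ := Finset.mem_product.1 hz
      obtain ⟨y, k⟩ := z
      simp only at hz1 hz2
      have hy : y < p ^ n := E_lt hp0 hz1
      have hk : k < p := Finset.mem_range.1 hz2
      obtain ⟨v, hv, hvy⟩ := mem_E.1 hz1
      set x := v % p ^ (n + 1) with hxdef
      have hxE : x ∈ E p (n + 1) V := mem_E.2 ⟨v, hv, rfl⟩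
      have hxy : x % p ^ n = y := by
        rw [hxdef, Nat.mod_mod_of_dvd v (pow_dvd_pow p n.le_succ), hvy]
      have hxd : x / p ^ n < p := by
        rw [Nat.div_lt_iff_lt_mul (pow_pos hp0 n)]
        calc x < p ^ (n + 1) := Nat.mod_lt _ hN0
        _ = p * p ^ n := by ring
        _ = p * p ^ n := rfl
      have hxeq : x = y + p ^ n * (x / p ^ n) := by
        conv_lhs => rw [← Nat.mod_add_div x (p ^ n)]
        rw [hxy]
      have hpos : 0 < nu p (n + 1) V (y + p ^ n * k) := by
        rw [hnuinv y k (x / p ^ n) hy hk hxd, ← hxeq]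
        exact nu_pos_iff.2 hxE
      have hmem : y + p ^ n * k ∈ E p (n + 1) V := nu_pos_iff.1 hpos
      refine Finset.mem_image.2 ⟨y + p ^ n * k, hmem, ?_⟩
      have hmod : (y + p ^ n * k) % p ^ n = y := by
        rw [Nat.add_mul_mod_self_left, Nat.mod_eq_of_lt hy]
      have hdiv : (y + p ^ n * k) / p ^ n = k := by
        rw [Nat.add_mul_div_left _ _ (pow_pos hp0 n), Nat.div_eq_of_lt hy, zero_add]
      rw [hmod, hdiv]
  have := congrArg Finset.card himg
  rw [Finset.card_image_of_injOn ((psi_inj hp0 n).injOn), Finset.card_product,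
    Finset.card_range] at this
  rw [a, a, this, mul_comm]

lemma E_top {γ : ℕ} {V : Finset ℕ} (hV : ∀ v ∈ V, v < p ^ γ) : E p γ V = V := by
  rw [E]
  have : V.image (· % p ^ γ) = V.image id := by
    refine Finset.image_congr fun v hv => ?_
    simp [Nat.mod_eq_of_lt (hV v hv)]
  rw [this, Finset.image_id]

lemma ratio_step (hp : p.Prime) {x y i k : ℕ} (hx : x = p ^ i) (hy : y = p ^ k)
    (h1 : x ≤ y) (h2 : y ≤ p * x) : y = x ∨ y = p * x := by
  subst hx hy
  have hik : i ≤ k := (Nat.pow_le_pow_iff_right hp.one_lt).1 h1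
  have hki : k ≤ i + 1 := by
    rw [← pow_succ'] at h2
    exact (Nat.pow_le_pow_iff_right hp.one_lt).1 h2
  rcases Nat.eq_or_lt_of_le hik with rfl | hlt
  · exact Or.inl rfl
  · have : k = i + 1 := by omega
    subst this
    right
    rw [pow_succ']

lemma sum_exp_conv (hp0 : 0 < p) {γ l m : ℕ} (hm : l + m = γ) (V : Finset ℕ) :
    ∑ v ∈ V, Complex.exp (-(2 * Real.pi * Complex.I) * ((v : ℂ) * (p : ℂ) ^ l / (p : ℂ) ^ γ))
      = ∑ v ∈ V, Complex.exp (-(2 * Real.pi * Complex.I) / (p : ℂ) ^ m) ^ (v % p ^ m) := by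
  refine Finset.sum_congr rfl fun v _ => ?_
  have hpm : ((p : ℂ)) ^ m ≠ 0 := pow_ne_zero _ (Nat.cast_ne_zero.2 hp0.ne')
  have hpl : ((p : ℂ)) ^ l ≠ 0 := pow_ne_zero _ (Nat.cast_ne_zero.2 hp0.ne')
  set q : ℕ := v / p ^ m with hq
  set r : ℕ := v % p ^ m with hr
  have hvq : (v : ℂ) = (p : ℂ) ^ m * (q : ℂ) + (r : ℂ) := by
    have h := Nat.div_add_mod v (p ^ m)
    exact_mod_cast h.symm
  have hγ : ((p : ℂ)) ^ γ = (p : ℂ) ^ m * (p : ℂ) ^ l := by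
    rw [← pow_add]
    congr 1
    omega
  have key1 : Complex.exp (-(q : ℂ) * (2 * Real.pi * Complex.I)) = 1 := by
    have h := Complex.exp_int_mul_two_pi_mul_I (-(q : ℤ))
    have hc : ((-(q : ℤ) : ℤ) : ℂ) = -(q : ℂ) := by push_cast; ring
    rwa [hc] at h
  have harg : -(2 * Real.pi * Complex.I) * ((v : ℂ) * (p : ℂ) ^ l / (p : ℂ) ^ γ)
      = -(q : ℂ) * (2 * Real.pi * Complex.I)
        + (r : ℂ) * (-(2 * Real.pi * Complex.I) / (p : ℂ) ^ m) := by
    rw [hγ, hvq]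
    field_simp
    ring
  rw [harg, Complex.exp_add, key1, one_mul, ← Complex.exp_nat_mul]

lemma a_def (p n : ℕ) (V : Finset ℕ) : a p n V = (V.image (· % p ^ n)).card := rfl

end ZPH

end ZPHaux

/-- for a nonempty `C ⊆ ℤ/p^γℤ`, the image of `C` in `ℤ/p^nℤ` has cardinality a
power of `p` for every `1 ≤ n ≤ γ` iff there is a set `I ⊆ {0,…,γ-1}` with `#C = p^{#I}` such
that `∑_{c∈C} e^{-2πi c p^ℓ / p^γ} = 0` for every `ℓ ∈ I`. -/
theorem zmod_pHomogeneous_iff_vanishing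
    (p γ : ℕ) [Fact p.Prime] (hγ : 1 ≤ γ)
    (C : Finset (ZMod (p ^ γ))) (hCne : C.Nonempty) :
    (∀ n : ℕ, 1 ≤ n → ∀ hn : n ≤ γ, ∃ k : ℕ,
      (C.image (ZMod.castHom (pow_dvd_pow p hn) (ZMod (p ^ n)))).card = p ^ k) ↔
    (∃ I : Finset ℕ, I ⊆ Finset.range γ ∧ C.card = p ^ I.card ∧
      ∀ l ∈ I, ∑ c ∈ C, Complex.exp (-(2 * Real.pi * Complex.I) *
        ((c.val : ℂ) * (p : ℂ) ^ l / (p : ℂ) ^ γ)) = 0) := by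
  have hp : p.Prime := Fact.out
  have hp0 : 0 < p := hp.pos
  haveI : NeZero (p ^ γ) := ⟨(pow_pos hp0 γ).ne'⟩
  set V : Finset ℕ := C.image (fun c => c.val) with hVdef
  have hVlt : ∀ v ∈ V, v < p ^ γ := by
    intro v hv
    obtain ⟨c, _, rfl⟩ := Finset.mem_image.1 hv
    exact ZMod.val_lt c
  have hVne : V.Nonempty := hCne.image _
  have hVcard : V.card = C.card := Finset.card_image_of_injective _ (ZMod.val_injective _)
  have hbridge : ∀ n, ∀ hn : n ≤ γ,
      (C.image (ZMod.castHom (pow_dvd_pow p hn) (ZMod (p ^ n)))).card = ZPH.a p n V := by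
    intro n hn
    haveI : NeZero (p ^ n) := ⟨(pow_pos hp0 n).ne'⟩
    have h1 : (C.image (ZMod.castHom (pow_dvd_pow p hn) (ZMod (p ^ n)))).card
        = (C.image (fun c => (ZMod.castHom (pow_dvd_pow p hn) (ZMod (p ^ n)) c).val)).card := by
      rw [show (C.image (fun c => (ZMod.castHom (pow_dvd_pow p hn) (ZMod (p ^ n)) c).val))
          = (C.image (ZMod.castHom (pow_dvd_pow p hn) (ZMod (p ^ n)))).image ZMod.val from
          (Finset.image_image ..).symm]
      exact (Finset.card_image_of_injective _ (ZMod.val_injective _)).symm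
    have h2 : ∀ c : ZMod (p ^ γ), (ZMod.castHom (pow_dvd_pow p hn) (ZMod (p ^ n)) c).val
        = c.val % p ^ n := by
      intro c
      rw [ZMod.castHom_apply, ← ZMod.natCast_val, ZMod.val_natCast]
    have h3 : C.image (fun c => (ZMod.castHom (pow_dvd_pow p hn) (ZMod (p ^ n)) c).val)
        = C.image (fun c => c.val % p ^ n) := Finset.image_congr (fun c _ => h2 c)
    rw [h1, h3, ZPH.a_def, hVdef, Finset.image_image]
    rfl
  have htopcard : ZPH.a p γ V = C.card := by
    rw [ZPH.a, ZPH.E_top hVlt, hVcard]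
  have hsumconv : ∀ l < γ,
      ∑ c ∈ C, Complex.exp (-(2 * Real.pi * Complex.I) *
        ((c.val : ℂ) * (p : ℂ) ^ l / (p : ℂ) ^ γ))
      = ∑ v ∈ V, Complex.exp (-(2 * Real.pi * Complex.I) / (p : ℂ) ^ (γ - l))
          ^ (v % p ^ (γ - l)) := by
    intro l hl
    rw [← ZPH.sum_exp_conv hp0 (show l + (γ - l) = γ by omega) V, hVdef,
      Finset.sum_image (fun x _ y _ h => ZMod.val_injective _ h)]
  constructor
  · intro h
    have hpow : ∀ n ≤ γ, ∃ k, ZPH.a p n V = p ^ k := by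
      intro n hn
      rcases Nat.eq_zero_or_pos n with rfl | hn1
      · exact ⟨0, by rw [ZPH.a_zero hVne, pow_zero]⟩
      · obtain ⟨k, hk⟩ := h n hn1 hn
        exact ⟨k, by rw [← hbridge n hn, hk]⟩
    have hstep : ∀ n < γ,
        ZPH.a p (n + 1) V = ZPH.a p n V ∨ ZPH.a p (n + 1) V = p * ZPH.a p n V := by
      intro n hn
      obtain ⟨i, hi⟩ := hpow n (le_of_lt hn)
      obtain ⟨k, hk⟩ := hpow (n + 1) hn
      exact ZPH.ratio_step hp hi hk (ZPH.a_mono n.le_succ V) (ZPH.a_succ_le hp0 n V)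
    set J : Finset ℕ :=
      (Finset.range γ).filter (fun j => ZPH.a p (j + 1) V = p * ZPH.a p j V) with hJdef
    have hJmem : ∀ j, j ∈ J ↔ j ∈ Finset.range γ ∧ ZPH.a p (j + 1) V = p * ZPH.a p j V := by
      intro j
      rw [hJdef, Finset.mem_filter]
    have hJsub : J ⊆ Finset.range γ := fun j hj => ((hJmem j).1 hj).1
    have hJfull : ∀ j < γ, j ∈ J → ZPH.a p (j + 1) V = p * ZPH.a p j V :=
      fun j _ hjJ => ((hJmem j).1 hjJ).2
    have hJthin : ∀ j < γ, j ∉ J → ZPH.a p (j + 1) V = ZPH.a p j V := by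
      intro j hj hjJ
      rcases hstep j hj with h' | h'
      · exact h'
      · exact absurd ((hJmem j).2 ⟨Finset.mem_range.2 hj, h'⟩) hjJ
    have hAll := ZPH.a_eq_pow_of_steps hp0 hVne hJfull hJthin
    refine ⟨J.image (fun j => γ - 1 - j), ?_, ?_, ?_⟩
    · intro l hl
      obtain ⟨j, hjJ, rfl⟩ := Finset.mem_image.1 hl
      exact Finset.mem_range.2 (by omega)
    · have hIcard : (J.image (fun j => γ - 1 - j)).card = J.card := by
        apply Finset.card_image_of_injOn
        intro x hx y hy hxy
        have hx' : x < γ := Finset.mem_range.1 (hJsub hx)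
        have hy' : y < γ := Finset.mem_range.1 (hJsub hy)
        have hxy' : γ - 1 - x = γ - 1 - y := hxy
        omega
      have hfil : J.filter (· < γ) = J :=
        Finset.filter_true_of_mem (fun j hj => Finset.mem_range.1 (hJsub hj))
      rw [hIcard, ← htopcard, hAll γ le_rfl, hfil]
    · intro l hlI
      obtain ⟨j, hjJ, rfl⟩ := Finset.mem_image.1 hlI
      have hjγ : j < γ := Finset.mem_range.1 (hJsub hjJ)
      have hlγ : γ - 1 - j < γ := by omega
      have hγl : γ - (γ - 1 - j) = j + 1 := by omega
      rw [hsumconv _ hlγ, hγl]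
      exact ZPH.full_level_sum_zero hp hVne (((hJmem j).1 hjJ).2)
        (fun x hx y hy => ZPH.nu_const hp0 hVlt hstep (γ - (j + 1)) (j + 1) (by omega) x hx y hy)
  · rintro ⟨I, hIsub, hIcard, hIvan⟩
    set J : Finset ℕ := I.image (fun l => γ - 1 - l) with hJdef
    have hJsub : J ⊆ Finset.range γ := by
      intro j hj
      obtain ⟨l, _, rfl⟩ := Finset.mem_image.1 hj
      exact Finset.mem_range.2 (by omega)
    have hJcard : J.card = I.card := by
      apply Finset.card_image_of_injOn
      intro x hx y hy hxy
      have hx' : x < γ := Finset.mem_range.1 (hIsub hx)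
      have hy' : y < γ := Finset.mem_range.1 (hIsub hy)
      have hxy' : γ - 1 - x = γ - 1 - y := hxy
      omega
    have hJfull : ∀ j < γ, j ∈ J → ZPH.a p (j + 1) V = p * ZPH.a p j V := by
      intro j hj hjJ
      obtain ⟨l, hlI, hlj⟩ := Finset.mem_image.1 hjJ
      have hlγ : l < γ := Finset.mem_range.1 (hIsub hlI)
      have hvan := hIvan l hlI
      rw [hsumconv l hlγ] at hvan
      have hj1 : γ - l = j + 1 := by omega
      rw [hj1] at hvan
      exact ZPH.full_of_sum_zero hp hVne hvan
    have htop : ZPH.a p γ V = p ^ J.card := by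
      rw [htopcard, hIcard, hJcard]
    intro n hn1 hn
    refine ⟨(J.filter (· < n)).card, ?_⟩
    rw [hbridge n hn]
    exact ZPH.a_eq_pow_converse hp0 hVne hJsub hJfull htop n hn
end
end
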